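/- arXiv:1406.7608 — 2 statements merged into one kernel-verified Lean document; each statement's English description precedes it below -/
import Mathlib

section
/- For interleaving parameterized token-ring systems with no global inputs and parameterized specifications ∀i. A_{∀i.ass(i)} φ(i), where φ(i) and ass(i) are LTL formulas over the inputs and outputs of process i, the number 2 is a cutoff: for every process template P, P^{R(2)} ⊨ ∀i. A_{∀i.ass(i)} φ(i) if and only if P^{R(n)} ⊨ ∀i. A_{∀i.ass(i)} φ(i) for all n ≥ 2. -/
/-! ## Deeply embedded LTL -/

/-- LTL formulas over atomic propositions of type `α`. -/
inductive LTL (α : Type) : Type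
  | tru : LTL α
  | atom : α → LTL α
  | neg : LTL α → LTL α
  | conj : LTL α → LTL α → LTL α
  | next : LTL α → LTL α
  | untl : LTL α → LTL α → LTL α

namespace LTL

/-- Satisfaction of an LTL formula at position `k` of the infinite word `w`
(a word assigns to each position the set of atomic propositions holding there). -/
def Sat {α : Type} (w : ℕ → α → Prop) : LTL α → ℕ → Prop
  | tru, _ => True
  | atom a, k => w k a
  | neg φ, k => ¬ Sat w φ k
  | conj φ ψ, k => Sat w φ k ∧ Sat w ψ k
  | next φ, k => Sat w φ (k + 1)
  | untl φ ψ, k => ∃ m, k ≤ m ∧ Sat w ψ m ∧ ∀ l, k ≤ l → l < m → Sat w φ l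

/-- `LTL\X` : formulas not using the next-time operator. -/
def NoNext {α : Type} : LTL α → Prop
  | tru => True
  | atom _ => True
  | neg φ => NoNext φ
  | conj φ ψ => NoNext φ ∧ NoNext ψ
  | next _ => False
  | untl φ ψ => NoNext φ ∧ NoNext ψ

/-- Implication, as a derived connective. -/
def imp {α : Type} (φ ψ : LTL α) : LTL α := neg (conj φ (neg ψ))

/-- "Eventually" (◇). -/
def ev {α : Type} (φ : LTL α) : LTL α := untl tru φ

/-- "Always" (□). -/
def alw {α : Type} (φ : LTL α) : LTL α := neg (ev (neg φ))

end LTL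

/-- Boolean (propositional) formulas over atoms of type `α`. -/
inductive PropForm (α : Type) : Type
  | tru : PropForm α
  | atom : α → PropForm α
  | neg : PropForm α → PropForm α
  | conj : PropForm α → PropForm α → PropForm α

/-- A propositional formula over input variables, seen as an LTL formula over
output-or-input atoms (inputs are injected on the right). -/
def PropForm.toLTL {O I : Type} : PropForm I → LTL (O ⊕ I)
  | .tru => .tru
  | .atom a => .atom (Sum.inr a)
  | .neg p => .neg p.toLTL
  | .conj p q => .conj p.toLTL q.toLTL

/-! ## Process templates and token rings -/

/-- The ring successor `v ⊕ 1` of a vertex of the ring `R(n)`. -/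
def ringSucc {n : ℕ} (v : Fin n) : Fin n :=
  ⟨(v.val + 1) % n, Nat.mod_lt _ (Nat.lt_of_le_of_lt (Nat.zero_le _) v.isLt)⟩

/-- The raw data of a process: token states, output labelling, the two initial
states (with/without token) and the transition relation, over output variables `O`
and input variables `I` (an input letter is a set of input variables). -/
structure RawProc (Q O I : Type) : Type where
  tok : Q → Prop
  lam : Q → O → Prop
  iotaT : Q
  iotaN : Q
  delta : Q → (I → Prop) → Q → Prop

namespace RawProc

variable {Q O I : Type}

/-- Internal transition of the token ring: the processes in `M` simultaneously take
transitions, none of them sends (`snd`) or receives (`rcv`) the token, all others keep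
their state. -/
def internalStep (P : RawProc Q O I) (snd : O) (rcv : I) {n : ℕ} (M : Set (Fin n))
    (s : Fin n → Q) (inp : Fin n → I → Prop) (s' : Fin n → Q) : Prop :=
  (∀ v ∈ M, ¬ P.lam (s v) snd ∧ ¬ inp v rcv ∧ P.delta (s v) (inp v) (s' v)) ∧
    ∀ v, v ∉ M → s' v = s v

/-- Token-passing transition with sender `v`: `v ∈ M` is the only process of `M`
outputting `snd`, its ring successor is in `M` and is the only process of `M` reading
`rcv`; all processes of `M` take transitions, all others keep their state. -/
def tokenStepFrom (P : RawProc Q O I) (snd : O) (rcv : I) {n : ℕ} (v : Fin n)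
    (M : Set (Fin n)) (s : Fin n → Q) (inp : Fin n → I → Prop) (s' : Fin n → Q) : Prop :=
  v ∈ M ∧ ringSucc v ∈ M ∧
  P.lam (s v) snd ∧ (∀ u ∈ M, u ≠ v → ¬ P.lam (s u) snd) ∧
  inp (ringSucc v) rcv ∧ (∀ u ∈ M, u ≠ ringSucc v → ¬ inp u rcv) ∧
  (∀ u ∈ M, P.delta (s u) (inp u) (s' u)) ∧
  ∀ u, u ∉ M → s' u = s u

/-- Global transition of the *fully asynchronous* token ring. -/
def asyncStep (P : RawProc Q O I) (snd : O) (rcv : I) {n : ℕ} (M : Set (Fin n))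
    (s : Fin n → Q) (inp : Fin n → I → Prop) (s' : Fin n → Q) : Prop :=
  P.internalStep snd rcv M s inp s' ∨ ∃ v, P.tokenStepFrom snd rcv v M s inp s'

/-- Global transition of the *interleaving* token ring: exactly one process takes an
internal transition, or one process passes the token to its ring successor. -/
def interleavingStep (P : RawProc Q O I) (snd : O) (rcv : I) {n : ℕ} (M : Set (Fin n))
    (s : Fin n → Q) (inp : Fin n → I → Prop) (s' : Fin n → Q) : Prop :=
  (∃ v : Fin n, M = {v} ∧ P.internalStep snd rcv M s inp s') ∨
  (∃ v : Fin n, M = {v, ringSucc v} ∧ P.tokenStepFrom snd rcv v M s inp s')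

/-- Global transition of the *synchronous* token ring: all processes move. -/
def syncStep (P : RawProc Q O I) (snd : O) (rcv : I) {n : ℕ} (M : Set (Fin n))
    (s : Fin n → Q) (inp : Fin n → I → Prop) (s' : Fin n → Q) : Prop :=
  M = Set.univ ∧ P.asyncStep snd rcv M s inp s'

/-- Condition (a): in every sending state the process ignores its inputs —
there is a unique successor, the same for every input letter. -/
def CondA (P : RawProc Q O I) (snd : O) : Prop :=
  ∀ q, P.lam q snd → ∃ q', ∀ (ins : I → Prop) (q'' : Q), P.delta q ins q'' ↔ q'' = q'

/-- The axioms making raw process data a process template (for distinguished output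
`snd` and input `rcv`): the initial states have/lack the token, only token states can
output `snd`, transitions respect the token structure, and the transition relation is
non-terminating. -/
def IsTemplate (P : RawProc Q O I) (snd : O) (rcv : I) : Prop :=
  P.tok P.iotaT ∧ ¬ P.tok P.iotaN ∧
  (∀ q, P.lam q snd → P.tok q) ∧
  (∀ q ins q', P.delta q ins q' →
      (P.tok q → ¬ ins rcv) ∧
      (P.lam q snd → ¬ P.tok q') ∧
      (P.tok q → ¬ P.lam q snd → P.tok q') ∧
      (¬ P.tok q → ins rcv → P.tok q') ∧
      (¬ P.tok q → ¬ ins rcv → ¬ P.tok q')) ∧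
  (∀ q ins, (P.tok q → ¬ ins rcv) → ∃ q', P.delta q ins q')

end RawProc

/-- A process template over output variables `O` (with distinguished `snd`)
and input variables `I` (with distinguished `rcv`): a finite-state labelled
transition system satisfying the token-ring template axioms. -/
structure Template (O I : Type) (snd : O) (rcv : I) : Type 1 where
  Q : Type
  P : RawProc Q O I
  finQ : Finite Q
  ax : P.IsTemplate snd rcv

/-- A process template together with a local fairness condition `A_loc` (over the
input and output variables) and the requirement (†): from every token state, under
any input sequence such that the resulting local input/output sequence satisfies the
fairness condition, the process eventually reaches a state sending the token. -/
structure TemplateF (O I : Type) (snd : O) (rcv : I) extends Template O I snd rcv where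
  fairCond : (ℕ → (I → Prop) × (O → Prop)) → Prop
  tokenLive : ∀ q, P.tok q → ∀ (ins : ℕ → I → Prop) (path : ℕ → Q),
    path 0 = q → (∀ k, P.delta (path k) (ins k) (path (k + 1))) →
    fairCond (fun k => (ins k, P.lam (path k))) → ∃ k, P.lam (path k) snd

/-- The type of global step relations of a ring of `n` processes with state set `Q`
and input variables `I`. -/
abbrev StepRel (Q I : Type) (n : ℕ) : Type :=
  Set (Fin n) → (Fin n → Q) → (Fin n → I → Prop) → (Fin n → Q) → Prop

/-- A run of a token-ring system built from the process `P`, with global inputs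
designated by `isGlob` (global inputs are read identically by all processes),
ring size `n`, and global step relation `R`: an infinite sequence of global states,
input assignments and scheduled sets `M_k`, starting in an initial global state
(each process in one of its initial states, exactly one process having the token). -/
structure SysRun {Q O I : Type} (P : RawProc Q O I) (isGlob : I → Prop) (n : ℕ)
    (R : StepRel Q I n) : Type where
  state : ℕ → Fin n → Q
  inp : ℕ → Fin n → I → Prop
  sched : ℕ → Set (Fin n)
  init_state : ∀ v, state 0 v = P.iotaT ∨ state 0 v = P.iotaN
  init_token : ∃! v, P.tok (state 0 v)
  glob_consistent : ∀ k v w a, isGlob a → (inp k v a ↔ inp k w a)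
  step : ∀ k, R (sched k) (state k) (inp k) (state (k + 1))

namespace SysRun

variable {Q O I : Type} {P : RawProc Q O I} {isGlob : I → Prop} {n : ℕ} {R : StepRel Q I n}

/-- Process `j` makes transitions infinitely often along the run. -/
def MovesInf (x : SysRun P isGlob n R) (j : Fin n) : Prop :=
  {k : ℕ | j ∈ x.sched k}.Infinite

/-- The position (in the run) of the `t`-th transition of process `j`. -/
noncomputable def localIdx (x : SysRun P isGlob n R) (j : Fin n) (t : ℕ) : ℕ :=
  Nat.nth (fun k => j ∈ x.sched k) t

/-- The local run of process `j`, as an infinite word over the atomic propositions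
`O ⊕ I` (outputs and inputs of process `j`): the projection of the run to the
positions where `j` makes a transition. -/
noncomputable def localWord (x : SysRun P isGlob n R) (j : Fin n) : ℕ → O ⊕ I → Prop :=
  fun t => Sum.elim (P.lam (x.state (x.localIdx j t) j)) (x.inp (x.localIdx j t) j)

/-- The local run of process `j` satisfies the LTL formula `φ` over the inputs
and outputs of a single process (vacuously, if `j` moves only finitely often). -/
def LocalSat (x : SysRun P isGlob n R) (φ : LTL (O ⊕ I)) (j : Fin n) : Prop :=
  x.MovesInf j → LTL.Sat (x.localWord j) φ 0

/-- The global output word of the pair of processes `(i, j)`, over the atomic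
propositions `O ⊕ O` (outputs of `i` and of `j`). -/
def outWord2 (x : SysRun P isGlob n R) (i j : Fin n) : ℕ → O ⊕ O → Prop :=
  fun k => Sum.elim (P.lam (x.state k i)) (P.lam (x.state k j))

/-- The run satisfies the 2-indexed formula `ψ(i,j)` (over outputs only),
evaluated on the global output sequence. -/
def Sat2At (x : SysRun P isGlob n R) (ψ : LTL (O ⊕ O)) (i j : Fin n) : Prop :=
  LTL.Sat (x.outWord2 i j) ψ 0

end SysRun

/-- The system satisfies `A_{∀i.ass(i)} ∀j.φ(j)`: every run all of whose local runs
satisfy `ass` has all of its local runs satisfying `φ`. -/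
def SatSpec1 {Q O I : Type} (P : RawProc Q O I) (isGlob : I → Prop) (n : ℕ)
    (R : StepRel Q I n) (ass φ : LTL (O ⊕ I)) : Prop :=
  ∀ x : SysRun P isGlob n R, (∀ i, x.LocalSat ass i) → ∀ j, x.LocalSat φ j

/-- The system satisfies `A_{∀i.ass(i)} ∀i,j.ψ(i,j)`. -/
def SatSpec2 {Q O I : Type} (P : RawProc Q O I) (isGlob : I → Prop) (n : ℕ)
    (R : StepRel Q I n) (ass : LTL (O ⊕ I)) (ψ : LTL (O ⊕ O)) : Prop :=
  ∀ x : SysRun P isGlob n R, (∀ i, x.LocalSat ass i) → ∀ i j, i ≠ j → x.Sat2At ψ i j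

/-- The system satisfies `∀i,j. A ψ(i,j)` (no assumptions). -/
def SatSpec2NoAss {Q O I : Type} (P : RawProc Q O I) (isGlob : I → Prop) (n : ℕ)
    (R : StepRel Q I n) (ψ : LTL (O ⊕ O)) : Prop :=
  ∀ x : SysRun P isGlob n R, ∀ i j, i ≠ j → x.Sat2At ψ i j


/-! ## Auxiliary development for the cutoff proof -/

namespace CutoffTwo

open Classical
attribute [local instance] Classical.propDecidable

/-! ### Arithmetic helpers -/

lemma mod2 {n t : ℕ} (hn : 0 < n) (ht : t < 2*n) : t % n = if t < n then t else t - n := by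
  split_ifs with h
  · exact Nat.mod_eq_of_lt h
  · rw [Nat.mod_eq_sub_mod (le_of_not_gt h), Nat.mod_eq_of_lt (by omega)]

lemma mod_succ_ne {n a : ℕ} (hn : 2 ≤ n) : (a+1) % n ≠ a % n := by
  have h1 : (a+1) % n = (a % n + 1 % n) % n := Nat.add_mod a 1 n
  have h1' : (1 : ℕ) % n = 1 := Nat.mod_eq_of_lt (by omega)
  have h2 : a % n < n := Nat.mod_lt _ (by omega)
  rw [h1, h1', mod2 (by omega) (by omega)]
  split_ifs <;> omega

lemma mod_shift {n a b : ℕ} (hn : 0 < n) (ha : a < n) (hb : b < n) (i : ℕ) :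
    (a + i) % n = b ↔ i % n = (b + n - a) % n := by
  have hi : i % n < n := Nat.mod_lt _ hn
  have h1 : (a + i) % n = (a + i % n) % n := (Nat.add_mod_mod a i n).symm
  rw [h1]
  generalize hr : i % n = r at hi ⊢
  rw [mod2 hn (by omega), mod2 hn (by omega)]
  split_ifs <;> omega

lemma divmod_succ {n N : ℕ} (hn : 0 < n) :
    ((N+1) % n = N % n + 1 ∧ (N+1)/n = N/n) ∨
    (N % n + 1 = n ∧ (N+1) % n = 0 ∧ (N+1)/n = N/n + 1) := by
  have hmod : N % n < n := Nat.mod_lt _ hn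
  rcases Nat.lt_or_ge (N % n + 1) n with h | h
  · left
    have h2 : (1:ℕ) % n = 1 := Nat.mod_eq_of_lt (by omega)
    have hm : (N+1) % n = N % n + 1 := by rw [Nat.add_mod, h2, Nat.mod_eq_of_lt h]
    refine ⟨hm, ?_⟩
    rw [Nat.succ_div, if_neg (fun hd => by
      obtain ⟨q, hq⟩ := hd
      rw [hq, Nat.mul_mod_right] at hm; omega)]
    exact Nat.add_zero _
  · right
    have hm1 : N % n + 1 = n := by omega
    have hm : (N+1) % n = 0 := by
      rw [Nat.add_mod]
      rcases Nat.eq_or_lt_of_le (show 1 ≤ n by omega) with h1 | h1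
      · subst h1; omega
      · rw [Nat.mod_eq_of_lt h1, hm1, Nat.mod_self]
    refine ⟨hm1, hm, ?_⟩
    rw [Nat.succ_div, if_pos (Nat.dvd_of_mod_eq_zero hm)]

lemma count_res {n ρ : ℕ} (hn : 0 < n) (hρ : ρ < n) :
    ∀ N, Nat.count (fun i => i % n = ρ) N = N/n + if ρ < N % n then 1 else 0 := by
  intro N
  induction N with
  | zero => simp
  | succ N ih =>
    rw [Nat.count_succ, ih]
    rcases divmod_succ (N := N) hn with ⟨hm, hd⟩ | ⟨hm1, hm, hd⟩ <;>
      rw [hm, hd] <;> split_ifs <;> omega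

lemma count_congr_interval (p : ℕ → Prop) :
    ∀ b a, a ≤ b → (∀ τ, a ≤ τ → τ < b → ¬ p τ) → Nat.count p b = Nat.count p a := by
  intro b
  induction b with
  | zero => intro a ha _; rw [Nat.le_zero.mp ha]
  | succ b ih =>
    intro a ha h
    rcases Nat.eq_or_lt_of_le ha with h1 | h1
    · rw [h1]
    · rw [Nat.count_succ, if_neg (h b (by omega) (by omega)), Nat.add_zero, ih a (by omega)
        (fun τ h1 h2 => h τ h1 (by omega))]

lemma count_exists_of_lt (p : ℕ → Prop) :
    ∀ b i, i < Nat.count p b → ∃ τ, τ < b ∧ p τ ∧ Nat.count p τ = i := by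
  intro b
  induction b with
  | zero => intro i h; simp at h
  | succ b ih =>
    intro i h
    rw [Nat.count_succ] at h
    rcases Nat.lt_or_ge i (Nat.count p b) with h1 | h1
    · obtain ⟨τ, h2, h3, h4⟩ := ih i h1
      exact ⟨τ, by omega, h3, h4⟩
    · have hp : p b := by by_contra hc; rw [if_neg hc] at h; omega
      rw [if_pos hp] at h
      exact ⟨b, by omega, hp, by omega⟩

lemma ringSucc_val {n : ℕ} (v : Fin n) : (ringSucc v).val = (v.val + 1) % n := rfl

lemma ringSucc_ne {n : ℕ} (hn : 2 ≤ n) (v : Fin n) : ringSucc v ≠ v := by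
  intro h
  have h1 : (v.val + 1) % n = v.val := congrArg Fin.val h
  have h2 : v.val < n := v.isLt
  rw [mod2 (by omega) (by omega)] at h1
  split_ifs at h1 <;> omega

lemma mulAdd_divmod {n a r : ℕ} (hn : 0 < n) (hr : r < n) :
    (a * n + r) % n = r ∧ (a * n + r) / n = a := by
  constructor
  · rw [Nat.mul_comm, Nat.mul_add_mod]; exact Nat.mod_eq_of_lt hr
  · rw [Nat.mul_comm, Nat.mul_add_div hn, Nat.div_eq_of_lt hr, Nat.add_zero]

lemma mul_lower {n q s ρ σ : ℕ} (hσ : σ < n) (h : s * n + σ < q * n + ρ) (hρσ : ρ ≤ σ) :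
    s * n + n ≤ q * n := by
  have h1 : s + 1 ≤ q := by
    by_contra hc
    push_neg at hc
    have h2 : q * n ≤ s * n := Nat.mul_le_mul_right _ (by omega)
    omega
  have h2 : (s+1) * n ≤ q * n := Nat.mul_le_mul_right _ h1
  have h3 : (s+1) * n = s * n + n := by ring
  omega

lemma mul_lower2 {n q s ρ σ : ℕ} (hρ : ρ < n) (h : s * n + σ < q * n + ρ) :
    s * n ≤ q * n := by
  by_contra hc
  push_neg at hc
  have h1 : q < s := lt_of_mul_lt_mul_right hc (Nat.zero_le _)
  have h2 : (q+1) * n ≤ s * n := Nat.mul_le_mul_right _ h1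
  have h3 : (q+1) * n = q * n + n := by ring
  omega

/-! ### The simulation context -/

structure Ctx (Q O I : Type) : Type where
  P : RawProc Q O I
  snd : O
  rcv : I
  n : ℕ
  hn : 2 ≤ n
  hax : P.IsTemplate snd rcv
  x : SysRun P (fun _ => False) n (P.interleavingStep snd rcv)
  j : Fin n
  hj : x.MovesInf j

namespace Ctx

variable {Q O I : Type} (C : Ctx Q O I)

/-- Process `v` moves at time `τ`. -/
def Mv (v : Fin C.n) (τ : ℕ) : Prop := v ∈ C.x.sched τ

/-- Data of an internal move of process `v` at time `τ`. -/
def INTD (τ : ℕ) (v : Fin C.n) : Prop :=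
  C.x.sched τ = {v} ∧ ¬ C.P.lam (C.x.state τ v) C.snd ∧ ¬ C.x.inp τ v C.rcv ∧
    C.P.delta (C.x.state τ v) (C.x.inp τ v) (C.x.state (τ+1) v) ∧
    ∀ u, u ≠ v → C.x.state (τ+1) u = C.x.state τ u

/-- Time `τ` is a token-passing step. -/
def IsPass (τ : ℕ) : Prop :=
  ∃ v, C.x.sched τ = {v, ringSucc v} ∧
    C.P.tokenStepFrom C.snd C.rcv v (C.x.sched τ) (C.x.state τ) (C.x.inp τ) (C.x.state (τ+1))

/-- Number of passes before time `τ`. -/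
noncomputable def NP (τ : ℕ) : ℕ := Nat.count C.IsPass τ

/-- The initial token holder. -/
noncomputable def p : Fin C.n := Classical.choose C.x.init_token

lemma p_spec : C.P.tok (C.x.state 0 C.p) ∧ ∀ v, C.P.tok (C.x.state 0 v) → v = C.p :=
  Classical.choose_spec C.x.init_token

/-- The companion process: the initial token holder, or the ring predecessor of `j`
if `j` itself holds the token initially. -/
noncomputable def c : Fin C.n :=
  if C.p = C.j then ⟨(C.j.val + C.n - 1) % C.n, Nat.mod_lt _ (by have := C.hn; omega)⟩
  else C.p

lemma c_ne_j : C.c ≠ C.j := by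
  unfold c
  split_ifs with h
  · intro he
    have h1 : (C.j.val + C.n - 1) % C.n = C.j.val := congrArg Fin.val he
    have h2 := C.j.isLt
    have h3 := C.hn
    rw [mod2 (by omega) (by omega)] at h1
    split_ifs at h1 <;> omega
  · exact h

/-! ### Residues -/

noncomputable def rhoS (v : Fin C.n) : ℕ := (v.val + C.n - C.p.val) % C.n
noncomputable def rhoR (v : Fin C.n) : ℕ := (v.val + C.n - (C.p.val + 1) % C.n) % C.n

lemma npos : 0 < C.n := by have := C.hn; omega

lemma rhoS_lt (v : Fin C.n) : C.rhoS v < C.n := Nat.mod_lt _ C.npos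
lemma rhoR_lt (v : Fin C.n) : C.rhoR v < C.n := Nat.mod_lt _ C.npos

lemma rhoS_spec (v : Fin C.n) (i : ℕ) :
    (C.p.val + i) % C.n = v.val ↔ i % C.n = C.rhoS v :=
  mod_shift C.npos C.p.isLt v.isLt i

lemma rhoR_spec (v : Fin C.n) (i : ℕ) :
    (C.p.val + i + 1) % C.n = v.val ↔ i % C.n = C.rhoR v := by
  have h1 : ((C.p.val + 1) % C.n + i) % C.n = (C.p.val + 1 + i) % C.n := Nat.mod_add_mod _ _ _
  have h2 : C.p.val + 1 + i = C.p.val + i + 1 := by omega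
  rw [← h2, ← h1]
  exact mod_shift C.npos (Nat.mod_lt _ C.npos) v.isLt i

lemma resFacts :
    (C.p = C.j ∧ C.rhoS C.j = 0 ∧ C.rhoR C.j = C.n - 1 ∧
      C.rhoS C.c = C.n - 1 ∧ C.rhoR C.c = C.n - 2) ∨
    (C.p ≠ C.j ∧ C.rhoS C.c = 0 ∧ C.rhoR C.c = C.n - 1 ∧
      1 ≤ C.rhoS C.j ∧ C.rhoS C.j ≤ C.n - 1 ∧ C.rhoR C.j = C.rhoS C.j - 1) := by
  have hn := C.hn
  have hpl := C.p.isLt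
  have hjl := C.j.isLt
  have e1 : (C.p.val + 1) % C.n = if C.p.val + 1 < C.n then C.p.val + 1 else 0 := by
    rw [mod2 (by omega) (by omega)]; split_ifs <;> omega
  by_cases hpj : C.p = C.j
  · left
    have hpv : C.p.val = C.j.val := congrArg Fin.val hpj
    have hc : C.c.val = (C.j.val + C.n - 1) % C.n := by
      unfold c; split_ifs; rfl
    have hc' : C.c.val = if C.j.val = 0 then C.n - 1 else C.j.val - 1 := by
      rw [hc, mod2 (by omega) (by omega)]; split_ifs <;> omega
    refine ⟨hpj, ?_, ?_, ?_, ?_⟩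
    · unfold rhoS; rw [hpv]
      have : C.j.val + C.n - C.j.val = C.n := by omega
      rw [this, Nat.mod_self]
    · unfold rhoR; rw [e1, hpv]
      split_ifs with h1
      · rw [mod2 (by omega) (by omega)]; split_ifs <;> omega
      · rw [mod2 (by omega) (by omega)]; split_ifs <;> omega
    · unfold rhoS; rw [hc', hpv]
      split_ifs with h1 <;> (rw [mod2 (by omega) (by omega)]; split_ifs <;> omega)
    · unfold rhoR; rw [e1, hc', hpv]
      split_ifs with h1 h2 h2 <;> (rw [mod2 (by omega) (by omega)]; split_ifs <;> omega)
  · right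
    have hpv : C.p.val ≠ C.j.val := fun h => hpj (Fin.ext h)
    have hc : C.c = C.p := by
      unfold c; split_ifs; rfl
    refine ⟨hpj, ?_, ?_, ?_, ?_, ?_⟩
    · unfold rhoS; rw [hc]
      have : C.p.val + C.n - C.p.val = C.n := by omega
      rw [this, Nat.mod_self]
    · unfold rhoR; rw [hc, e1]
      split_ifs with h1 <;> (rw [mod2 (by omega) (by omega)]; split_ifs <;> omega)
    · unfold rhoS
      rcases Nat.eq_zero_or_pos ((C.j.val + C.n - C.p.val) % C.n) with h | h
      · exfalso
        rw [mod2 (by omega) (by omega)] at h; split_ifs at h <;> omega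
      · exact h
    · have := C.rhoS_lt C.j; omega
    · unfold rhoR rhoS; rw [e1]
      split_ifs with h1 <;>
        (rw [mod2 (by omega) (by omega), mod2 (by omega) (by omega)]; split_ifs <;> omega)

/-! ### Run structure -/

lemma step_cases (τ : ℕ) : (∃ v, C.INTD τ v) ∨ C.IsPass τ := by
  rcases C.x.step τ with ⟨v, hM, hint⟩ | ⟨v, hM, htk⟩
  · left
    refine ⟨v, hM, ?_⟩
    obtain ⟨h1, h2⟩ := hint
    obtain ⟨ha, hb, hc⟩ := h1 v (by rw [hM]; rfl)
    exact ⟨ha, hb, hc, fun u hu => h2 u (by rw [hM]; simpa using hu)⟩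
  · right; exact ⟨v, hM, htk⟩

lemma intd_not_pass {τ : ℕ} {v : Fin C.n} (h : C.INTD τ v) : ¬ C.IsPass τ := by
  rintro ⟨w, hM, -⟩
  rw [h.1] at hM
  have h1 : w ∈ ({v} : Set (Fin C.n)) := by rw [hM]; exact Set.mem_insert _ _
  have h2 : ringSucc w ∈ ({v} : Set (Fin C.n)) := by
    rw [hM]; exact Set.mem_insert_of_mem _ rfl
  simp only [Set.mem_singleton_iff] at h1 h2
  exact ringSucc_ne C.hn w (h2.trans h1.symm)

lemma state_const {v : Fin C.n} {τ : ℕ} (h : ¬ C.Mv v τ) :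
    C.x.state (τ+1) v = C.x.state τ v := by
  rcases C.x.step τ with ⟨w, hM, hint⟩ | ⟨w, hM, htk⟩
  · exact hint.2 v h
  · exact htk.2.2.2.2.2.2.2 v h

lemma frozen (v : Fin C.n) : ∀ b a, a ≤ b → (∀ τ, a ≤ τ → τ < b → ¬ C.Mv v τ) →
    C.x.state b v = C.x.state a v := by
  intro b
  induction b with
  | zero => intro a ha _; rw [Nat.le_zero.mp ha]
  | succ b ih =>
    intro a ha h
    rcases Nat.eq_or_lt_of_le ha with h1 | h1
    · rw [h1]
    · rw [C.state_const (h b (by omega) (by omega)),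
        ih a (by omega) (fun τ ha hb => h τ ha (by omega))]

lemma tokinv : ∀ τ (v : Fin C.n), C.P.tok (C.x.state τ v) ↔ v.val = (C.p.val + C.NP τ) % C.n := by
  have hn := C.hn
  intro τ
  induction τ with
  | zero =>
    intro v
    have h0 : C.NP 0 = 0 := Nat.count_zero _
    rw [h0, Nat.add_zero, Nat.mod_eq_of_lt C.p.isLt]
    constructor
    · intro h; exact congrArg Fin.val (C.p_spec.2 v h)
    · intro h; have hv : v = C.p := Fin.ext h; rw [hv]; exact C.p_spec.1
  | succ τ ih =>
    rcases C.step_cases τ with ⟨w, hw⟩ | hp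
    · have hnp : C.NP (τ+1) = C.NP τ := by
        unfold NP; rw [Nat.count_succ, if_neg (C.intd_not_pass hw), Nat.add_zero]
      intro v
      rw [hnp]
      by_cases hvw : v = w
      · subst hvw
        have hax4 := C.hax.2.2.2.1 _ _ _ hw.2.2.2.1
        constructor
        · intro ht
          by_contra hc
          exact (hax4.2.2.2.2 (fun h => hc ((ih v).mp h)) hw.2.2.1) ht
        · intro hv
          exact hax4.2.2.1 ((ih v).mpr hv) hw.2.1
      · rw [hw.2.2.2.2 v hvw]; exact ih v
    · obtain ⟨w, hM, htk⟩ := hp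
      have hp' : C.IsPass τ := ⟨w, hM, htk⟩
      have hnp : C.NP (τ+1) = C.NP τ + 1 := by
        unfold NP; rw [Nat.count_succ, if_pos hp']
      have hwv : w.val = (C.p.val + C.NP τ) % C.n := (ih w).mp (C.hax.2.2.1 _ htk.2.2.1)
      have hrs : (ringSucc w).val = (C.p.val + C.NP τ + 1) % C.n := by
        rw [ringSucc_val, hwv, Nat.mod_add_mod]
      have hne : (C.p.val + C.NP τ + 1) % C.n ≠ (C.p.val + C.NP τ) % C.n := mod_succ_ne hn
      have hmem : ∀ u : Fin C.n, u ∈ C.x.sched τ ↔ u = w ∨ u = ringSucc w := by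
        intro u; rw [hM]; simp
      intro v
      rw [hnp]
      by_cases hv1 : v = w
      · subst hv1
        constructor
        · intro ht
          exact absurd ht
            ((C.hax.2.2.2.1 _ _ _ (htk.2.2.2.2.2.2.1 v ((hmem v).mpr (Or.inl rfl)))).2.1
              htk.2.2.1)
        · intro hv; exact absurd (hv.symm.trans hwv) hne
      · by_cases hv2 : v = ringSucc w
        · subst hv2
          constructor
          · intro _; exact hrs
          · intro _
            have hnt : ¬ C.P.tok (C.x.state τ (ringSucc w)) := fun h =>
              hne (hrs.symm.trans ((ih _).mp h))
            exact (C.hax.2.2.2.1 _ _ _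
              (htk.2.2.2.2.2.2.1 (ringSucc w) ((hmem _).mpr (Or.inr rfl)))).2.2.2.1 hnt
              htk.2.2.2.2.1
        · have hnm : v ∉ C.x.sched τ := fun h => by
            rcases (hmem v).mp h with h | h
            · exact hv1 h
            · exact hv2 h
          rw [htk.2.2.2.2.2.2.2 v hnm, ih]
          constructor
          · intro h; exact absurd (Fin.ext (h.trans hwv.symm) : v = w) hv1
          · intro h; exact absurd (Fin.ext (h.trans hrs.symm) : v = ringSucc w) hv2

/-- Sender data of `v` at `τ`. -/
def SD (τ : ℕ) (v : Fin C.n) : Prop :=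
  C.P.lam (C.x.state τ v) C.snd ∧ ¬ C.x.inp τ v C.rcv ∧
    C.P.delta (C.x.state τ v) (C.x.inp τ v) (C.x.state (τ+1) v)

/-- Receiver data of `v` at `τ`. -/
def RD (τ : ℕ) (v : Fin C.n) : Prop :=
  ¬ C.P.lam (C.x.state τ v) C.snd ∧ C.x.inp τ v C.rcv ∧
    C.P.delta (C.x.state τ v) (C.x.inp τ v) (C.x.state (τ+1) v)

lemma pass_data {τ : ℕ} (h : C.IsPass τ) :
    ∃ w, C.x.sched τ = {w, ringSucc w} ∧ w.val = (C.p.val + C.NP τ) % C.n ∧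
      C.SD τ w ∧ C.RD τ (ringSucc w) := by
  obtain ⟨w, hM, htk⟩ := h
  have hmem : ∀ u : Fin C.n, u ∈ C.x.sched τ ↔ u = w ∨ u = ringSucc w := by
    intro u; rw [hM]; simp
  have hwrs : ringSucc w ≠ w := ringSucc_ne C.hn w
  refine ⟨w, hM, (C.tokinv τ w).mp (C.hax.2.2.1 _ htk.2.2.1),
    ⟨htk.2.2.1, ?_, ?_⟩, ?_, ?_, ?_⟩
  · exact htk.2.2.2.2.2.1 w ((hmem w).mpr (Or.inl rfl)) (fun he => hwrs he.symm)
  · exact htk.2.2.2.2.2.2.1 w ((hmem w).mpr (Or.inl rfl))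
  · exact htk.2.2.2.1 (ringSucc w) ((hmem _).mpr (Or.inr rfl)) hwrs
  · exact htk.2.2.2.2.1
  · exact htk.2.2.2.2.2.2.1 (ringSucc w) ((hmem _).mpr (Or.inr rfl))

lemma move_cases {v : Fin C.n} {τ : ℕ} (h : C.Mv v τ) :
    C.INTD τ v ∨
    (C.IsPass τ ∧ C.NP τ % C.n = C.rhoS v ∧ C.SD τ v) ∨
    (C.IsPass τ ∧ C.NP τ % C.n = C.rhoR v ∧ C.RD τ v) := by
  rcases C.step_cases τ with ⟨w, hw⟩ | hp
  · left
    have hvw : v = w := by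
      have h' := h; unfold Mv at h'; rw [hw.1] at h'; simpa using h'
    subst hvw; exact hw
  · obtain ⟨w, hM, hwval, hsd, hrd⟩ := C.pass_data hp
    have hv : v = w ∨ v = ringSucc w := by
      have h' := h; unfold Mv at h'; rw [hM] at h'; simpa using h'
    rcases hv with rfl | rfl
    · exact Or.inr (Or.inl ⟨hp, (C.rhoS_spec v (C.NP τ)).mp hwval.symm, hsd⟩)
    · refine Or.inr (Or.inr ⟨hp, (C.rhoR_spec _ (C.NP τ)).mp ?_, hrd⟩)
      rw [ringSucc_val, hwval, Nat.mod_add_mod]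

lemma res_sender {τ : ℕ} (hp : C.IsPass τ) {v : Fin C.n}
    (hres : C.NP τ % C.n = C.rhoS v) :
    C.Mv v τ ∧ C.SD τ v ∧ C.x.sched τ ≠ {v} := by
  obtain ⟨w, hM, hwval, hsd, hrd⟩ := C.pass_data hp
  have hwv : w = v := Fin.ext (hwval.trans ((C.rhoS_spec v (C.NP τ)).mpr hres))
  subst hwv
  refine ⟨?_, hsd, ?_⟩
  · unfold Mv; rw [hM]; exact Set.mem_insert _ _
  · intro hc
    rw [hc] at hM
    have : ringSucc w ∈ ({w} : Set (Fin C.n)) := by rw [hM]; exact Set.mem_insert_of_mem _ rfl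
    exact ringSucc_ne C.hn w (by simpa using this)

lemma res_receiver {τ : ℕ} (hp : C.IsPass τ) {v : Fin C.n}
    (hres : C.NP τ % C.n = C.rhoR v) :
    C.Mv v τ ∧ C.RD τ v ∧ C.x.sched τ ≠ {v} := by
  obtain ⟨w, hM, hwval, hsd, hrd⟩ := C.pass_data hp
  have hwv : ringSucc w = v := by
    refine Fin.ext ?_
    rw [ringSucc_val, hwval, Nat.mod_add_mod]
    exact (C.rhoR_spec v (C.NP τ)).mpr hres
  subst hwv
  refine ⟨?_, hrd, ?_⟩
  · unfold Mv; rw [hM]; exact Set.mem_insert_of_mem _ rfl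
  · intro hc
    rw [hc] at hM
    have : w ∈ ({ringSucc w} : Set (Fin C.n)) := by rw [hM]; exact Set.mem_insert _ _
    have h2 : w = ringSucc w := by simpa using this
    exact ringSucc_ne C.hn w h2.symm

/-! ### Residue-indexed counters -/

noncomputable def cntS (v : Fin C.n) (τ : ℕ) : ℕ :=
  Nat.count (fun τ' => C.IsPass τ' ∧ C.NP τ' % C.n = C.rhoS v) τ

noncomputable def cntR (v : Fin C.n) (τ : ℕ) : ℕ :=
  Nat.count (fun τ' => C.IsPass τ' ∧ C.NP τ' % C.n = C.rhoR v) τ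

lemma cnt_transfer (ρ : ℕ) : ∀ τ, Nat.count (fun τ' => C.IsPass τ' ∧ C.NP τ' % C.n = ρ) τ
    = Nat.count (fun i => i % C.n = ρ) (C.NP τ) := by
  intro τ
  induction τ with
  | zero => rfl
  | succ τ ih =>
    by_cases hp : C.IsPass τ
    · have hnp : C.NP (τ+1) = C.NP τ + 1 := by unfold NP; rw [Nat.count_succ, if_pos hp]
      rw [Nat.count_succ, hnp, Nat.count_succ, ih]
      by_cases hres : C.NP τ % C.n = ρ
      · rw [if_pos ⟨hp, hres⟩, if_pos hres]
      · rw [if_neg (fun hc => hres hc.2), if_neg hres]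
    · have hnp : C.NP (τ+1) = C.NP τ := by
        unfold NP; rw [Nat.count_succ, if_neg hp, Nat.add_zero]
      rw [Nat.count_succ, hnp, if_neg (fun hc => hp hc.1), Nat.add_zero, ih]

lemma rhoS_ne_rhoR (v : Fin C.n) : C.rhoS v ≠ C.rhoR v := by
  intro he
  have h1 := (C.rhoS_spec v (C.rhoS v)).mpr (Nat.mod_eq_of_lt (C.rhoS_lt v))
  have h2 := (C.rhoR_spec v (C.rhoS v)).mpr (by rw [Nat.mod_eq_of_lt (C.rhoS_lt v), he])
  exact mod_succ_ne C.hn (h2.trans h1.symm)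

/-! ### Next-move function -/

noncomputable def nxt (v : Fin C.n) (a : ℕ) : ℕ := sInf {τ | a ≤ τ ∧ C.Mv v τ}

lemma nxt_spec {v : Fin C.n} {a : ℕ} (h : ∃ τ, a ≤ τ ∧ C.Mv v τ) :
    a ≤ C.nxt v a ∧ C.Mv v (C.nxt v a) ∧ ∀ τ, a ≤ τ → τ < C.nxt v a → ¬ C.Mv v τ := by
  have h1 := Nat.sInf_mem h
  exact ⟨h1.1, h1.2, fun τ h2 h3 hm => Nat.notMem_of_lt_sInf h3 ⟨h2, hm⟩⟩

lemma jmoves_nonempty (a : ℕ) : ∃ τ, a ≤ τ ∧ C.Mv C.j τ := by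
  obtain ⟨τ, hτ, h2⟩ := C.hj.exists_gt a
  exact ⟨τ, by omega, hτ⟩

lemma pass_not_single {τ : ℕ} (hp : C.IsPass τ) (v : Fin C.n) : C.x.sched τ ≠ {v} := by
  intro hc
  obtain ⟨w, hM, -⟩ := hp
  rw [hc] at hM
  have hw : w ∈ ({v} : Set (Fin C.n)) := by rw [hM]; exact Set.mem_insert _ _
  have hrs : ringSucc w ∈ ({v} : Set (Fin C.n)) := by
    rw [hM]; exact Set.mem_insert_of_mem _ rfl
  simp only [Set.mem_singleton_iff] at hw hrs
  exact ringSucc_ne C.hn w (hrs.trans hw.symm)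

lemma np_succ {τ : ℕ} (hp : C.IsPass τ) : C.NP (τ+1) = C.NP τ + 1 := by
  unfold NP; rw [Nat.count_succ, if_pos hp]

lemma cnt_gap {v : Fin C.n} {a b : ℕ} (hab : a ≤ b)
    (h : ∀ τ, a ≤ τ → τ < b → ¬ C.Mv v τ) :
    C.cntS v b = C.cntS v a ∧ C.cntR v b = C.cntR v a := by
  constructor
  · unfold cntS
    have h' := count_congr_interval (fun τ' => C.IsPass τ' ∧ C.NP τ' % C.n = C.rhoS v) b a hab
      (fun τ h1 h2 hc => h τ h1 h2 (C.res_sender hc.1 hc.2).1)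
    convert h' using 2
  · unfold cntR
    have h' := count_congr_interval (fun τ' => C.IsPass τ' ∧ C.NP τ' % C.n = C.rhoR v) b a hab
      (fun τ h1 h2 hc => h τ h1 h2 (C.res_receiver hc.1 hc.2).1)
    convert h' using 2

lemma cntS_eval (v : Fin C.n) (τ : ℕ) :
    C.cntS v τ = C.NP τ / C.n + if C.rhoS v < C.NP τ % C.n then 1 else 0 := by
  unfold cntS; rw [C.cnt_transfer, count_res C.npos (C.rhoS_lt v)]

lemma cntR_eval (v : Fin C.n) (τ : ℕ) :
    C.cntR v τ = C.NP τ / C.n + if C.rhoR v < C.NP τ % C.n then 1 else 0 := by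
  unfold cntR; rw [C.cnt_transfer, count_res C.npos (C.rhoR_lt v)]

lemma np_decomp_S {v : Fin C.n} {a τ : ℕ} (ha : a ≤ τ)
    (hgap : ∀ τ', a ≤ τ' → τ' < τ → ¬ C.Mv v τ')
    (hp : C.IsPass τ) (hres : C.NP τ % C.n = C.rhoS v) :
    C.NP τ = C.cntS v a * C.n + C.rhoS v ∧
    C.cntR v a = C.cntS v a + (if C.rhoR v < C.rhoS v then 1 else 0) := by
  obtain ⟨hg1, hg2⟩ := C.cnt_gap ha hgap
  have h3 := C.cntS_eval v τ
  have h4 := C.cntR_eval v τ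
  rw [hres, if_neg (lt_irrefl _), Nat.add_zero] at h3
  rw [hres] at h4
  have h6 : C.cntS v a = C.NP τ / C.n := hg1.symm.trans h3
  have h5 := Nat.div_add_mod (C.NP τ) C.n
  constructor
  · rw [h6, Nat.mul_comm (C.NP τ / C.n) C.n, ← hres]
    exact h5.symm
  · rw [← hg2, h4, h6]

lemma np_decomp_R {v : Fin C.n} {a τ : ℕ} (ha : a ≤ τ)
    (hgap : ∀ τ', a ≤ τ' → τ' < τ → ¬ C.Mv v τ')
    (hp : C.IsPass τ) (hres : C.NP τ % C.n = C.rhoR v) :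
    C.NP τ = C.cntR v a * C.n + C.rhoR v ∧
    C.cntS v a = C.cntR v a + (if C.rhoS v < C.rhoR v then 1 else 0) := by
  obtain ⟨hg1, hg2⟩ := C.cnt_gap ha hgap
  have h3 := C.cntR_eval v τ
  have h4 := C.cntS_eval v τ
  rw [hres, if_neg (lt_irrefl _), Nat.add_zero] at h3
  rw [hres] at h4
  have h6 : C.cntR v a = C.NP τ / C.n := hg2.symm.trans h3
  have h5 := Nat.div_add_mod (C.NP τ) C.n
  constructor
  · rw [h6, Nat.mul_comm (C.NP τ / C.n) C.n, ← hres]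
    exact h5.symm
  · rw [← hg1, h4, h6]

lemma cnt_ge_R {τ2 u i : ℕ} (hp2 : C.IsPass τ2) (hnp2 : C.NP τ2 = i)
    (hres2 : i % C.n = C.rhoR C.c) (hcnt : C.cntR C.c u = i / C.n) (hlt : τ2 < u) : False := by
  have h1 : C.cntR C.c (τ2+1) = C.cntR C.c τ2 + 1 := by
    unfold cntR; rw [Nat.count_succ, if_pos ⟨hp2, by rw [hnp2]; exact hres2⟩]
  have h2 : C.cntR C.c τ2 = i / C.n := by
    rw [C.cntR_eval, hnp2, hres2, if_neg (lt_irrefl _), Nat.add_zero]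
  have h3 : C.cntR C.c (τ2+1) ≤ C.cntR C.c u := Nat.count_monotone _ (by omega)
  omega

lemma cnt_ge_S {τ2 u i : ℕ} (hp2 : C.IsPass τ2) (hnp2 : C.NP τ2 = i)
    (hres2 : i % C.n = C.rhoS C.c) (hcnt : C.cntS C.c u = i / C.n) (hlt : τ2 < u) : False := by
  have h1 : C.cntS C.c (τ2+1) = C.cntS C.c τ2 + 1 := by
    unfold cntS; rw [Nat.count_succ, if_pos ⟨hp2, by rw [hnp2]; exact hres2⟩]
  have h2 : C.cntS C.c τ2 = i / C.n := by
    rw [C.cntS_eval, hnp2, hres2, if_neg (lt_irrefl _), Nat.add_zero]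
  have h3 : C.cntS C.c (τ2+1) ≤ C.cntS C.c u := Nat.count_monotone _ (by omega)
  omega

/-! ### The simulation machine -/

structure MSt where
  s : ℕ
  u : ℕ
  al : Bool

inductive Dec where
  | d0 (τ : ℕ)
  | d1 (τ : ℕ)
  | p10 (τ0 τ1 : ℕ)
  | p01 (τ0 τ1 : ℕ)
  | dth (τ : ℕ)

noncomputable def deadSt (υ : ℕ) : Q :=
  if h : C.P.tok (C.x.state υ C.c) then C.x.state υ C.c
  else Classical.choose (C.hax.2.2.2.2 (C.x.state υ C.c) (fun a => a = C.rcv)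
    (fun ht => absurd ht h))

lemma deadSt_spec {υ : ℕ} (h : ¬ C.P.tok (C.x.state υ C.c)) :
    C.P.delta (C.x.state υ C.c) (fun a => a = C.rcv) (C.deadSt υ) := by
  unfold deadSt
  rw [dif_neg h]
  exact Classical.choose_spec _

noncomputable def decide (st : MSt) : Dec × MSt :=
  if C.x.sched (C.nxt C.j st.s) = {C.j} then
    (Dec.d0 (C.nxt C.j st.s), ⟨C.nxt C.j st.s + 1, st.u, st.al⟩)
  else if st.al = true then
    (if C.P.lam (C.x.state (C.nxt C.j st.s) C.j) C.snd then
      (if ∃ τ, st.u ≤ τ ∧ C.Mv C.c τ ∧ C.x.sched τ ≠ {C.c} then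
        (if C.x.sched (C.nxt C.c st.u) = {C.c} then
          (Dec.d1 (C.nxt C.c st.u), ⟨st.s, C.nxt C.c st.u + 1, true⟩)
         else (Dec.p01 (C.nxt C.j st.s) (C.nxt C.c st.u), ⟨C.nxt C.j st.s + 1, C.nxt C.c st.u + 1, true⟩))
      else (Dec.dth (C.nxt C.j st.s), ⟨C.nxt C.j st.s + 1, st.u, false⟩))
    else
      (if C.x.sched (C.nxt C.c st.u) = {C.c} then
        (Dec.d1 (C.nxt C.c st.u), ⟨st.s, C.nxt C.c st.u + 1, true⟩)
       else (Dec.p10 (C.nxt C.j st.s) (C.nxt C.c st.u), ⟨C.nxt C.j st.s + 1, C.nxt C.c st.u + 1, true⟩)))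
  else (Dec.d0 (C.nxt C.j st.s), ⟨C.nxt C.j st.s + 1, st.u, st.al⟩)

noncomputable def mach : ℕ → MSt := fun k =>
  Nat.rec ⟨0, 0, true⟩ (fun _ st => (C.decide st).2) k

noncomputable def ydec (k : ℕ) : Dec := (C.decide (C.mach k)).1

def t0of : Dec → ℕ
  | .d0 τ => τ
  | .p10 τ0 _ => τ0
  | .p01 τ0 _ => τ0
  | .dth τ => τ
  | .d1 _ => 0

def t1of : Dec → ℕ
  | .d1 τ => τ
  | .p10 _ τ1 => τ1
  | .p01 _ τ1 => τ1
  | _ => 0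

def schedOf : Dec → Set (Fin 2)
  | .d0 _ => {0}
  | .d1 _ => {1}
  | .p10 _ _ => {1, ringSucc 1}
  | .p01 _ _ => {0, ringSucc 0}
  | .dth _ => {0, ringSucc 0}

noncomputable def ysched (k : ℕ) : Set (Fin 2) := schedOf (C.ydec k)

noncomputable def ystate (k : ℕ) : Fin 2 → Q := fun i =>
  if i = 0 then C.x.state (C.mach k).s C.j
  else if (C.mach k).al then C.x.state (C.mach k).u C.c else C.deadSt (C.mach k).u

noncomputable def yinp (k : ℕ) : Fin 2 → I → Prop := fun i =>
  if i = 0 then C.x.inp (t0of (C.ydec k)) C.j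
  else match C.ydec k with
    | .dth _ => fun a => a = C.rcv
    | d => C.x.inp (t1of d) C.c

/-- `j` (resp. `c`) makes its next move at `τ`, starting from `a`. -/
def JMove (a τ : ℕ) : Prop := a ≤ τ ∧ C.Mv C.j τ ∧ ∀ τ', a ≤ τ' → τ' < τ → ¬ C.Mv C.j τ'
def CMove (a τ : ℕ) : Prop := a ≤ τ ∧ C.Mv C.c τ ∧ ∀ τ', a ≤ τ' → τ' < τ → ¬ C.Mv C.c τ'

/-- The simulation invariant. -/
def Inv (k : ℕ) : Prop :=
  (Nat.count (C.Mv C.j) (C.mach k).s = Nat.count (fun k' => (0:Fin 2) ∈ C.ysched k') k) ∧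
  ((C.mach k).al = true →
    Nat.count (C.Mv C.c) (C.mach k).u = Nat.count (fun k' => (1:Fin 2) ∈ C.ysched k') k) ∧
  ((C.mach k).al = true → C.cntR C.j (C.mach k).s = C.cntS C.c (C.mach k).u ∧
      C.cntS C.j (C.mach k).s = C.cntR C.c (C.mach k).u) ∧
  ((C.mach k).al = false → ∀ τ, (C.mach k).s ≤ τ → C.Mv C.j τ → C.x.sched τ = {C.j})

/-- Description of a single machine step. -/
def View (k : ℕ) : Prop :=
  (∃ τ0, C.ydec k = .d0 τ0 ∧ C.mach (k+1) = ⟨τ0+1, (C.mach k).u, (C.mach k).al⟩ ∧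
     C.JMove (C.mach k).s τ0 ∧ C.INTD τ0 C.j) ∨
  (∃ τ1, C.ydec k = .d1 τ1 ∧ C.mach (k+1) = ⟨(C.mach k).s, τ1+1, true⟩ ∧
     (C.mach k).al = true ∧ C.CMove (C.mach k).u τ1 ∧ C.INTD τ1 C.c ∧
     (∃ W, (C.mach k).u ≤ W ∧ C.Mv C.c W ∧ C.x.sched W ≠ {C.c})) ∨
  (∃ τ0 τ1, C.ydec k = .p10 τ0 τ1 ∧ C.mach (k+1) = ⟨τ0+1, τ1+1, true⟩ ∧
     (C.mach k).al = true ∧ C.JMove (C.mach k).s τ0 ∧ C.CMove (C.mach k).u τ1 ∧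
     C.IsPass τ0 ∧ C.NP τ0 % C.n = C.rhoR C.j ∧ C.RD τ0 C.j ∧
     C.IsPass τ1 ∧ C.NP τ1 % C.n = C.rhoS C.c ∧ C.SD τ1 C.c) ∨
  (∃ τ0 τ1, C.ydec k = .p01 τ0 τ1 ∧ C.mach (k+1) = ⟨τ0+1, τ1+1, true⟩ ∧
     (C.mach k).al = true ∧ C.JMove (C.mach k).s τ0 ∧ C.CMove (C.mach k).u τ1 ∧
     C.IsPass τ0 ∧ C.NP τ0 % C.n = C.rhoS C.j ∧ C.SD τ0 C.j ∧
     C.IsPass τ1 ∧ C.NP τ1 % C.n = C.rhoR C.c ∧ C.RD τ1 C.c) ∨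
  (∃ τ0, C.ydec k = .dth τ0 ∧ C.mach (k+1) = ⟨τ0+1, (C.mach k).u, false⟩ ∧
     (C.mach k).al = true ∧ C.JMove (C.mach k).s τ0 ∧
     C.IsPass τ0 ∧ C.NP τ0 % C.n = C.rhoS C.j ∧ C.SD τ0 C.j ∧
     ¬ C.P.tok (C.x.state (C.mach k).u C.c) ∧
     (∀ τ, τ0+1 ≤ τ → C.Mv C.j τ → C.x.sched τ = {C.j}))

lemma view_of_inv (k : ℕ) (hInv : C.Inv k) : C.View k := by
  have hn := C.hn
  obtain ⟨hC1, hC2, hC3, hC4⟩ := hInv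
  have hmach : C.mach (k+1) = (C.decide (C.mach k)).2 := rfl
  have hydec : C.ydec k = (C.decide (C.mach k)).1 := rfl
  obtain ⟨hs0, hm0, hgap0⟩ := C.nxt_spec (C.jmoves_nonempty (C.mach k).s)
  by_cases h1 : C.x.sched (C.nxt C.j (C.mach k).s) = {C.j}
  · -- internal move of j : d0
    have hdec : C.decide (C.mach k) = (Dec.d0 (C.nxt C.j (C.mach k).s),
        ⟨C.nxt C.j (C.mach k).s + 1, (C.mach k).u, (C.mach k).al⟩) := by
      unfold decide; rw [if_pos h1]
    have hintd : C.INTD (C.nxt C.j (C.mach k).s) C.j := by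
      rcases C.move_cases hm0 with h | ⟨hp, _, _⟩ | ⟨hp, _, _⟩
      · exact h
      · exact absurd h1 (C.pass_not_single hp _)
      · exact absurd h1 (C.pass_not_single hp _)
    exact Or.inl ⟨_, by rw [hydec, hdec], by rw [hmach, hdec],
      ⟨hs0, hm0, hgap0⟩, hintd⟩
  · by_cases hal : (C.mach k).al = true
    · obtain ⟨cA, cB⟩ := hC3 hal
      have hnint : ¬ C.INTD (C.nxt C.j (C.mach k).s) C.j := fun h => h1 h.1
      by_cases h2 : C.P.lam (C.x.state (C.nxt C.j (C.mach k).s) C.j) C.snd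
      · -- SEND branch of j
        have hsend : C.IsPass (C.nxt C.j (C.mach k).s) ∧
            C.NP (C.nxt C.j (C.mach k).s) % C.n = C.rhoS C.j ∧
            C.SD (C.nxt C.j (C.mach k).s) C.j := by
          rcases C.move_cases hm0 with h | h | ⟨hp, hres, hrd⟩
          · exact absurd h hnint
          · exact h
          · exact absurd h2 hrd.1
        obtain ⟨hp0, hres0, hsd0⟩ := hsend
        obtain ⟨hnp0, hcnt0⟩ := C.np_decomp_S hs0 hgap0 hp0 hres0
        by_cases hEx : ∃ τ, (C.mach k).u ≤ τ ∧ C.Mv C.c τ ∧ C.x.sched τ ≠ {C.c}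
        · obtain ⟨hu1, hm1, hgap1⟩ := C.nxt_spec (v := C.c) (a := (C.mach k).u)
            (by obtain ⟨τ, ht1, ht2, _⟩ := hEx; exact ⟨τ, ht1, ht2⟩)
          by_cases h3 : C.x.sched (C.nxt C.c (C.mach k).u) = {C.c}
          · -- d1
            have hdec : C.decide (C.mach k) = (Dec.d1 (C.nxt C.c (C.mach k).u),
                ⟨(C.mach k).s, C.nxt C.c (C.mach k).u + 1, true⟩) := by
              unfold decide; rw [if_neg h1, if_pos hal, if_pos h2, if_pos hEx, if_pos h3]
            have hintd : C.INTD (C.nxt C.c (C.mach k).u) C.c := by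
              rcases C.move_cases hm1 with h | ⟨hp, _, _⟩ | ⟨hp, _, _⟩
              · exact h
              · exact absurd h3 (C.pass_not_single hp _)
              · exact absurd h3 (C.pass_not_single hp _)
            exact Or.inr (Or.inl ⟨_, by rw [hydec, hdec], by rw [hmach, hdec], hal,
              ⟨hu1, hm1, hgap1⟩, hintd, hEx⟩)
          · -- p01 : c's next non-internal move must be a receive
            have hrecv : C.IsPass (C.nxt C.c (C.mach k).u) ∧
                C.NP (C.nxt C.c (C.mach k).u) % C.n = C.rhoR C.c ∧
                C.RD (C.nxt C.c (C.mach k).u) C.c := by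
              rcases C.move_cases hm1 with h | ⟨hp1, hres1, hsd1⟩ | h
              · exact absurd h.1 h3
              · exfalso
                obtain ⟨hnp1, hcnt1⟩ := C.np_decomp_S hu1 hgap1 hp1 hres1
                have hi2lt : C.cntS C.j (C.mach k).s * C.n + C.rhoR C.c
                    < C.NP (C.nxt C.c (C.mach k).u) := by
                  rw [hnp1, ← cA]
                  have hb : (C.cntS C.j (C.mach k).s + 1) * C.n
                      = C.cntS C.j (C.mach k).s * C.n + C.n := by ring
                  rcases C.resFacts with ⟨hpj, e1, e2, e3, e4⟩ | ⟨hpj, e1, e2, e3, e4, e5⟩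
                  · rw [e1, e2, if_neg (by omega)] at hcnt0
                    have hcnt0' : C.cntR C.j (C.mach k).s = C.cntS C.j (C.mach k).s := by omega
                    rw [hcnt0']
                    omega
                  · rw [e5, if_pos (by omega)] at hcnt0
                    rw [hcnt0, hb]
                    omega
                have hi2lt' : C.cntS C.j (C.mach k).s * C.n + C.rhoR C.c
                    < Nat.count C.IsPass (C.nxt C.c (C.mach k).u + 1) := by
                  have h5 : Nat.count C.IsPass (C.nxt C.c (C.mach k).u + 1)
                      = C.NP (C.nxt C.c (C.mach k).u) + 1 := C.np_succ hp1
                  omega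
                obtain ⟨τ2, hτ2lt, hp2, hcnt2⟩ := count_exists_of_lt C.IsPass _ _ hi2lt'
                have hnp2 : C.NP τ2 = C.cntS C.j (C.mach k).s * C.n + C.rhoR C.c := hcnt2
                have hres2 : C.NP τ2 % C.n = C.rhoR C.c := by
                  rw [hnp2]; exact (mulAdd_divmod C.npos (C.rhoR_lt C.c)).1
                obtain ⟨hMv2, -, -⟩ := C.res_receiver hp2 hres2
                have hu2 : (C.mach k).u ≤ τ2 := by
                  by_contra hcu
                  push_neg at hcu
                  refine C.cnt_ge_R hp2 hnp2 ?_ ?_ hcu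
                  · exact (mulAdd_divmod C.npos (C.rhoR_lt C.c)).1
                  · rw [(mulAdd_divmod C.npos (C.rhoR_lt C.c)).2]; exact cB.symm
                have hττ : τ2 < C.nxt C.c (C.mach k).u := by
                  rcases Nat.lt_or_ge τ2 (C.nxt C.c (C.mach k).u) with h | h
                  · exact h
                  · exfalso
                    have he : τ2 = C.nxt C.c (C.mach k).u := by omega
                    rw [he] at hnp2; omega
                exact hgap1 τ2 hu2 hττ hMv2
              · exact h
            obtain ⟨hp1, hres1, hrd1⟩ := hrecv
            have hdec : C.decide (C.mach k) = (Dec.p01 (C.nxt C.j (C.mach k).s)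
                (C.nxt C.c (C.mach k).u),
                ⟨C.nxt C.j (C.mach k).s + 1, C.nxt C.c (C.mach k).u + 1, true⟩) := by
              unfold decide; rw [if_neg h1, if_pos hal, if_pos h2, if_pos hEx, if_neg h3]
            exact Or.inr (Or.inr (Or.inr (Or.inl ⟨_, _, by rw [hydec, hdec],
              by rw [hmach, hdec], hal, ⟨hs0, hm0, hgap0⟩, ⟨hu1, hm1, hgap1⟩,
              hp0, hres0, hsd0, hp1, hres1, hrd1⟩)))
        · -- dth
          have hdec : C.decide (C.mach k) = (Dec.dth (C.nxt C.j (C.mach k).s),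
              ⟨C.nxt C.j (C.mach k).s + 1, (C.mach k).u, false⟩) := by
            unfold decide; rw [if_neg h1, if_pos hal, if_pos h2, if_neg hEx]
          have hntok : ¬ C.P.tok (C.x.state (C.mach k).u C.c) := by
            intro ht
            have hval : C.c.val = (C.p.val + C.NP (C.mach k).u) % C.n := (C.tokinv _ _).mp ht
            have hresu : C.NP (C.mach k).u % C.n = C.rhoS C.c :=
              (C.rhoS_spec C.c _).mp hval.symm
            have hS := C.cntS_eval C.c (C.mach k).u
            have hR := C.cntR_eval C.c (C.mach k).u
            rw [hresu, if_neg (lt_irrefl _), Nat.add_zero] at hS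
            rw [hresu] at hR
            rcases C.resFacts with ⟨hpj, e1, e2, e3, e4⟩ | ⟨hpj, e1, e2, e3, e4, e5⟩
            · rw [e3, e4, if_pos (by omega)] at hR
              rw [e1, e2, if_neg (by omega)] at hcnt0
              omega
            · rw [e1, if_neg (by omega)] at hR
              rw [e5, if_pos (by omega)] at hcnt0
              omega
          have hlater : ∀ τ, C.nxt C.j (C.mach k).s + 1 ≤ τ → C.Mv C.j τ →
              C.x.sched τ = {C.j} := by
            intro τ hτ hmv
            by_contra hns
            have hpass : C.IsPass τ ∧
                (C.NP τ % C.n = C.rhoS C.j ∨ C.NP τ % C.n = C.rhoR C.j) := by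
              rcases C.move_cases hmv with h | ⟨hp, hres, _⟩ | ⟨hp, hres, _⟩
              · exact absurd h.1 hns
              · exact ⟨hp, Or.inl hres⟩
              · exact ⟨hp, Or.inr hres⟩
            obtain ⟨hpτ, hresτ⟩ := hpass
            have hge : C.NP (C.nxt C.j (C.mach k).s) + 1 ≤ C.NP τ := by
              rw [← C.np_succ hp0]; exact Nat.count_monotone _ hτ
            have hd := Nat.div_add_mod (C.NP τ) C.n
            have hdc : C.n * (C.NP τ / C.n) = (C.NP τ / C.n) * C.n := Nat.mul_comm _ _
            have hi2lt : C.cntS C.j (C.mach k).s * C.n + C.rhoR C.c < C.NP τ := by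
              have hrRc := C.rhoR_lt C.c
              rcases hresτ with hρ | hρ
              · have h5 : C.cntS C.j (C.mach k).s * C.n + C.n ≤ (C.NP τ / C.n) * C.n :=
                  mul_lower (n := C.n) (σ := C.rhoS C.j) (ρ := C.rhoS C.j)
                    (C.rhoS_lt C.j) (by omega) le_rfl
                omega
              · rcases C.resFacts with ⟨hpj, e1, e2, e3, e4⟩ | ⟨hpj, e1, e2, e3, e4, e5⟩
                · have h5 : C.cntS C.j (C.mach k).s * C.n ≤ (C.NP τ / C.n) * C.n :=
                    mul_lower2 (n := C.n) (σ := C.rhoS C.j) (ρ := C.rhoR C.j)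
                      (C.rhoR_lt C.j) (by omega)
                  omega
                · have h5 : C.cntS C.j (C.mach k).s * C.n + C.n ≤ (C.NP τ / C.n) * C.n :=
                    mul_lower (n := C.n) (σ := C.rhoS C.j) (ρ := C.rhoR C.j)
                      (C.rhoS_lt C.j) (by omega) (by omega)
                  omega
            have hi2lt' : C.cntS C.j (C.mach k).s * C.n + C.rhoR C.c
                < Nat.count C.IsPass (τ + 1) := by
              have h5 : Nat.count C.IsPass (τ+1) = C.NP τ + 1 := C.np_succ hpτ
              omega
            obtain ⟨τ2, hτ2lt, hp2, hcnt2⟩ := count_exists_of_lt C.IsPass _ _ hi2lt'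
            have hnp2 : C.NP τ2 = C.cntS C.j (C.mach k).s * C.n + C.rhoR C.c := hcnt2
            have hres2 : C.NP τ2 % C.n = C.rhoR C.c := by
              rw [hnp2]; exact (mulAdd_divmod C.npos (C.rhoR_lt C.c)).1
            obtain ⟨hMv2, -, hnsing2⟩ := C.res_receiver hp2 hres2
            have hu2 : (C.mach k).u ≤ τ2 := by
              by_contra hcu
              push_neg at hcu
              refine C.cnt_ge_R hp2 hnp2 ?_ ?_ hcu
              · exact (mulAdd_divmod C.npos (C.rhoR_lt C.c)).1
              · rw [(mulAdd_divmod C.npos (C.rhoR_lt C.c)).2]; exact cB.symm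
            exact hEx ⟨τ2, hu2, hMv2, hnsing2⟩
          exact Or.inr (Or.inr (Or.inr (Or.inr ⟨_, by rw [hydec, hdec],
            by rw [hmach, hdec], hal, ⟨hs0, hm0, hgap0⟩, hp0, hres0, hsd0,
            hntok, hlater⟩)))
      · -- RECEIVE branch of j
        have hrecv0 : C.IsPass (C.nxt C.j (C.mach k).s) ∧
            C.NP (C.nxt C.j (C.mach k).s) % C.n = C.rhoR C.j ∧
            C.RD (C.nxt C.j (C.mach k).s) C.j := by
          rcases C.move_cases hm0 with h | ⟨hp, hres, hsd⟩ | h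
          · exact absurd h hnint
          · exact absurd hsd.1 h2
          · exact h
        obtain ⟨hp0, hres0, hrd0⟩ := hrecv0
        obtain ⟨hnp0, hcnt0⟩ := C.np_decomp_R hs0 hgap0 hp0 hres0
        have hi1lt : C.cntR C.j (C.mach k).s * C.n + C.rhoS C.c
            < Nat.count C.IsPass (C.nxt C.j (C.mach k).s + 1) := by
          have h5 : Nat.count C.IsPass (C.nxt C.j (C.mach k).s + 1)
              = C.NP (C.nxt C.j (C.mach k).s) + 1 := C.np_succ hp0
          have h6 : C.rhoS C.c ≤ C.rhoR C.j := by
            rcases C.resFacts with ⟨hpj, e1, e2, e3, e4⟩ | ⟨hpj, e1, e2, e3, e4, e5⟩ <;> omega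
          omega
        obtain ⟨τs, hτslt, hps, hcnts⟩ := count_exists_of_lt C.IsPass _ _ hi1lt
        have hnps : C.NP τs = C.cntR C.j (C.mach k).s * C.n + C.rhoS C.c := hcnts
        have hresS : C.NP τs % C.n = C.rhoS C.c := by
          rw [hnps]; exact (mulAdd_divmod C.npos (C.rhoS_lt C.c)).1
        obtain ⟨hMvS, hSDs, hnsingS⟩ := C.res_sender hps hresS
        have huS : (C.mach k).u ≤ τs := by
          by_contra hcu
          push_neg at hcu
          refine C.cnt_ge_S hps hnps ?_ ?_ hcu
          · exact (mulAdd_divmod C.npos (C.rhoS_lt C.c)).1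
          · rw [(mulAdd_divmod C.npos (C.rhoS_lt C.c)).2]; exact cA.symm
        obtain ⟨hu1, hm1, hgap1⟩ := C.nxt_spec (v := C.c) (a := (C.mach k).u) ⟨τs, huS, hMvS⟩
        by_cases h3 : C.x.sched (C.nxt C.c (C.mach k).u) = {C.c}
        · -- d1
          have hdec : C.decide (C.mach k) = (Dec.d1 (C.nxt C.c (C.mach k).u),
              ⟨(C.mach k).s, C.nxt C.c (C.mach k).u + 1, true⟩) := by
            unfold decide; rw [if_neg h1, if_pos hal, if_neg h2, if_pos h3]
          have hintd : C.INTD (C.nxt C.c (C.mach k).u) C.c := by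
            rcases C.move_cases hm1 with h | ⟨hp, _, _⟩ | ⟨hp, _, _⟩
            · exact h
            · exact absurd h3 (C.pass_not_single hp _)
            · exact absurd h3 (C.pass_not_single hp _)
          exact Or.inr (Or.inl ⟨_, by rw [hydec, hdec], by rw [hmach, hdec], hal,
            ⟨hu1, hm1, hgap1⟩, hintd, τs, huS, hMvS, hnsingS⟩)
        · -- p10 : c's next non-internal move must be a send
          have hsend1 : C.IsPass (C.nxt C.c (C.mach k).u) ∧
              C.NP (C.nxt C.c (C.mach k).u) % C.n = C.rhoS C.c ∧
              C.SD (C.nxt C.c (C.mach k).u) C.c := by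
            rcases C.move_cases hm1 with h | h | ⟨hp1, hres1, hrd1⟩
            · exact absurd h.1 h3
            · exact h
            · exfalso
              obtain ⟨hnp1, hcnt1⟩ := C.np_decomp_R hu1 hgap1 hp1 hres1
              have hlt : C.NP τs < C.NP (C.nxt C.c (C.mach k).u) := by
                rw [hnps, hnp1, ← cB]
                have hb : (C.cntR C.j (C.mach k).s + 1) * C.n
                    = C.cntR C.j (C.mach k).s * C.n + C.n := by ring
                rcases C.resFacts with ⟨hpj, e1, e2, e3, e4⟩ | ⟨hpj, e1, e2, e3, e4, e5⟩
                · rw [e1, e2, if_pos (by omega)] at hcnt0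
                  rw [hcnt0, hb]
                  omega
                · rw [e5, if_neg (by omega)] at hcnt0
                  have hcnt0' : C.cntS C.j (C.mach k).s = C.cntR C.j (C.mach k).s := by omega
                  rw [hcnt0']
                  omega
              have hττ : τs < C.nxt C.c (C.mach k).u := by
                rcases Nat.lt_or_ge τs (C.nxt C.c (C.mach k).u) with h | h
                · exact h
                · exfalso
                  have h5 : C.NP (C.nxt C.c (C.mach k).u) ≤ C.NP τs :=
                    Nat.count_monotone _ h
                  omega
              exact hgap1 τs huS hττ hMvS
          obtain ⟨hp1, hres1, hsd1⟩ := hsend1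
          have hdec : C.decide (C.mach k) = (Dec.p10 (C.nxt C.j (C.mach k).s)
              (C.nxt C.c (C.mach k).u),
              ⟨C.nxt C.j (C.mach k).s + 1, C.nxt C.c (C.mach k).u + 1, true⟩) := by
            unfold decide; rw [if_neg h1, if_pos hal, if_neg h2, if_neg h3]
          exact Or.inr (Or.inr (Or.inl ⟨_, _, by rw [hydec, hdec], by rw [hmach, hdec],
            hal, ⟨hs0, hm0, hgap0⟩, ⟨hu1, hm1, hgap1⟩,
            hp0, hres0, hrd0, hp1, hres1, hsd1⟩))
    · -- dead: by C4, the next j-move must be internal, contradiction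
      have hal' : (C.mach k).al = false := by
        revert hal; cases (C.mach k).al <;> simp
      exact absurd (hC4 hal' _ hs0 hm0) h1

lemma cnt_succS {v : Fin C.n} {τ : ℕ} (hp : C.IsPass τ) (hres : C.NP τ % C.n = C.rhoS v) :
    C.cntS v (τ+1) = C.cntS v τ + 1 ∧ C.cntR v (τ+1) = C.cntR v τ := by
  constructor
  · unfold cntS; rw [Nat.count_succ, if_pos ⟨hp, hres⟩]
  · unfold cntR
    rw [Nat.count_succ, if_neg (fun hc => C.rhoS_ne_rhoR v (hres.symm.trans hc.2)), Nat.add_zero]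

lemma cnt_succR {v : Fin C.n} {τ : ℕ} (hp : C.IsPass τ) (hres : C.NP τ % C.n = C.rhoR v) :
    C.cntR v (τ+1) = C.cntR v τ + 1 ∧ C.cntS v (τ+1) = C.cntS v τ := by
  constructor
  · unfold cntR; rw [Nat.count_succ, if_pos ⟨hp, hres⟩]
  · unfold cntS
    rw [Nat.count_succ, if_neg (fun hc => C.rhoS_ne_rhoR v (hc.2.symm.trans hres)), Nat.add_zero]

lemma cnt_succI {v : Fin C.n} {τ : ℕ} (hnp : ¬ C.IsPass τ) :
    C.cntS v (τ+1) = C.cntS v τ ∧ C.cntR v (τ+1) = C.cntR v τ := by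
  constructor
  · unfold cntS; rw [Nat.count_succ, if_neg (fun hc => hnp hc.1), Nat.add_zero]
  · unfold cntR; rw [Nat.count_succ, if_neg (fun hc => hnp hc.1), Nat.add_zero]

lemma mv_count_gap {v : Fin C.n} {a b : ℕ} (hab : a ≤ b)
    (h : ∀ τ, a ≤ τ → τ < b → ¬ C.Mv v τ) :
    Nat.count (C.Mv v) b = Nat.count (C.Mv v) a :=
  count_congr_interval _ b a hab h

lemma rs0 : ringSucc (0 : Fin 2) = 1 := rfl
lemma rs1 : ringSucc (1 : Fin 2) = 0 := rfl

lemma fin2_cases (v : Fin 2) : v = 0 ∨ v = 1 := by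
  have h := v.isLt
  have h' : v.val = 0 ∨ v.val = 1 := by omega
  rcases h' with h0 | h1
  · exact Or.inl (Fin.ext (by simpa using h0))
  · exact Or.inr (Fin.ext (by simpa using h1))

lemma one_ne_zero2 : (1 : Fin 2) ≠ 0 := by
  intro h
  have h' := congrArg Fin.val h
  simp at h'

lemma inv_zero : C.Inv 0 :=
  ⟨rfl, fun _ => rfl, fun _ => ⟨rfl, rfl⟩, fun h => nomatch h⟩

lemma inv_succ (k : ℕ) (hInv : C.Inv k) : C.Inv (k+1) := by
  obtain ⟨hC1, hC2, hC3, hC4⟩ := hInv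
  rcases C.view_of_inv k ⟨hC1, hC2, hC3, hC4⟩ with
    ⟨τ0, hd, hm, ⟨hs0, hm0, hgap0⟩, hintd⟩ |
    ⟨τ1, hd, hm, hal, ⟨hu1, hm1, hgap1⟩, hintd, -⟩ |
    ⟨τ0, τ1, hd, hm, hal, ⟨hs0, hm0, hgap0⟩, ⟨hu1, hm1, hgap1⟩, hp0, hres0, hrd0, hp1, hres1, hsd1⟩ |
    ⟨τ0, τ1, hd, hm, hal, ⟨hs0, hm0, hgap0⟩, ⟨hu1, hm1, hgap1⟩, hp0, hres0, hsd0, hp1, hres1, hrd1⟩ |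
    ⟨τ0, hd, hm, hal, ⟨hs0, hm0, hgap0⟩, hp0, hres0, hsd0, hntok, hlater⟩
  · -- d0
    have hms : (C.mach (k+1)).s = τ0+1 := by rw [hm]
    have hmu : (C.mach (k+1)).u = (C.mach k).u := by rw [hm]
    have hmal : (C.mach (k+1)).al = (C.mach k).al := by rw [hm]
    have h0m : (0:Fin 2) ∈ C.ysched k := by unfold ysched; rw [hd]; exact rfl
    have h1n : (1:Fin 2) ∉ C.ysched k := by
      unfold ysched; rw [hd]
      intro hc
      exact one_ne_zero2 hc
    have hcj : Nat.count (C.Mv C.j) (τ0+1) = Nat.count (C.Mv C.j) (C.mach k).s + 1 := by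
      rw [Nat.count_succ, if_pos hm0, C.mv_count_gap hs0 hgap0]
    refine ⟨?_, ?_, ?_, ?_⟩
    · rw [hms, hcj, hC1, Nat.count_succ, if_pos h0m]
    · intro hal'
      rw [hmal] at hal'
      rw [hmu, hC2 hal', Nat.count_succ, if_neg h1n, Nat.add_zero]
    · intro hal'
      rw [hmal] at hal'
      have hnp := C.intd_not_pass hintd
      have hg := C.cnt_gap (v := C.j) hs0 hgap0
      have hsucc := C.cnt_succI (v := C.j) hnp
      rw [hms, hmu, hsucc.1, hsucc.2, hg.1, hg.2]
      exact hC3 hal'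
    · intro hal'
      rw [hmal] at hal'
      intro τ hτ hmv
      rw [hms] at hτ
      exact hC4 hal' τ (by omega) hmv
  · -- d1
    have hms : (C.mach (k+1)).s = (C.mach k).s := by rw [hm]
    have hmu : (C.mach (k+1)).u = τ1+1 := by rw [hm]
    have hmal : (C.mach (k+1)).al = true := by rw [hm]
    have h0n : (0:Fin 2) ∉ C.ysched k := by
      unfold ysched; rw [hd]
      intro hc
      exact one_ne_zero2 hc.symm
    have h1m : (1:Fin 2) ∈ C.ysched k := by unfold ysched; rw [hd]; exact rfl
    have hcc : Nat.count (C.Mv C.c) (τ1+1) = Nat.count (C.Mv C.c) (C.mach k).u + 1 := by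
      rw [Nat.count_succ, if_pos hm1, C.mv_count_gap hu1 hgap1]
    refine ⟨?_, ?_, ?_, ?_⟩
    · rw [hms, hC1, Nat.count_succ, if_neg h0n, Nat.add_zero]
    · intro _
      rw [hmu, hcc, hC2 hal, Nat.count_succ, if_pos h1m]
    · intro _
      have hnp := C.intd_not_pass hintd
      have hg := C.cnt_gap (v := C.c) hu1 hgap1
      have hsucc := C.cnt_succI (v := C.c) hnp
      rw [hms, hmu, hsucc.1, hsucc.2, hg.1, hg.2]
      exact hC3 hal
    · intro hal'
      rw [hmal] at hal'
      simp at hal' 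
  · -- p10
    have hms : (C.mach (k+1)).s = τ0+1 := by rw [hm]
    have hmu : (C.mach (k+1)).u = τ1+1 := by rw [hm]
    have hmal : (C.mach (k+1)).al = true := by rw [hm]
    have h0m : (0:Fin 2) ∈ C.ysched k := by
      unfold ysched; rw [hd]
      exact Set.mem_insert_of_mem _ rs1.symm
    have h1m : (1:Fin 2) ∈ C.ysched k := by unfold ysched; rw [hd]; exact Set.mem_insert _ _
    have hcj : Nat.count (C.Mv C.j) (τ0+1) = Nat.count (C.Mv C.j) (C.mach k).s + 1 := by
      rw [Nat.count_succ, if_pos hm0, C.mv_count_gap hs0 hgap0]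
    have hcc : Nat.count (C.Mv C.c) (τ1+1) = Nat.count (C.Mv C.c) (C.mach k).u + 1 := by
      rw [Nat.count_succ, if_pos hm1, C.mv_count_gap hu1 hgap1]
    refine ⟨?_, ?_, ?_, ?_⟩
    · rw [hms, hcj, hC1, Nat.count_succ, if_pos h0m]
    · intro _
      rw [hmu, hcc, hC2 hal, Nat.count_succ, if_pos h1m]
    · intro _
      obtain ⟨cA, cB⟩ := hC3 hal
      have hgj := C.cnt_gap (v := C.j) hs0 hgap0
      have hgc := C.cnt_gap (v := C.c) hu1 hgap1
      have hsj := C.cnt_succR hp0 hres0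
      have hsc := C.cnt_succS hp1 hres1
      rw [hms, hmu]
      constructor
      · rw [hsj.1, hsc.1, hgj.2, hgc.1, cA]
      · rw [hsj.2, hsc.2, hgj.1, hgc.2, cB]
    · intro hal'
      rw [hmal] at hal'
      simp at hal' 
  · -- p01
    have hms : (C.mach (k+1)).s = τ0+1 := by rw [hm]
    have hmu : (C.mach (k+1)).u = τ1+1 := by rw [hm]
    have hmal : (C.mach (k+1)).al = true := by rw [hm]
    have h0m : (0:Fin 2) ∈ C.ysched k := by
      unfold ysched; rw [hd]; exact Set.mem_insert _ _
    have h1m : (1:Fin 2) ∈ C.ysched k := by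
      unfold ysched; rw [hd]
      exact Set.mem_insert_of_mem _ rs0.symm
    have hcj : Nat.count (C.Mv C.j) (τ0+1) = Nat.count (C.Mv C.j) (C.mach k).s + 1 := by
      rw [Nat.count_succ, if_pos hm0, C.mv_count_gap hs0 hgap0]
    have hcc : Nat.count (C.Mv C.c) (τ1+1) = Nat.count (C.Mv C.c) (C.mach k).u + 1 := by
      rw [Nat.count_succ, if_pos hm1, C.mv_count_gap hu1 hgap1]
    refine ⟨?_, ?_, ?_, ?_⟩
    · rw [hms, hcj, hC1, Nat.count_succ, if_pos h0m]
    · intro _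
      rw [hmu, hcc, hC2 hal, Nat.count_succ, if_pos h1m]
    · intro _
      obtain ⟨cA, cB⟩ := hC3 hal
      have hgj := C.cnt_gap (v := C.j) hs0 hgap0
      have hgc := C.cnt_gap (v := C.c) hu1 hgap1
      have hsj := C.cnt_succS hp0 hres0
      have hsc := C.cnt_succR hp1 hres1
      rw [hms, hmu]
      constructor
      · rw [hsj.2, hsc.2, hgj.2, hgc.1, cA]
      · rw [hsj.1, hsc.1, hgj.1, hgc.2, cB]
    · intro hal'
      rw [hmal] at hal'
      simp at hal' 
  · -- dth
    have hms : (C.mach (k+1)).s = τ0+1 := by rw [hm]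
    have hmal : (C.mach (k+1)).al = false := by rw [hm]
    have h0m : (0:Fin 2) ∈ C.ysched k := by
      unfold ysched; rw [hd]; exact Set.mem_insert _ _
    have hcj : Nat.count (C.Mv C.j) (τ0+1) = Nat.count (C.Mv C.j) (C.mach k).s + 1 := by
      rw [Nat.count_succ, if_pos hm0, C.mv_count_gap hs0 hgap0]
    refine ⟨?_, ?_, ?_, ?_⟩
    · rw [hms, hcj, hC1, Nat.count_succ, if_pos h0m]
    · intro hal'
      rw [hmal] at hal'
      simp at hal' 
    · intro hal'
      rw [hmal] at hal'
      simp at hal' 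
    · intro _
      intro τ hτ hmv
      rw [hms] at hτ
      exact hlater τ hτ hmv

lemma inv_all : ∀ k, C.Inv k := by
  intro k
  induction k with
  | zero => exact C.inv_zero
  | succ k ih => exact C.inv_succ k ih

lemma ystate0 (k : ℕ) : C.ystate k 0 = C.x.state (C.mach k).s C.j := by
  unfold ystate; rw [if_pos rfl]

lemma ystate1_alive {k : ℕ} (hal : (C.mach k).al = true) :
    C.ystate k 1 = C.x.state (C.mach k).u C.c := by
  unfold ystate; simp [one_ne_zero2, hal]

lemma ystate1_dead {k : ℕ} (hal : (C.mach k).al = false) :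
    C.ystate k 1 = C.deadSt (C.mach k).u := by
  unfold ystate; simp [one_ne_zero2, hal]

lemma yinp0 (k : ℕ) : C.yinp k 0 = C.x.inp (t0of (C.ydec k)) C.j := by
  unfold yinp; rw [if_pos rfl]

lemma yinp1_eq {k : ℕ} {d : Dec} (hd : C.ydec k = d) (hnd : ∀ τ, d ≠ .dth τ) :
    C.yinp k 1 = C.x.inp (t1of d) C.c := by
  unfold yinp; rw [if_neg one_ne_zero2, hd]
  cases d with
  | d0 τ => rfl
  | d1 τ => rfl
  | p10 τ0 τ1 => rfl
  | p01 τ0 τ1 => rfl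
  | dth τ => exact absurd rfl (hnd τ)

lemma yinp1_dth {k τ0 : ℕ} (hd : C.ydec k = .dth τ0) :
    C.yinp k 1 = fun a => a = C.rcv := by
  unfold yinp; rw [if_neg one_ne_zero2, hd]

lemma ystep (k : ℕ) :
    C.P.interleavingStep C.snd C.rcv (C.ysched k) (C.ystate k) (C.yinp k) (C.ystate (k+1)) := by
  rcases C.view_of_inv k (C.inv_all k) with
    ⟨τ0, hd, hm, ⟨hs0, hm0, hgap0⟩, hintd⟩ |
    ⟨τ1, hd, hm, hal, ⟨hu1, hm1, hgap1⟩, hintd, -⟩ |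
    ⟨τ0, τ1, hd, hm, hal, ⟨hs0, hm0, hgap0⟩, ⟨hu1, hm1, hgap1⟩, hp0, hres0, hrd0, hp1, hres1, hsd1⟩ |
    ⟨τ0, τ1, hd, hm, hal, ⟨hs0, hm0, hgap0⟩, ⟨hu1, hm1, hgap1⟩, hp0, hres0, hsd0, hp1, hres1, hrd1⟩ |
    ⟨τ0, hd, hm, hal, ⟨hs0, hm0, hgap0⟩, hp0, hres0, hsd0, hntok, hlater⟩
  · -- d0 : internal step of process 0
    left
    have hMeq : C.ysched k = {(0 : Fin 2)} := by unfold ysched; rw [hd]; rfl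
    have hfr0 : C.ystate k 0 = C.x.state τ0 C.j := by
      rw [C.ystate0]; exact (C.frozen C.j τ0 _ hs0 hgap0).symm
    have hys0' : C.ystate (k+1) 0 = C.x.state (τ0+1) C.j := by
      rw [C.ystate0, show (C.mach (k+1)).s = τ0+1 by rw [hm]]
    have hyi0 : C.yinp k 0 = C.x.inp τ0 C.j := by rw [C.yinp0, hd]; rfl
    refine ⟨0, hMeq, ?_, ?_⟩
    · intro v hv
      rw [hMeq] at hv
      have hv0 : v = 0 := hv
      subst hv0
      rw [hfr0, hyi0, hys0']
      exact ⟨hintd.2.1, hintd.2.2.1, hintd.2.2.2.1⟩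
    · intro v hv
      rw [hMeq] at hv
      have hv1 : v = 1 := by
        rcases fin2_cases v with h | h
        · exact absurd h hv
        · exact h
      subst hv1
      have hmu : (C.mach (k+1)).u = (C.mach k).u := by rw [hm]
      have hmal : (C.mach (k+1)).al = (C.mach k).al := by rw [hm]
      cases hb : (C.mach k).al with
      | false => rw [C.ystate1_dead (by rw [hmal, hb]), C.ystate1_dead hb, hmu]
      | true => rw [C.ystate1_alive (by rw [hmal, hb]), C.ystate1_alive hb, hmu]
  · -- d1 : internal step of process 1
    left
    have hMeq : C.ysched k = {(1 : Fin 2)} := by unfold ysched; rw [hd]; rfl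
    have hfr1 : C.ystate k 1 = C.x.state τ1 C.c := by
      rw [C.ystate1_alive hal]; exact (C.frozen C.c τ1 _ hu1 hgap1).symm
    have hys1' : C.ystate (k+1) 1 = C.x.state (τ1+1) C.c := by
      rw [C.ystate1_alive (show (C.mach (k+1)).al = true by rw [hm]),
        show (C.mach (k+1)).u = τ1+1 by rw [hm]]
    have hyi1 : C.yinp k 1 = C.x.inp τ1 C.c := C.yinp1_eq hd (fun τ hc => nomatch hc)
    refine ⟨1, hMeq, ?_, ?_⟩
    · intro v hv
      rw [hMeq] at hv
      have hv1 : v = 1 := hv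
      subst hv1
      rw [hfr1, hyi1, hys1']
      exact ⟨hintd.2.1, hintd.2.2.1, hintd.2.2.2.1⟩
    · intro v hv
      rw [hMeq] at hv
      have hv0 : v = 0 := by
        rcases fin2_cases v with h | h
        · exact h
        · exact absurd h hv
      subst hv0
      rw [C.ystate0, C.ystate0, show (C.mach (k+1)).s = (C.mach k).s by rw [hm]]
  · -- p10 : token pass from process 1 to process 0
    right
    have hMeq : C.ysched k = {1, ringSucc 1} := by unfold ysched; rw [hd]; rfl
    have hmem : ∀ u : Fin 2, u ∈ C.ysched k := by
      intro u
      rw [hMeq]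
      rcases fin2_cases u with h | h
      · subst h; exact Set.mem_insert_of_mem _ rs1.symm
      · subst h; exact Set.mem_insert _ _
    have hfr0 : C.ystate k 0 = C.x.state τ0 C.j := by
      rw [C.ystate0]; exact (C.frozen C.j τ0 _ hs0 hgap0).symm
    have hfr1 : C.ystate k 1 = C.x.state τ1 C.c := by
      rw [C.ystate1_alive hal]; exact (C.frozen C.c τ1 _ hu1 hgap1).symm
    have hys0' : C.ystate (k+1) 0 = C.x.state (τ0+1) C.j := by
      rw [C.ystate0, show (C.mach (k+1)).s = τ0+1 by rw [hm]]
    have hys1' : C.ystate (k+1) 1 = C.x.state (τ1+1) C.c := by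
      rw [C.ystate1_alive (show (C.mach (k+1)).al = true by rw [hm]),
        show (C.mach (k+1)).u = τ1+1 by rw [hm]]
    have hyi0 : C.yinp k 0 = C.x.inp τ0 C.j := by rw [C.yinp0, hd]; rfl
    have hyi1 : C.yinp k 1 = C.x.inp τ1 C.c := C.yinp1_eq hd (fun τ hc => nomatch hc)
    refine ⟨1, hMeq, hmem 1, hmem _, ?_, ?_, ?_, ?_, ?_, ?_⟩
    · rw [hfr1]; exact hsd1.1
    · intro u hu hune
      rcases fin2_cases u with h | h
      · subst h; rw [hfr0]; exact hrd0.1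
      · subst h; exact absurd rfl hune
    · rw [rs1, hyi0]; exact hrd0.2.1
    · intro u hu hune
      rcases fin2_cases u with h | h
      · subst h; exact absurd rs1.symm hune
      · subst h; rw [hyi1]; exact hsd1.2.1
    · intro u hu
      rcases fin2_cases u with h | h
      · subst h; rw [hfr0, hyi0, hys0']; exact hrd0.2.2
      · subst h; rw [hfr1, hyi1, hys1']; exact hsd1.2.2
    · intro u hu
      exact absurd (hmem u) hu
  · -- p01 : token pass from process 0 to process 1
    right
    have hMeq : C.ysched k = {0, ringSucc 0} := by unfold ysched; rw [hd]; rfl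
    have hmem : ∀ u : Fin 2, u ∈ C.ysched k := by
      intro u
      rw [hMeq]
      rcases fin2_cases u with h | h
      · subst h; exact Set.mem_insert _ _
      · subst h; exact Set.mem_insert_of_mem _ rs0.symm
    have hfr0 : C.ystate k 0 = C.x.state τ0 C.j := by
      rw [C.ystate0]; exact (C.frozen C.j τ0 _ hs0 hgap0).symm
    have hfr1 : C.ystate k 1 = C.x.state τ1 C.c := by
      rw [C.ystate1_alive hal]; exact (C.frozen C.c τ1 _ hu1 hgap1).symm
    have hys0' : C.ystate (k+1) 0 = C.x.state (τ0+1) C.j := by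
      rw [C.ystate0, show (C.mach (k+1)).s = τ0+1 by rw [hm]]
    have hys1' : C.ystate (k+1) 1 = C.x.state (τ1+1) C.c := by
      rw [C.ystate1_alive (show (C.mach (k+1)).al = true by rw [hm]),
        show (C.mach (k+1)).u = τ1+1 by rw [hm]]
    have hyi0 : C.yinp k 0 = C.x.inp τ0 C.j := by rw [C.yinp0, hd]; rfl
    have hyi1 : C.yinp k 1 = C.x.inp τ1 C.c := C.yinp1_eq hd (fun τ hc => nomatch hc)
    refine ⟨0, hMeq, hmem 0, hmem _, ?_, ?_, ?_, ?_, ?_, ?_⟩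
    · rw [hfr0]; exact hsd0.1
    · intro u hu hune
      rcases fin2_cases u with h | h
      · subst h; exact absurd rfl hune
      · subst h; rw [hfr1]; exact hrd1.1
    · rw [rs0, hyi1]; exact hrd1.2.1
    · intro u hu hune
      rcases fin2_cases u with h | h
      · subst h; rw [hyi0]; exact hsd0.2.1
      · subst h; exact absurd rs0.symm hune
    · intro u hu
      rcases fin2_cases u with h | h
      · subst h; rw [hfr0, hyi0, hys0']; exact hsd0.2.2
      · subst h; rw [hfr1, hyi1, hys1']; exact hrd1.2.2
    · intro u hu
      exact absurd (hmem u) hu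
  · -- dth : synthetic token pass from process 0 to process 1
    right
    have hMeq : C.ysched k = {0, ringSucc 0} := by unfold ysched; rw [hd]; rfl
    have hmem : ∀ u : Fin 2, u ∈ C.ysched k := by
      intro u
      rw [hMeq]
      rcases fin2_cases u with h | h
      · subst h; exact Set.mem_insert _ _
      · subst h; exact Set.mem_insert_of_mem _ rs0.symm
    have hfr0 : C.ystate k 0 = C.x.state τ0 C.j := by
      rw [C.ystate0]; exact (C.frozen C.j τ0 _ hs0 hgap0).symm
    have hfr1 : C.ystate k 1 = C.x.state (C.mach k).u C.c := C.ystate1_alive hal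
    have hys0' : C.ystate (k+1) 0 = C.x.state (τ0+1) C.j := by
      rw [C.ystate0, show (C.mach (k+1)).s = τ0+1 by rw [hm]]
    have hys1' : C.ystate (k+1) 1 = C.deadSt (C.mach k).u := by
      rw [C.ystate1_dead (show (C.mach (k+1)).al = false by rw [hm]),
        show (C.mach (k+1)).u = (C.mach k).u by rw [hm]]
    have hyi0 : C.yinp k 0 = C.x.inp τ0 C.j := by rw [C.yinp0, hd]; rfl
    have hyi1 : C.yinp k 1 = fun a => a = C.rcv := C.yinp1_dth hd
    refine ⟨0, hMeq, hmem 0, hmem _, ?_, ?_, ?_, ?_, ?_, ?_⟩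
    · rw [hfr0]; exact hsd0.1
    · intro u hu hune
      rcases fin2_cases u with h | h
      · subst h; exact absurd rfl hune
      · subst h
        rw [hfr1]
        exact fun hl => hntok (C.hax.2.2.1 _ hl)
    · rw [rs0, hyi1]
    · intro u hu hune
      rcases fin2_cases u with h | h
      · subst h; rw [hyi0]; exact hsd0.2.1
      · subst h; exact absurd rs0.symm hune
    · intro u hu
      rcases fin2_cases u with h | h
      · subst h; rw [hfr0, hyi0, hys0']; exact hsd0.2.2
      · subst h
        rw [hfr1, hyi1, hys1']
        exact C.deadSt_spec hntok
    · intro u hu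
      exact absurd (hmem u) hu

/-- The simulated ring-2 run. -/
noncomputable def ysys : SysRun C.P (fun _ => False) 2 (C.P.interleavingStep C.snd C.rcv) where
  state := C.ystate
  inp := C.yinp
  sched := C.ysched
  init_state := by
    intro v
    rcases fin2_cases v with h | h <;> subst h
    · rw [C.ystate0]
      exact C.x.init_state C.j
    · rw [C.ystate1_alive (show (C.mach 0).al = true from rfl)]
      exact C.x.init_state C.c
  init_token := by
    by_cases hpj : C.p = C.j
    · refine ⟨0, ?_, ?_⟩
      · show C.P.tok (C.ystate 0 0)
        rw [C.ystate0]
        exact hpj ▸ C.p_spec.1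
      · intro v hv
        change C.P.tok (C.ystate 0 v) at hv
        rcases fin2_cases v with h | h <;> subst h
        · rfl
        · exfalso
          rw [C.ystate1_alive (show (C.mach 0).al = true from rfl)] at hv
          exact C.c_ne_j ((C.p_spec.2 C.c hv).trans hpj)
    · refine ⟨1, ?_, ?_⟩
      · show C.P.tok (C.ystate 0 1)
        rw [C.ystate1_alive (show (C.mach 0).al = true from rfl)]
        have hc : C.c = C.p := by unfold c; split_ifs; rfl
        rw [hc]
        exact C.p_spec.1
      · intro v hv
        change C.P.tok (C.ystate 0 v) at hv
        rcases fin2_cases v with h | h <;> subst h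
        · exfalso
          rw [C.ystate0] at hv
          exact hpj (C.p_spec.2 C.j hv).symm
        · rfl
  glob_consistent := fun _ _ _ _ h => h.elim
  step := C.ystep

lemma count_le_self (p : ℕ → Prop) (m : ℕ) : Nat.count p m ≤ m := by
  induction m with
  | zero => simp
  | succ m ih => rw [Nat.count_succ]; split_ifs <;> omega

lemma live0 : ∀ K, ∃ k, K ≤ k ∧ (0:Fin 2) ∈ C.ysched k := by
  intro K
  by_contra hK
  push_neg at hK
  have hstep : ∀ k, K ≤ k → ∃ τ1, C.mach (k+1) = ⟨(C.mach k).s, τ1+1, true⟩ ∧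
      C.CMove (C.mach k).u τ1 ∧ C.INTD τ1 C.c ∧
      (∃ W, (C.mach k).u ≤ W ∧ C.Mv C.c W ∧ C.x.sched W ≠ {C.c}) := by
    intro k hk
    rcases C.view_of_inv k (C.inv_all k) with
      ⟨τ0, hd, hm, _, _⟩ | ⟨τ1, hd, hm, hal, hcm, hintd, hW⟩ | ⟨τ0, τ1, hd, hm, _⟩ |
      ⟨τ0, τ1, hd, hm, _⟩ | ⟨τ0, hd, hm, _⟩
    · exact absurd (show (0:Fin 2) ∈ C.ysched k by unfold ysched; rw [hd]; exact rfl)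
        (hK k hk)
    · exact ⟨τ1, hm, hcm, hintd, hW⟩
    · exact absurd (show (0:Fin 2) ∈ C.ysched k by
        unfold ysched; rw [hd]; exact Set.mem_insert_of_mem _ rs1.symm) (hK k hk)
    · exact absurd (show (0:Fin 2) ∈ C.ysched k by
        unfold ysched; rw [hd]; exact Set.mem_insert _ _) (hK k hk)
    · exact absurd (show (0:Fin 2) ∈ C.ysched k by
        unfold ysched; rw [hd]; exact Set.mem_insert _ _) (hK k hk)
  obtain ⟨τ1K, hmK, hcmK, hintdK, W, hWu, hWmv, hWn⟩ := hstep K le_rfl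
  have key : ∀ t, (C.mach (K+t)).u ≤ W ∧ (C.mach K).u + t ≤ (C.mach (K+t)).u := by
    intro t
    induction t with
    | zero => exact ⟨hWu, Nat.le_refl _⟩
    | succ t ih =>
      obtain ⟨τ1, hm, ⟨hu1, hm1, hgap1⟩, hintd, -⟩ := hstep (K+t) (by omega)
      have hτW : τ1 ≤ W := by
        by_contra hc
        push_neg at hc
        exact hgap1 W ih.1 hc hWmv
      have hτWne : τ1 ≠ W := by
        intro he
        rw [he] at hintd
        exact hWn hintd.1
      have hmu : (C.mach (K+(t+1))).u = τ1 + 1 := by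
        show (C.mach ((K+t)+1)).u = τ1 + 1
        rw [hm]
      rw [hmu]
      constructor
      · omega
      · have := ih.2
        have := hu1
        omega
  have h1 := (key (W + 1)).1
  have h2 := (key (W + 1)).2
  omega

lemma movesinf0 : {k : ℕ | (0:Fin 2) ∈ C.ysched k}.Infinite := by
  apply Set.infinite_of_not_bddAbove
  rintro ⟨b, hb⟩
  obtain ⟨k, hk1, hk2⟩ := C.live0 (b+1)
  have := hb hk2
  omega

lemma dead_d0 {k : ℕ} (hal : (C.mach k).al = false) :
    (C.mach (k+1)).al = false ∧ C.ysched k = {(0:Fin 2)} := by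
  rcases C.view_of_inv k (C.inv_all k) with
    ⟨τ0, hd, hm, _, _⟩ | ⟨τ1, hd, hm, hal', _, _, -⟩ | ⟨τ0, τ1, hd, hm, hal', _⟩ |
    ⟨τ0, τ1, hd, hm, hal', _⟩ | ⟨τ0, hd, hm, hal', _⟩
  · constructor
    · rw [hm]; exact hal
    · unfold ysched; rw [hd]; rfl
  · rw [hal'] at hal; exact nomatch hal
  · rw [hal'] at hal; exact nomatch hal
  · rw [hal'] at hal; exact nomatch hal
  · rw [hal'] at hal; exact nomatch hal

lemma alive_of_movesinf1 (h : {k : ℕ | (1:Fin 2) ∈ C.ysched k}.Infinite) :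
    ∀ k, (C.mach k).al = true := by
  intro k
  by_contra hc
  have hal : (C.mach k).al = false := by
    cases hb : (C.mach k).al
    · rfl
    · exact absurd hb hc
  have hd : ∀ t, (C.mach (k+t)).al = false ∧ C.ysched (k+t) = {(0:Fin 2)} := by
    intro t
    induction t with
    | zero => exact ⟨hal, (C.dead_d0 hal).2⟩
    | succ t ih =>
      have h1 := (C.dead_d0 ih.1).1
      have he : k + (t+1) = (k+t)+1 := rfl
      rw [he]
      exact ⟨h1, (C.dead_d0 h1).2⟩
  obtain ⟨m, hm1, hm2⟩ := h.exists_gt k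
  have hm1' : (1:Fin 2) ∈ C.ysched m := hm1
  have h2 := (hd (m - k)).2
  rw [show k + (m-k) = m by omega] at h2
  rw [h2] at hm1'
  exact one_ne_zero2 hm1'

lemma word0_eq : C.ysys.localWord 0 = C.x.localWord C.j := by
  funext t
  have hinf : {k : ℕ | (0:Fin 2) ∈ C.ysched k}.Infinite := C.movesinf0
  set k := C.ysys.localIdx 0 t with hk
  have hmem : (0:Fin 2) ∈ C.ysched k := Nat.nth_mem_of_infinite hinf t
  have hcount : Nat.count (fun k' => (0:Fin 2) ∈ C.ysched k') k = t :=
    Nat.count_nth_of_infinite hinf t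
  obtain ⟨hC1, -, -, -⟩ := C.inv_all k
  show Sum.elim (C.P.lam (C.ystate k 0)) (C.yinp k 0)
    = Sum.elim (C.P.lam (C.x.state (C.x.localIdx C.j t) C.j)) (C.x.inp (C.x.localIdx C.j t) C.j)
  rcases C.view_of_inv k (C.inv_all k) with
    ⟨τ0, hd, hm, ⟨hs0, hm0, hgap0⟩, hintd⟩ | ⟨τ1, hd, hm, hal, hcm, hintd, -⟩ |
    ⟨τ0, τ1, hd, hm, hal, ⟨hs0, hm0, hgap0⟩, hcm, hrest⟩ |
    ⟨τ0, τ1, hd, hm, hal, ⟨hs0, hm0, hgap0⟩, hcm, hrest⟩ |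
    ⟨τ0, hd, hm, hal, ⟨hs0, hm0, hgap0⟩, hrest⟩
  ·
      have hτcnt : Nat.count (C.Mv C.j) τ0 = t := by
        rw [C.mv_count_gap hs0 hgap0, hC1, hcount]
      have hnth : Nat.nth (C.Mv C.j) t = τ0 := by
        rw [← hτcnt]; exact Nat.nth_count hm0
      have hxidx : C.x.localIdx C.j t = τ0 := hnth
      have hfr0 : C.ystate k 0 = C.x.state τ0 C.j := by
        rw [C.ystate0]; exact (C.frozen C.j τ0 _ hs0 hgap0).symm
      have hyi0 : C.yinp k 0 = C.x.inp τ0 C.j := by rw [C.yinp0, hd]; rfl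
      rw [hxidx, hfr0, hyi0]
  · exfalso
    have hsch : C.ysched k = {(1:Fin 2)} := by unfold ysched; rw [hd]; rfl
    rw [hsch] at hmem
    exact one_ne_zero2 (Eq.symm hmem)
  ·
      have hτcnt : Nat.count (C.Mv C.j) τ0 = t := by
        rw [C.mv_count_gap hs0 hgap0, hC1, hcount]
      have hnth : Nat.nth (C.Mv C.j) t = τ0 := by
        rw [← hτcnt]; exact Nat.nth_count hm0
      have hxidx : C.x.localIdx C.j t = τ0 := hnth
      have hfr0 : C.ystate k 0 = C.x.state τ0 C.j := by
        rw [C.ystate0]; exact (C.frozen C.j τ0 _ hs0 hgap0).symm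
      have hyi0 : C.yinp k 0 = C.x.inp τ0 C.j := by rw [C.yinp0, hd]; rfl
      rw [hxidx, hfr0, hyi0]
  ·
      have hτcnt : Nat.count (C.Mv C.j) τ0 = t := by
        rw [C.mv_count_gap hs0 hgap0, hC1, hcount]
      have hnth : Nat.nth (C.Mv C.j) t = τ0 := by
        rw [← hτcnt]; exact Nat.nth_count hm0
      have hxidx : C.x.localIdx C.j t = τ0 := hnth
      have hfr0 : C.ystate k 0 = C.x.state τ0 C.j := by
        rw [C.ystate0]; exact (C.frozen C.j τ0 _ hs0 hgap0).symm
      have hyi0 : C.yinp k 0 = C.x.inp τ0 C.j := by rw [C.yinp0, hd]; rfl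
      rw [hxidx, hfr0, hyi0]
  ·
      have hτcnt : Nat.count (C.Mv C.j) τ0 = t := by
        rw [C.mv_count_gap hs0 hgap0, hC1, hcount]
      have hnth : Nat.nth (C.Mv C.j) t = τ0 := by
        rw [← hτcnt]; exact Nat.nth_count hm0
      have hxidx : C.x.localIdx C.j t = τ0 := hnth
      have hfr0 : C.ystate k 0 = C.x.state τ0 C.j := by
        rw [C.ystate0]; exact (C.frozen C.j τ0 _ hs0 hgap0).symm
      have hyi0 : C.yinp k 0 = C.x.inp τ0 C.j := by rw [C.yinp0, hd]; rfl
      rw [hxidx, hfr0, hyi0]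

lemma word1_eq (h : C.ysys.MovesInf 1) : C.ysys.localWord 1 = C.x.localWord C.c := by
  have halive := C.alive_of_movesinf1 h
  funext t
  have hinf : {k : ℕ | (1:Fin 2) ∈ C.ysched k}.Infinite := h
  set k := C.ysys.localIdx 1 t with hk
  have hmem : (1:Fin 2) ∈ C.ysched k := Nat.nth_mem_of_infinite hinf t
  have hcount : Nat.count (fun k' => (1:Fin 2) ∈ C.ysched k') k = t :=
    Nat.count_nth_of_infinite hinf t
  obtain ⟨-, hC2, -, -⟩ := C.inv_all k
  show Sum.elim (C.P.lam (C.ystate k 1)) (C.yinp k 1)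
    = Sum.elim (C.P.lam (C.x.state (C.x.localIdx C.c t) C.c)) (C.x.inp (C.x.localIdx C.c t) C.c)
  rcases C.view_of_inv k (C.inv_all k) with
    ⟨τ0, hd, hm, hjm, hintd⟩ | ⟨τ1, hd, hm, hal, ⟨hu1, hm1, hgap1⟩, hintd, -⟩ |
    ⟨τ0, τ1, hd, hm, hal, hjm, ⟨hu1, hm1, hgap1⟩, hrest⟩ |
    ⟨τ0, τ1, hd, hm, hal, hjm, ⟨hu1, hm1, hgap1⟩, hrest⟩ |
    ⟨τ0, hd, hm, hal, hjm, hrest⟩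
  · exfalso
    have hsch : C.ysched k = {(0:Fin 2)} := by unfold ysched; rw [hd]; rfl
    rw [hsch] at hmem
    exact one_ne_zero2 hmem
  ·
      have hτcnt : Nat.count (C.Mv C.c) τ1 = t := by
        rw [C.mv_count_gap hu1 hgap1, hC2 (halive k), hcount]
      have hnth : Nat.nth (C.Mv C.c) t = τ1 := by
        rw [← hτcnt]; exact Nat.nth_count hm1
      have hxidx : C.x.localIdx C.c t = τ1 := hnth
      have hfr1 : C.ystate k 1 = C.x.state τ1 C.c := by
        rw [C.ystate1_alive (halive k)]; exact (C.frozen C.c τ1 _ hu1 hgap1).symm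
      have hyi1 : C.yinp k 1 = C.x.inp τ1 C.c := C.yinp1_eq hd (fun τ hc => nomatch hc)
      rw [hxidx, hfr1, hyi1]
  ·
      have hτcnt : Nat.count (C.Mv C.c) τ1 = t := by
        rw [C.mv_count_gap hu1 hgap1, hC2 (halive k), hcount]
      have hnth : Nat.nth (C.Mv C.c) t = τ1 := by
        rw [← hτcnt]; exact Nat.nth_count hm1
      have hxidx : C.x.localIdx C.c t = τ1 := hnth
      have hfr1 : C.ystate k 1 = C.x.state τ1 C.c := by
        rw [C.ystate1_alive (halive k)]; exact (C.frozen C.c τ1 _ hu1 hgap1).symm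
      have hyi1 : C.yinp k 1 = C.x.inp τ1 C.c := C.yinp1_eq hd (fun τ hc => nomatch hc)
      rw [hxidx, hfr1, hyi1]
  ·
      have hτcnt : Nat.count (C.Mv C.c) τ1 = t := by
        rw [C.mv_count_gap hu1 hgap1, hC2 (halive k), hcount]
      have hnth : Nat.nth (C.Mv C.c) t = τ1 := by
        rw [← hτcnt]; exact Nat.nth_count hm1
      have hxidx : C.x.localIdx C.c t = τ1 := hnth
      have hfr1 : C.ystate k 1 = C.x.state τ1 C.c := by
        rw [C.ystate1_alive (halive k)]; exact (C.frozen C.c τ1 _ hu1 hgap1).symm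
      have hyi1 : C.yinp k 1 = C.x.inp τ1 C.c := C.yinp1_eq hd (fun τ hc => nomatch hc)
      rw [hxidx, hfr1, hyi1]
  · exfalso
    have hdead : (C.mach (k+1)).al = false := by rw [hm]
    rw [halive (k+1)] at hdead
    exact nomatch hdead

lemma movesinfc (h : C.ysys.MovesInf 1) : C.x.MovesInf C.c := by
  have halive := C.alive_of_movesinf1 h
  apply Set.infinite_of_not_bddAbove
  rintro ⟨b, hb⟩
  have hinf : {k : ℕ | (1:Fin 2) ∈ C.ysched k}.Infinite := h
  set k := Nat.nth (fun k' => (1:Fin 2) ∈ C.ysched k') (b+1) with hk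
  have hmem : (1:Fin 2) ∈ C.ysched k := Nat.nth_mem_of_infinite hinf (b+1)
  have hcount : Nat.count (fun k' => (1:Fin 2) ∈ C.ysched k') k = b+1 :=
    Nat.count_nth_of_infinite hinf (b+1)
  obtain ⟨-, hC2, -, -⟩ := C.inv_all k
  have hub : b + 1 ≤ (C.mach k).u := by
    have h1 := hC2 (halive k)
    have h2 := count_le_self (C.Mv C.c) (C.mach k).u
    omega
  rcases C.view_of_inv k (C.inv_all k) with
    ⟨τ0, hd, hm, hjm, hintd⟩ | ⟨τ1, hd, hm, hal, ⟨hu1, hm1, hgap1⟩, hintd, -⟩ |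
    ⟨τ0, τ1, hd, hm, hal, hjm, ⟨hu1, hm1, hgap1⟩, hrest⟩ |
    ⟨τ0, τ1, hd, hm, hal, hjm, ⟨hu1, hm1, hgap1⟩, hrest⟩ |
    ⟨τ0, hd, hm, hal, hjm, hrest⟩
  · have hsch : C.ysched k = {(0:Fin 2)} := by unfold ysched; rw [hd]; rfl
    rw [hsch] at hmem
    exact one_ne_zero2 hmem
  ·
      have h3 : b < τ1 := by omega
      have h4 := hb hm1
      omega
  ·
      have h3 : b < τ1 := by omega
      have h4 := hb hm1
      omega
  ·
      have h3 : b < τ1 := by omega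
      have h4 := hb hm1
      omega
  · have hdead : (C.mach (k+1)).al = false := by rw [hm]
    rw [halive (k+1)] at hdead
    exact nomatch hdead

/-- The master simulation lemma. -/
lemma main :
    ∃ y : SysRun C.P (fun _ => False) 2 (C.P.interleavingStep C.snd C.rcv),
      y.MovesInf 0 ∧ y.localWord 0 = C.x.localWord C.j ∧
      (y.MovesInf 1 → ∃ c : Fin C.n, C.x.MovesInf c ∧ y.localWord 1 = C.x.localWord c) :=
  ⟨C.ysys, C.movesinf0, C.word0_eq, fun h => ⟨C.c, C.movesinfc h, C.word1_eq h⟩⟩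

end Ctx

/-- placeholder -/
lemma placeholder : True := trivial

end CutoffTwo

/-- Emerson–Namjoshi cutoff, Theorem 3 of [Emerso03]:
for interleaving parameterized token rings with no global inputs and parameterized
specifications `∀i. A_{∀i.ass(i)} φ(i)`, where `ass(i)` and `φ(i)` are LTL formulas
over the inputs and outputs of process `i`, the number 2 is a cutoff. -/
theorem cutoff_two_interleaving_oneIndexed
    {O I : Type} (snd : O) (rcv : I)
    (T : TemplateF O I snd rcv) (ass φ : LTL (O ⊕ I)) :
    SatSpec1 T.P (fun _ => False) 2 (T.P.interleavingStep snd rcv) ass φ ↔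
      ∀ n, 2 ≤ n → SatSpec1 T.P (fun _ => False) n (T.P.interleavingStep snd rcv) ass φ := by
  constructor
  · intro h2 n hn
    intro x hx j hmv
    obtain ⟨y, hy0, hw0, hw1⟩ :=
      (⟨T.P, snd, rcv, n, hn, T.ax, x, j, hmv⟩ : CutoffTwo.Ctx T.Q O I).main
    have hyass : ∀ i, y.LocalSat ass i := by
      intro i
      rcases CutoffTwo.Ctx.fin2_cases i with h | h <;> subst h
      · intro _
        rw [hw0]
        exact hx j hmv
      · intro h1
        obtain ⟨c, hc, hwc⟩ := hw1 h1
        rw [hwc]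
        exact hx c hc
    have hres := h2 y hyass 0 hy0
    rw [hw0] at hres
    exact hres
  · intro h
    exact h 2 le_rfl
end

section
/- The parameterized synthesis problem of interleaving token rings with no global inputs for parameterized specifications ∀i. A_{∀i.ass(i)} φ(i), where φ(i) and ass(i) are LTL formulas over the inputs and outputs of process i, reduces to the synthesis problem for the token ring of size 2: there exists a process template P with P^{R(n)} ⊨ ∀i. A_{∀i.ass(i)} φ(i) for all n ≥ 2 if and only if there exists a process template P with P^{R(2)} ⊨ ∀i. A_{∀i.ass(i)} φ(i). -/
/-! ### Part A : counting and ring arithmetic preliminaries -/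

section CntAPI

/-- Classical count of positions `< K` satisfying `p`. -/
noncomputable def cnt (p : ℕ → Prop) : ℕ → ℕ
  | 0 => 0
  | K + 1 => cnt p K + (@ite _ (p K) (Classical.propDecidable _) 1 0)

lemma cnt_succ_of {p : ℕ → Prop} {K : ℕ} (h : p K) : cnt p (K + 1) = cnt p K + 1 := by
  simp only [cnt, if_pos h]

lemma cnt_succ_of_not {p : ℕ → Prop} {K : ℕ} (h : ¬ p K) : cnt p (K + 1) = cnt p K := by
  simp only [cnt, if_neg h, Nat.add_zero]

lemma cnt_mono (p : ℕ → Prop) {K K' : ℕ} (h : K ≤ K') : cnt p K ≤ cnt p K' := by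
  induction K', h using Nat.le_induction with
  | base => exact le_rfl
  | succ m hm ih =>
      refine le_trans ih ?_
      by_cases hp : p m
      · rw [cnt_succ_of hp]; omega
      · rw [cnt_succ_of_not hp]

lemma cnt_eq_of_none {p : ℕ → Prop} {K K' : ℕ} (hKK : K ≤ K')
    (h : ∀ m, K ≤ m → m < K' → ¬ p m) : cnt p K' = cnt p K := by
  induction K', hKK using Nat.le_induction with
  | base => rfl
  | succ m hm ih =>
      rw [cnt_succ_of_not (h m hm (Nat.lt_succ_self m))]
      exact ih (fun l hl hl' => h l hl (Nat.lt_succ_of_lt hl'))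

lemma cnt_add_one_le {p : ℕ → Prop} {K k : ℕ} (hK : K ≤ k) (h : p k) :
    cnt p K + 1 ≤ cnt p (k + 1) := by
  rw [cnt_succ_of h]
  exact Nat.add_le_add_right (cnt_mono p hK) 1

lemma cnt_congr {p q : ℕ → Prop} {K : ℕ} (h : ∀ k, k < K → (p k ↔ q k)) :
    cnt p K = cnt q K := by
  induction K with
  | zero => rfl
  | succ m ih =>
      have hm := h m (Nat.lt_succ_self m)
      by_cases hp : p m
      · rw [cnt_succ_of hp, cnt_succ_of (hm.mp hp),
          ih (fun l hl => h l (Nat.lt_succ_of_lt hl))]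
      · rw [cnt_succ_of_not hp, cnt_succ_of_not (fun hq => hp (hm.mpr hq)),
          ih (fun l hl => h l (Nat.lt_succ_of_lt hl))]

lemma cnt_eq_count (p : ℕ → Prop) [DecidablePred p] (K : ℕ) : cnt p K = Nat.count p K := by
  induction K with
  | zero => rfl
  | succ m ih =>
      rw [Nat.count_succ]
      by_cases hp : p m
      · rw [cnt_succ_of hp, ih, if_pos hp]
      · rw [cnt_succ_of_not hp, ih, if_neg hp, Nat.add_zero]

lemma cnt_le_of_forall_lt {p : ℕ → Prop} {B : ℕ} (h : ∀ k, p k → k < B) (K : ℕ) :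
    cnt p K ≤ cnt p B := by
  rcases le_or_gt K B with hKB | hBK
  · exact cnt_mono p hKB
  · rw [cnt_eq_of_none (Nat.le_of_lt hBK) (fun m hm _ hp => absurd (h m hp) (by omega))]

/-- least witness above a bound -/
lemma exists_least {p : ℕ → Prop} {K : ℕ} (h : ∃ k, K ≤ k ∧ p k) :
    ∃ k, K ≤ k ∧ p k ∧ ∀ m, K ≤ m → m < k → ¬ p m := by
  classical
  refine ⟨Nat.find h, (Nat.find_spec h).1, (Nat.find_spec h).2, fun m hm hmk hpm => ?_⟩
  exact Nat.find_min h hmk ⟨hm, hpm⟩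

end CntAPI
/-! ### ring successor arithmetic -/

section RingArith

lemma ringSucc_ne {n : ℕ} (hn : 2 ≤ n) (v : Fin n) : ringSucc v ≠ v := by
  intro h
  have hv := v.isLt
  have hval : (v.val + 1) % n = v.val := congrArg Fin.val h
  rcases Nat.lt_or_ge (v.val + 1) n with h1 | h1
  · rw [Nat.mod_eq_of_lt h1] at hval; omega
  · have h2 : v.val + 1 = n := by omega
    rw [h2, Nat.mod_self] at hval; omega

lemma ringSucc_inj {n : ℕ} {u u' : Fin n} (h : ringSucc u = ringSucc u') : u = u' := by
  have hu := u.isLt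
  have hu' := u'.isLt
  have hval : (u.val + 1) % n = (u'.val + 1) % n := congrArg Fin.val h
  have e1 : (u.val + 1) % n = if u.val + 1 = n then 0 else u.val + 1 := by
    split
    · simp [*]
    · exact Nat.mod_eq_of_lt (by omega)
  have e2 : (u'.val + 1) % n = if u'.val + 1 = n then 0 else u'.val + 1 := by
    split
    · simp [*]
    · exact Nat.mod_eq_of_lt (by omega)
  rw [e1, e2] at hval
  apply Fin.ext
  split at hval <;> split at hval <;> omega

lemma val_one_of_two_le {n : ℕ} [NeZero n] (hn : 2 ≤ n) : (1 : Fin n).val = 1 := by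
  rw [Fin.val_one']; exact Nat.mod_eq_of_lt hn

lemma ringSucc_sub_one {n : ℕ} [NeZero n] (hn : 2 ≤ n) (j : Fin n) :
    ringSucc (j - 1) = j := by
  apply Fin.ext
  have hj := j.isLt
  show ((j - 1).val + 1) % n = j.val
  rw [Fin.sub_def, val_one_of_two_le hn]
  rw [Nat.mod_add_mod]
  have : n - 1 + j.val + 1 = j.val + n := by omega
  rw [this, Nat.add_mod_right, Nat.mod_eq_of_lt hj]

lemma ringSucc_eq_iff_sub_one {n : ℕ} [NeZero n] (hn : 2 ≤ n) {u j : Fin n} :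
    ringSucc u = j ↔ u = j - 1 := by
  constructor
  · intro h
    exact ringSucc_inj (h.trans (ringSucc_sub_one hn j).symm)
  · intro h; rw [h]; exact ringSucc_sub_one hn j

lemma sub_one_ne {n : ℕ} [NeZero n] (hn : 2 ≤ n) (j : Fin n) : j - 1 ≠ j := by
  intro h
  have := ringSucc_sub_one hn j
  rw [h] at this
  exact ringSucc_ne hn j this

lemma fin2_cases (i : Fin 2) : i = 0 ∨ i = 1 := by omega

lemma ringSucc_fin2_zero : ringSucc (0 : Fin 2) = 1 := rfl
lemma ringSucc_fin2_one : ringSucc (1 : Fin 2) = 0 := rfl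

lemma val_add_one' {n : ℕ} [NeZero n] (hn : 2 ≤ n) (a : Fin n) :
    (a + 1).val = (a.val + 1) % n := by
  rw [Fin.add_def, val_one_of_two_le hn]

end RingArith
/-! ### Part B : context bundling a template and a system run -/

/-- All the ambient data: a process template and a run of the size-`n` interleaving ring. -/
structure Ctx (Q O I : Type) where
  P : RawProc Q O I
  snd : O
  rcv : I
  hax : P.IsTemplate snd rcv
  n : ℕ
  hn : 2 ≤ n
  x : SysRun P (fun _ => False) n (P.interleavingStep snd rcv)

namespace Ctx

variable {Q O I : Type} (C : Ctx Q O I)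

lemma tok_iotaT : C.P.tok C.P.iotaT := C.hax.1
lemma not_tok_iotaN : ¬ C.P.tok C.P.iotaN := C.hax.2.1
lemma lam_tok {q : Q} (h : C.P.lam q C.snd) : C.P.tok q := C.hax.2.2.1 q h

lemma d_norcv {q : Q} {ins : I → Prop} {q' : Q} (h : C.P.delta q ins q')
    (ht : C.P.tok q) : ¬ ins C.rcv := (C.hax.2.2.2.1 q ins q' h).1 ht
lemma d_send {q : Q} {ins : I → Prop} {q' : Q} (h : C.P.delta q ins q')
    (hs : C.P.lam q C.snd) : ¬ C.P.tok q' := (C.hax.2.2.2.1 q ins q' h).2.1 hs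
lemma d_keep {q : Q} {ins : I → Prop} {q' : Q} (h : C.P.delta q ins q')
    (ht : C.P.tok q) (hns : ¬ C.P.lam q C.snd) : C.P.tok q' :=
  (C.hax.2.2.2.1 q ins q' h).2.2.1 ht hns
lemma d_gain {q : Q} {ins : I → Prop} {q' : Q} (h : C.P.delta q ins q')
    (hnt : ¬ C.P.tok q) (hr : ins C.rcv) : C.P.tok q' :=
  (C.hax.2.2.2.1 q ins q' h).2.2.2.1 hnt hr
lemma d_stay {q : Q} {ins : I → Prop} {q' : Q} (h : C.P.delta q ins q')
    (hnt : ¬ C.P.tok q) (hnr : ¬ ins C.rcv) : ¬ C.P.tok q' :=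
  (C.hax.2.2.2.1 q ins q' h).2.2.2.2 hnt hnr
lemma nonterm (q : Q) (ins : I → Prop) (h : C.P.tok q → ¬ ins C.rcv) :
    ∃ q', C.P.delta q ins q' := C.hax.2.2.2.2 q ins h

/-- unscheduled processes keep their state -/
lemma frame {k : ℕ} {v : Fin C.n} (hv : v ∉ C.x.sched k) :
    C.x.state (k + 1) v = C.x.state k v := by
  rcases C.x.step k with ⟨u, hM, hin⟩ | ⟨u, hM, htk⟩
  · exact hin.2 v hv
  · exact htk.2.2.2.2.2.2.2 v hv

lemma frameRange {v : Fin C.n} {k1 k2 : ℕ} (h12 : k1 ≤ k2)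
    (h : ∀ m, k1 ≤ m → m < k2 → v ∉ C.x.sched m) :
    C.x.state k2 v = C.x.state k1 v := by
  induction k2, h12 using Nat.le_induction with
  | base => rfl
  | succ m hm ih =>
      rw [C.frame (h m hm (Nat.lt_succ_self m))]
      exact ih (fun l hl hl' => h l hl (Nat.lt_succ_of_lt hl'))

/-- scheduled processes take transitions -/
lemma xdelta {k : ℕ} {v : Fin C.n} (hv : v ∈ C.x.sched k) :
    C.P.delta (C.x.state k v) (C.x.inp k v) (C.x.state (k + 1) v) := by
  rcases C.x.step k with ⟨u, hM, hin⟩ | ⟨u, hM, htk⟩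
  · exact (hin.1 v hv).2.2
  · exact htk.2.2.2.2.2.2.1 v hv

/-- a process whose current output contains `snd` does not read `rcv` -/
lemma xsnd_norcv {k : ℕ} {v : Fin C.n} (hv : v ∈ C.x.sched k)
    (hs : C.P.lam (C.x.state k v) C.snd) : ¬ C.x.inp k v C.rcv := by
  rcases C.x.step k with ⟨u, hM, hin⟩ | ⟨u, hM, htk⟩
  · exact absurd hs (hin.1 v hv).1
  · obtain ⟨h1, h2, h3, h4, h5, h6, h7, h8⟩ := htk
    have hv' := hv
    rw [hM] at hv'
    rcases Set.mem_insert_iff.mp hv' with h | h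
    · exact h6 v hv (by rw [h]; exact fun hh => ringSucc_ne C.hn u hh.symm)
    · rw [Set.mem_singleton_iff] at h
      exact absurd hs (h4 v hv (by rw [h]; exact ringSucc_ne C.hn u))

/-- receive events of process `v` -/
def IntoE (v : Fin C.n) (k : ℕ) : Prop := v ∈ C.x.sched k ∧ C.x.inp k v C.rcv
/-- send events of process `v` -/
def OutE (v : Fin C.n) (k : ℕ) : Prop := v ∈ C.x.sched k ∧ C.P.lam (C.x.state k v) C.snd

/-- complete analysis of one global step: either it is internal (token positions
unchanged, no send/receive events), or it is a token-passing step from some `u`. -/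
lemma step_analysis (k : ℕ) (hu : ∃! v, C.P.tok (C.x.state k v)) :
    ((∀ v, C.P.tok (C.x.state (k + 1) v) ↔ C.P.tok (C.x.state k v)) ∧
      (∀ v, ¬ C.IntoE v k ∧ ¬ C.OutE v k)) ∨
    (∃ u, C.P.tok (C.x.state k u) ∧
      (∀ v, C.P.tok (C.x.state (k + 1) v) ↔ v = ringSucc u) ∧
      (∀ v, C.IntoE v k ↔ v = ringSucc u) ∧
      (∀ v, C.OutE v k ↔ v = u)) := by
  obtain ⟨v0, hv0, hvu⟩ := hu
  rcases C.x.step k with ⟨u, hM, hin⟩ | ⟨u, hM, htk⟩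
  · left
    constructor
    · intro v
      by_cases hv : v ∈ C.x.sched k
      · obtain ⟨hnl, hnr, hd⟩ := hin.1 v hv
        exact ⟨fun h => by_contra fun hnt => C.d_stay hd hnt hnr h,
          fun h => C.d_keep hd h hnl⟩
      · rw [C.frame hv]
    · exact fun v => ⟨fun ⟨hm, hr⟩ => (hin.1 v hm).2.1 hr,
        fun ⟨hm, hl⟩ => (hin.1 v hm).1 hl⟩
  · obtain ⟨h1, h2, h3, h4, h5, h6, h7, h8⟩ := htk
    have hut : C.P.tok (C.x.state k u) := C.lam_tok h3
    have hrs : ringSucc u ≠ u := ringSucc_ne C.hn u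
    have huv0 : u = v0 := hvu u hut
    have hrnt : ¬ C.P.tok (C.x.state k (ringSucc u)) :=
      fun h => hrs ((hvu _ h).trans huv0.symm)
    refine .inr ⟨u, hut, ?_, ?_, ?_⟩
    · intro v
      constructor
      · intro hv
        by_contra hne
        by_cases hvM : v ∈ C.x.sched k
        · have hvM' := hvM
          rw [hM] at hvM'
          rcases Set.mem_insert_iff.mp hvM' with h | h
          · subst h
            exact C.d_send (h7 v hvM) h3 hv
          · exact hne (Set.mem_singleton_iff.mp h)
        · rw [C.frame hvM] at hv
          have : v = u := (hvu v hv).trans huv0.symm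
          exact hvM (by rw [hM, this]; exact Set.mem_insert _ _)
      · intro hv
        subst hv
        exact C.d_gain (h7 _ h2) hrnt h5
    · intro v
      constructor
      · rintro ⟨hm, hr⟩
        have hm' := hm
        rw [hM] at hm'
        rcases Set.mem_insert_iff.mp hm' with h | h
        · exact absurd hr (h6 v hm (by rw [h]; exact fun hh => hrs hh.symm))
        · exact Set.mem_singleton_iff.mp h
      · intro hv
        subst hv
        exact ⟨h2, h5⟩
    · intro v
      constructor
      · rintro ⟨hm, hl⟩
        have hm' := hm
        rw [hM] at hm'
        rcases Set.mem_insert_iff.mp hm' with h | h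
        · exact h
        · rw [Set.mem_singleton_iff] at h
          exact absurd hl (h4 v hm (by rw [h]; exact hrs))
      · intro hv
        subst hv
        exact ⟨h1, h3⟩

/-- single-token invariant -/
lemma xtok : ∀ k, ∃! v, C.P.tok (C.x.state k v) := by
  intro k
  induction k with
  | zero => exact C.x.init_token
  | succ m ih =>
      rcases C.step_analysis m ih with ⟨hpres, _⟩ | ⟨u, _, h2, _, _⟩
      · obtain ⟨v0, hv0, hvu⟩ := ih
        exact ⟨v0, (hpres v0).mpr hv0, fun y hy => hvu y ((hpres y).mp hy)⟩
      · exact ⟨ringSucc u, (h2 _).mpr rfl, fun y hy => (h2 y).mp hy⟩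

/-- a process without the token that never receives stays without the token -/
lemma notok_persist {v : Fin C.n} {K : ℕ} (h0 : ¬ C.P.tok (C.x.state K v))
    (hnr : ∀ k, K ≤ k → ¬ C.IntoE v k) :
    ∀ k, K ≤ k → ¬ C.P.tok (C.x.state k v) := by
  intro k hk
  induction k, hk using Nat.le_induction with
  | base => exact h0
  | succ m hm ih =>
      by_cases hv : v ∈ C.x.sched m
      · exact C.d_stay (C.xdelta hv) ih (fun hr => hnr m hm ⟨hv, hr⟩)
      · rw [C.frame hv]; exact ih

/-- a process holding the token keeps it as long as it does not send -/
lemma tok_until {v : Fin C.n} {K k' : ℕ} (h0 : C.P.tok (C.x.state K v)) (hK : K ≤ k')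
    (hns : ∀ k, K ≤ k → k < k' → ¬ C.OutE v k) : C.P.tok (C.x.state k' v) := by
  induction k', hK using Nat.le_induction with
  | base => exact h0
  | succ m hm ih =>
      have ihm := ih (fun l hl hl' => hns l hl (Nat.lt_succ_of_lt hl'))
      by_cases hv : v ∈ C.x.sched m
      · exact C.d_keep (C.xdelta hv) ihm (fun hl => hns m hm (Nat.lt_succ_self m) ⟨hv, hl⟩)
      · rw [C.frame hv]; exact ihm

/-- receives of `j` coincide with sends of its ring predecessor -/
lemma into_iff_out {j p : Fin C.n} (hp : ringSucc p = j) (k : ℕ) :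
    C.IntoE j k ↔ C.OutE p k := by
  rcases C.x.step k with ⟨u, hM, hin⟩ | ⟨u, hM, htk⟩
  · exact ⟨fun ⟨hm, hr⟩ => absurd hr (hin.1 j hm).2.1,
      fun ⟨hm, hl⟩ => absurd hl (hin.1 p hm).1⟩
  · obtain ⟨h1, h2, h3, h4, h5, h6, h7, h8⟩ := htk
    have hrs : ringSucc u ≠ u := ringSucc_ne C.hn u
    constructor
    · rintro ⟨hm, hr⟩
      have hm' := hm
      rw [hM] at hm'
      rcases Set.mem_insert_iff.mp hm' with h | h
      · exact absurd hr (h6 j hm (by rw [h]; exact fun hh => hrs hh.symm))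
      · rw [Set.mem_singleton_iff] at h
        have hup : u = p := ringSucc_inj (h ▸ hp.symm : ringSucc u = ringSucc p)
        subst hup
        exact ⟨h1, h3⟩
    · rintro ⟨hm, hl⟩
      have hm' := hm
      rw [hM] at hm'
      rcases Set.mem_insert_iff.mp hm' with h | h
      · subst h
        refine ⟨by rw [hM, hp]; exact Set.mem_insert_iff.mpr (Or.inr rfl), by rw [← hp]; exact h5⟩
      · rw [Set.mem_singleton_iff] at h
        exact absurd hl (h4 p hm (by rw [h]; exact hrs))

end Ctx
/-! ### Part C : the trajectory counting lemmas -/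

lemma ringSucc_eq_add_one {n : ℕ} [NeZero n] (hn : 2 ≤ n) (a : Fin n) :
    ringSucc a = a + 1 := by
  apply Fin.ext
  rw [val_add_one' hn]
  rfl

/-- one-step bookkeeping identity on the ring -/
lemma ring_count_step {n : ℕ} [NeZero n] (hn : 2 ≤ n) {v0 p j : Fin n}
    (hpj : ringSucc p = j) (h1 : v0 ≠ j) (h2 : v0 ≠ p) (u : Fin n) :
    ((if v0 = u then 1 else 0) : ℕ) +
      (if 1 ≤ (u - v0).val ∧ (u - v0).val ≤ (p - v0).val then 1 else 0) =
    (if j = ringSucc u then 1 else 0) +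
      (if 1 ≤ (ringSucc u - v0).val ∧ (ringSucc u - v0).val ≤ (p - v0).val then 1 else 0) := by
  rw [ringSucc_eq_add_one hn] at *
  set du := (u - v0).val with hdu
  set dp := (p - v0).val with hdp
  have hdu_lt : du < n := (u - v0).isLt
  have hdp_lt : dp < n := (p - v0).isLt
  have hdp_pos : 1 ≤ dp := by
    rcases Nat.eq_zero_or_pos dp with h | h
    · exact absurd (sub_eq_zero.mp (Fin.ext (h : (p - v0).val = (0 : Fin n).val))).symm h2
    · exact h
  have hjsub : j - v0 = (p - v0) + 1 := by
    rw [← hpj, sub_add_eq_add_sub]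
  have hval_add : ∀ a : Fin n, (a + 1 - v0).val = ((a - v0).val + 1) % n := by
    intro a
    rw [← sub_add_eq_add_sub, val_add_one' hn]
  have hdj_lt : dp + 1 < n := by
    rcases Nat.lt_or_ge (dp + 1) n with h | h
    · exact h
    · exfalso
      have hdj : (j - v0).val = (dp + 1) % n := by
        rw [hjsub, val_add_one' hn]
      have hh : dp + 1 = n := by omega
      rw [hh, Nat.mod_self] at hdj
      exact h1 (sub_eq_zero.mp (Fin.ext (hdj : (j - v0).val = (0 : Fin n).val))).symm
  have hdj : (j - v0).val = dp + 1 := by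
    rw [hjsub, val_add_one' hn, Nat.mod_eq_of_lt hdj_lt]
  have hc1 : (v0 = u) ↔ du = 0 := by
    constructor
    · intro h; rw [hdu, ← h, sub_self]; rfl
    · intro h
      exact (sub_eq_zero.mp (Fin.ext (h : (u - v0).val = (0 : Fin n).val))).symm
  have hc3 : (u + 1 - v0).val = (du + 1) % n := hval_add u
  have hc2 : (j = u + 1) ↔ (du + 1) % n = dp + 1 := by
    rw [← hdj, ← hc3]
    constructor
    · intro h; rw [h]
    · intro h
      have h' : u + 1 - v0 = j - v0 := Fin.val_injective h
      exact (sub_left_inj.mp h').symm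
  have gA : (if v0 = u then (1:ℕ) else 0) = (if du = 0 then 1 else 0) := by
    by_cases h : v0 = u
    · rw [if_pos h, if_pos (hc1.mp h)]
    · rw [if_neg h, if_neg (fun hh => h (hc1.mpr hh))]
  have gB : (if j = u + 1 then (1:ℕ) else 0) = (if (du + 1) % n = dp + 1 then 1 else 0) := by
    by_cases h : j = u + 1
    · rw [if_pos h, if_pos (hc2.mp h)]
    · rw [if_neg h, if_neg (fun hh => h (hc2.mpr hh))]
  rw [hc3, gA, gB]
  rcases Nat.lt_or_ge (du + 1) n with h | h
  · have hmod : (du + 1) % n = du + 1 := Nat.mod_eq_of_lt h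
    rw [hmod]
    split_ifs <;> omega
  · have hdun : du + 1 = n := by omega
    have hmod : (du + 1) % n = 0 := by rw [hdun, Nat.mod_self]
    rw [hmod]
    have hA : ¬ (du = 0) := by omega
    have hB : ¬ (1 ≤ du ∧ du ≤ dp) := by
      rintro ⟨hx, hy⟩; omega
    rw [if_neg hA, if_neg hB, if_neg (by omega : ¬ ((0:ℕ) = dp + 1)),
      if_neg (by rintro ⟨hx, hy⟩; omega : ¬ ((1:ℕ) ≤ 0 ∧ (0:ℕ) ≤ dp))]

namespace Ctx

variable {Q O I : Type} (C : Ctx Q O I)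

/-- trajectory lemma, case where the initial token holder is neither `j` nor its
predecessor: the number of receives of `j` is bounded by the number of sends of
the initial holder. -/
lemma lemA {j p v0 : Fin C.n} (hp : ringSucc p = j)
    (hv0 : C.P.tok (C.x.state 0 v0)) (h1 : v0 ≠ j) (h2 : v0 ≠ p) (K : ℕ) :
    cnt (C.IntoE j) K ≤ cnt (C.OutE v0) K := by
  haveI : NeZero C.n := ⟨by have := C.hn; omega⟩
  suffices hInv : ∀ K, cnt (C.OutE v0) K = cnt (C.IntoE j) K +
      (if 1 ≤ ((C.xtok K).choose - v0).val ∧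
          ((C.xtok K).choose - v0).val ≤ (p - v0).val then 1 else 0) by
    rw [hInv K]; omega
  intro K
  induction K with
  | zero =>
      have hpos0 : v0 = (C.xtok 0).choose := (C.xtok 0).choose_spec.2 v0 hv0
      rw [← hpos0, sub_self]
      norm_num [cnt]
  | succ k ih =>
      rcases C.step_analysis k (C.xtok k) with ⟨hpres, hev⟩ | ⟨u, hut, htok', hinto, hout⟩
      · rw [cnt_succ_of_not (hev v0).2, cnt_succ_of_not (hev j).1, ih]
        have hch : (C.xtok k).choose = (C.xtok (k + 1)).choose :=
          (C.xtok (k + 1)).choose_spec.2 _ ((hpres _).mpr (C.xtok k).choose_spec.1)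
        rw [hch]
      · have hposk : (C.xtok k).choose = u := ((C.xtok k).choose_spec.2 u hut).symm
        have hposk1 : (C.xtok (k + 1)).choose = ringSucc u :=
          (htok' _).mp (C.xtok (k + 1)).choose_spec.1
        have eO : cnt (C.OutE v0) (k + 1) = cnt (C.OutE v0) k + (if v0 = u then 1 else 0) := by
          by_cases h : v0 = u
          · rw [cnt_succ_of ((hout v0).mpr h), if_pos h]
          · rw [cnt_succ_of_not (fun hx => h ((hout v0).mp hx)), if_neg h, Nat.add_zero]
        have eI : cnt (C.IntoE j) (k + 1) =
            cnt (C.IntoE j) k + (if j = ringSucc u then 1 else 0) := by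
          by_cases h : j = ringSucc u
          · rw [cnt_succ_of ((hinto j).mpr h), if_pos h]
          · rw [cnt_succ_of_not (fun hx => h ((hinto j).mp hx)), if_neg h, Nat.add_zero]
        rw [eO, eI, hposk1, ih, hposk]
        have harith := ring_count_step (n := C.n) (show 2 ≤ C.n from C.hn) hp h1 h2 u
        omega

/-- receives of `j` are bounded by sends of the predecessor (in fact equal). -/
lemma lemB {j p : Fin C.n} (hp : ringSucc p = j) (K : ℕ) :
    cnt (C.IntoE j) K = cnt (C.OutE p) K :=
  cnt_congr (fun k _ => C.into_iff_out hp k)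

end Ctx
/-! ### Part D : the two-process simulation machine -/

/-- machine state: cursors into the timelines of `j` and of its partner `w`,
a flag telling whether the partner has been frozen, and the current simulated
state of the partner process. -/
structure MS (Q : Type) where
  kj : ℕ
  kv : ℕ
  dead : Bool
  q1 : Q

/-- data of one emitted step of the simulated 2-ring -/
structure YD (I : Type) where
  m0 : Bool
  m1 : Bool
  i0 : I → Prop
  i1 : I → Prop

def schedOf {I : Type} (d : YD I) : Set (Fin 2) :=
  {i | (if i = 0 then d.m0 else d.m1) = true}

def inpOf {I : Type} (d : YD I) : Fin 2 → I → Prop :=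
  fun i => if i = 0 then d.i0 else d.i1

/-- the simulation context -/
structure Setup (Q O I : Type) extends Ctx Q O I where
  j : Fin n
  w : Fin n
  hmj : x.MovesInf j
  hinit : P.tok (x.state 0 j) ↔ ¬ P.tok (x.state 0 w)
  hLEM : ∀ K, cnt (toCtx.IntoE j) K ≤ cnt (toCtx.OutE w) K

namespace Setup

variable {Q O I : Type} (S : Setup Q O I)

def stOf (s : MS Q) : Fin 2 → Q :=
  fun i => if i = 0 then S.x.state s.kj S.j else s.q1

/-- machine invariant -/
def Good (s : MS Q) : Prop :=
  (s.dead = false →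
    s.q1 = S.x.state s.kv S.w ∧
    (S.P.tok (S.x.state s.kj S.j) ↔ ¬ S.P.tok (S.x.state s.kv S.w)) ∧
    cnt (S.toCtx.IntoE S.j) s.kj = cnt (S.toCtx.OutE S.w) s.kv ∧
    cnt (S.toCtx.OutE S.j) s.kj = cnt (S.toCtx.IntoE S.w) s.kv) ∧
  (s.dead = true →
    ¬ S.P.tok (S.x.state s.kj S.j) ∧ ∀ k, s.kj ≤ k → ¬ S.toCtx.IntoE S.j k)

/-- machine transitions -/
inductive Tr : MS Q → YD I → MS Q → Prop where
  | int0 (s : MS Q) (k : ℕ) (d' : Bool)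
      (hk : s.kj ≤ k) (hm : S.j ∈ S.x.sched k)
      (hfst : ∀ m, s.kj ≤ m → m < k → S.j ∉ S.x.sched m)
      (hns : ¬ S.P.lam (S.x.state k S.j) S.snd) (hnr : ¬ S.x.inp k S.j S.rcv)
      (hd : s.dead = true → d' = true) :
      Tr s ⟨true, false, S.x.inp k S.j, fun _ => False⟩ ⟨k + 1, s.kv, d', s.q1⟩
  | int1 (s : MS Q) (k : ℕ)
      (hlive : s.dead = false) (hk : s.kv ≤ k) (hm : S.w ∈ S.x.sched k)
      (hfst : ∀ m, s.kv ≤ m → m < k → S.w ∉ S.x.sched m)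
      (hns : ¬ S.P.lam (S.x.state k S.w) S.snd) (hnr : ¬ S.x.inp k S.w S.rcv)
      (hev : ∃ l, s.kv ≤ l ∧ (S.toCtx.IntoE S.w l ∨ S.toCtx.OutE S.w l)) :
      Tr s ⟨false, true, fun _ => False, S.x.inp k S.w⟩
        ⟨s.kj, k + 1, false, S.x.state (k + 1) S.w⟩
  | joint0 (s : MS Q) (ks kr : ℕ)
      (hlive : s.dead = false)
      (hks : s.kj ≤ ks) (hmj : S.j ∈ S.x.sched ks)
      (hfstj : ∀ m, s.kj ≤ m → m < ks → S.j ∉ S.x.sched m)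
      (hsnd : S.P.lam (S.x.state ks S.j) S.snd)
      (hkr : s.kv ≤ kr) (hmw : S.w ∈ S.x.sched kr)
      (hfstw : ∀ m, s.kv ≤ m → m < kr → S.w ∉ S.x.sched m)
      (hrcv : S.x.inp kr S.w S.rcv) :
      Tr s ⟨true, true, S.x.inp ks S.j, S.x.inp kr S.w⟩
        ⟨ks + 1, kr + 1, false, S.x.state (kr + 1) S.w⟩
  | joint0fake (s : MS Q) (ks : ℕ) (q' : Q)
      (hlive : s.dead = false)
      (hks : s.kj ≤ ks) (hmj : S.j ∈ S.x.sched ks)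
      (hfstj : ∀ m, s.kj ≤ m → m < ks → S.j ∉ S.x.sched m)
      (hsnd : S.P.lam (S.x.state ks S.j) S.snd)
      (hnt1 : ¬ S.P.tok s.q1)
      (hq' : S.P.delta s.q1 (fun a => a = S.rcv) q') :
      Tr s ⟨true, true, S.x.inp ks S.j, fun a => a = S.rcv⟩ ⟨ks + 1, s.kv, true, q'⟩
  | joint1 (s : MS Q) (ks kr : ℕ)
      (hlive : s.dead = false)
      (hks : s.kv ≤ ks) (hmw : S.w ∈ S.x.sched ks)
      (hfstw : ∀ m, s.kv ≤ m → m < ks → S.w ∉ S.x.sched m)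
      (hsnd : S.P.lam (S.x.state ks S.w) S.snd)
      (hkr : s.kj ≤ kr) (hmj : S.j ∈ S.x.sched kr)
      (hfstj : ∀ m, s.kj ≤ m → m < kr → S.j ∉ S.x.sched m)
      (hrcv : S.x.inp kr S.j S.rcv) :
      Tr s ⟨true, true, S.x.inp kr S.j, S.x.inp ks S.w⟩
        ⟨kr + 1, ks + 1, false, S.x.state (ks + 1) S.w⟩

lemma sched_single0 (d : YD I) (h0 : d.m0 = true) (h1 : d.m1 = false) :
    schedOf d = {(0 : Fin 2)} := by
  ext i
  rcases fin2_cases i with h | h <;> subst h <;>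
    simp [schedOf, h0, h1]

lemma sched_single1 (d : YD I) (h0 : d.m0 = false) (h1 : d.m1 = true) :
    schedOf d = {(1 : Fin 2)} := by
  ext i
  rcases fin2_cases i with h | h <;> subst h <;>
    simp [schedOf, h0, h1]

lemma sched_both (d : YD I) (h0 : d.m0 = true) (h1 : d.m1 = true) (v : Fin 2) :
    schedOf d = {v, ringSucc v} := by
  have hrs : ringSucc v = if v = 0 then 1 else 0 := by
    rcases fin2_cases v with h | h <;> subst h <;> rfl
  ext i
  rcases fin2_cases i with h | h <;> subst h <;>
    rcases fin2_cases v with hv | hv <;> subst hv <;>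
      simp [schedOf, h0, h1, hrs, Set.mem_insert_iff]
lemma stOf_zero (s : MS Q) : S.stOf s 0 = S.x.state s.kj S.j := if_pos rfl
lemma stOf_one (s : MS Q) : S.stOf s 1 = s.q1 := if_neg (by decide)

lemma mem_schedOf0 {d : YD I} (h : d.m0 = true) : (0 : Fin 2) ∈ schedOf d := by
  simp [schedOf, h]
lemma mem_schedOf1 {d : YD I} (h : d.m1 = true) : (1 : Fin 2) ∈ schedOf d := by
  simp [schedOf, h]

lemma inpOf_zero' (d : YD I) : inpOf d 0 = d.i0 := if_pos rfl
lemma inpOf_one' (d : YD I) : inpOf d 1 = d.i1 := if_neg (by decide)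

/-- every machine step is a legal interleaving step of the 2-ring -/
lemma tr_legal {s : MS Q} {d : YD I} {s' : MS Q} (hg : S.Good s) (ht : S.Tr s d s') :
    S.P.interleavingStep S.snd S.rcv (schedOf d) (S.stOf s) (inpOf d) (S.stOf s') := by
  cases ht with
  | int0 k d' hk hm hfst hns hnr hd =>
      have hfr : S.x.state k S.j = S.x.state s.kj S.j := S.toCtx.frameRange hk hfst
      left
      refine ⟨0, sched_single0 _ rfl rfl, ?_, ?_⟩
      · intro v hv
        rw [sched_single0 _ rfl rfl, Set.mem_singleton_iff] at hv
        subst hv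
        simp only [S.stOf_zero, inpOf_zero']
        rw [← hfr]
        exact ⟨hns, hnr, S.toCtx.xdelta hm⟩
      · intro v hv
        rcases fin2_cases v with h | h <;> subst h
        · exact absurd (by rw [sched_single0 _ rfl rfl]; exact rfl) hv
        · simp only [S.stOf_one]
  | int1 k hlive hk hm hfst hns hnr hev =>
      obtain ⟨hq1, hxor, hs1, hs2⟩ := hg.1 hlive
      have hfr : S.x.state k S.w = S.x.state s.kv S.w := S.toCtx.frameRange hk hfst
      left
      refine ⟨1, sched_single1 _ rfl rfl, ?_, ?_⟩
      · intro v hv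
        rw [sched_single1 _ rfl rfl, Set.mem_singleton_iff] at hv
        subst hv
        simp only [S.stOf_one, inpOf_one']
        rw [hq1, ← hfr]
        exact ⟨hns, hnr, S.toCtx.xdelta hm⟩
      · intro v hv
        rcases fin2_cases v with h | h <;> subst h
        · simp only [S.stOf_zero]
        · exact absurd (by rw [sched_single1 _ rfl rfl]; exact rfl) hv
  | joint0 ks kr hlive hks hmj hfstj hsnd hkr hmw hfstw hrcv =>
      obtain ⟨hq1, hxor, hs1, hs2⟩ := hg.1 hlive
      have hfrj : S.x.state ks S.j = S.x.state s.kj S.j := S.toCtx.frameRange hks hfstj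
      have hfrw : S.x.state kr S.w = S.x.state s.kv S.w := S.toCtx.frameRange hkr hfstw
      have htj : S.P.tok (S.x.state s.kj S.j) := by
        rw [← hfrj]; exact S.toCtx.lam_tok hsnd
      have hntw : ¬ S.P.tok (S.x.state s.kv S.w) := hxor.mp htj
      right
      refine ⟨0, sched_both _ rfl rfl 0, ?_, ?_, ?_, ?_, ?_, ?_, ?_, ?_⟩
      · exact mem_schedOf0 rfl
      · rw [ringSucc_fin2_zero]; exact mem_schedOf1 rfl
      · rw [S.stOf_zero, ← hfrj]; exact hsnd
      · intro u hu hne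
        rcases fin2_cases u with h | h <;> subst h
        · exact absurd rfl hne
        · rw [S.stOf_one, hq1]
          exact fun hl => hntw (S.toCtx.lam_tok hl)
      · rw [ringSucc_fin2_zero, inpOf_one']
        exact hrcv
      · intro u hu hne
        rw [ringSucc_fin2_zero] at hne
        rcases fin2_cases u with h | h <;> subst h
        · rw [inpOf_zero']
          exact S.toCtx.xsnd_norcv hmj hsnd
        · exact absurd rfl hne
      · intro u hu
        rcases fin2_cases u with h | h <;> subst h
        · simp only [S.stOf_zero, inpOf_zero']
          rw [← hfrj]
          exact S.toCtx.xdelta hmj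
        · simp only [S.stOf_one, inpOf_one']
          rw [hq1, ← hfrw]
          exact S.toCtx.xdelta hmw
      · intro u hu
        exfalso
        rcases fin2_cases u with h | h <;> subst h
        · exact hu (mem_schedOf0 rfl)
        · exact hu (mem_schedOf1 rfl)
  | joint0fake ks q' hlive hks hmj hfstj hsnd hnt1 hq' =>
      have hfrj : S.x.state ks S.j = S.x.state s.kj S.j := S.toCtx.frameRange hks hfstj
      right
      refine ⟨0, sched_both _ rfl rfl 0, ?_, ?_, ?_, ?_, ?_, ?_, ?_, ?_⟩
      · exact mem_schedOf0 rfl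
      · rw [ringSucc_fin2_zero]; exact mem_schedOf1 rfl
      · rw [S.stOf_zero, ← hfrj]; exact hsnd
      · intro u hu hne
        rcases fin2_cases u with h | h <;> subst h
        · exact absurd rfl hne
        · rw [S.stOf_one]
          exact fun hl => hnt1 (S.toCtx.lam_tok hl)
      · rw [ringSucc_fin2_zero, inpOf_one']
      · intro u hu hne
        rw [ringSucc_fin2_zero] at hne
        rcases fin2_cases u with h | h <;> subst h
        · rw [inpOf_zero']
          exact S.toCtx.xsnd_norcv hmj hsnd
        · exact absurd rfl hne
      · intro u hu
        rcases fin2_cases u with h | h <;> subst h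
        · simp only [S.stOf_zero, inpOf_zero']
          rw [← hfrj]
          exact S.toCtx.xdelta hmj
        · simp only [S.stOf_one, inpOf_one']
          exact hq'
      · intro u hu
        exfalso
        rcases fin2_cases u with h | h <;> subst h
        · exact hu (mem_schedOf0 rfl)
        · exact hu (mem_schedOf1 rfl)
  | joint1 ks kr hlive hks hmw hfstw hsnd hkr hmj hfstj hrcv =>
      obtain ⟨hq1, hxor, hs1, hs2⟩ := hg.1 hlive
      have hfrj : S.x.state kr S.j = S.x.state s.kj S.j := S.toCtx.frameRange hkr hfstj
      have hfrw : S.x.state ks S.w = S.x.state s.kv S.w := S.toCtx.frameRange hks hfstw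
      have htw : S.P.tok (S.x.state s.kv S.w) := by
        rw [← hfrw]; exact S.toCtx.lam_tok hsnd
      have hntj : ¬ S.P.tok (S.x.state s.kj S.j) := fun h => hxor.mp h htw
      right
      refine ⟨1, sched_both _ rfl rfl 1, ?_, ?_, ?_, ?_, ?_, ?_, ?_, ?_⟩
      · exact mem_schedOf1 rfl
      · rw [ringSucc_fin2_one]; exact mem_schedOf0 rfl
      · rw [S.stOf_one, hq1, ← hfrw]; exact hsnd
      · intro u hu hne
        rcases fin2_cases u with h | h <;> subst h
        · rw [S.stOf_zero]
          exact fun hl => hntj (S.toCtx.lam_tok hl)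
        · exact absurd rfl hne
      · rw [ringSucc_fin2_one, inpOf_zero']
        exact hrcv
      · intro u hu hne
        rw [ringSucc_fin2_one] at hne
        rcases fin2_cases u with h | h <;> subst h
        · exact absurd rfl hne
        · rw [inpOf_one']
          exact S.toCtx.xsnd_norcv hmw hsnd
      · intro u hu
        rcases fin2_cases u with h | h <;> subst h
        · simp only [S.stOf_zero, inpOf_zero']
          rw [← hfrj]
          exact S.toCtx.xdelta hmj
        · simp only [S.stOf_one, inpOf_one']
          rw [hq1, ← hfrw]
          exact S.toCtx.xdelta hmw
      · intro u hu
        exfalso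
        rcases fin2_cases u with h | h <;> subst h
        · exact hu (mem_schedOf0 rfl)
        · exact hu (mem_schedOf1 rfl)
/-- counting argument: if the partner will never send again, `j` will never
receive again -/
lemma no_into_of_no_out {kj kv : ℕ}
    (hsync : cnt (S.toCtx.IntoE S.j) kj = cnt (S.toCtx.OutE S.w) kv)
    (hnw : ∀ k, kv ≤ k → ¬ S.toCtx.OutE S.w k) :
    ∀ k, kj ≤ k → ¬ S.toCtx.IntoE S.j k := by
  intro k hk hin
  have h1 : cnt (S.toCtx.IntoE S.j) kj + 1 ≤ cnt (S.toCtx.IntoE S.j) (k + 1) :=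
    cnt_add_one_le hk hin
  have h2 : cnt (S.toCtx.OutE S.w) (k + 1) ≤ cnt (S.toCtx.OutE S.w) kv := by
    rcases le_or_gt (k + 1) kv with h | h
    · exact cnt_mono _ h
    · exact le_of_eq (cnt_eq_of_none (le_of_lt h) (fun m hm _ => hnw m hm))
  have h3 := S.hLEM (k + 1)
  omega

/-- a partner without the token that never receives never sends -/
lemma w_no_out {kv : ℕ} (hnt : ¬ S.P.tok (S.x.state kv S.w))
    (hni : ∀ k, kv ≤ k → ¬ S.toCtx.IntoE S.w k) :
    ∀ k, kv ≤ k → ¬ S.toCtx.OutE S.w k := by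
  rintro k hk ⟨hm, hl⟩
  exact S.toCtx.notok_persist hnt hni k hk (S.toCtx.lam_tok hl)

lemma exists_jmove (K : ℕ) :
    ∃ k, K ≤ k ∧ S.j ∈ S.x.sched k ∧ ∀ m, K ≤ m → m < k → S.j ∉ S.x.sched m := by
  obtain ⟨b, hb, hKb⟩ := S.hmj.exists_gt K
  obtain ⟨k, h1, h2, h3⟩ := exists_least ⟨b, le_of_lt hKb, hb⟩
  exact ⟨k, h1, h2, h3⟩

def init : MS Q := ⟨0, 0, false, S.x.state 0 S.w⟩

lemma good_init : S.Good S.init :=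
  ⟨fun _ => ⟨rfl, S.hinit, rfl, rfl⟩, fun h => Bool.noConfusion h⟩

/-- the decision procedure: from any good machine state there is a good
machine step -/
lemma exists_step (s : MS Q) (hg : S.Good s) :
    ∃ p : YD I × MS Q, S.Tr s p.1 p.2 ∧ S.Good p.2 := by
  classical
  obtain ⟨kj', h1j, hmj', hfstj⟩ := S.exists_jmove s.kj
  have hfrj : S.x.state kj' S.j = S.x.state s.kj S.j := S.toCtx.frameRange h1j hfstj
  by_cases hdead : s.dead = true
  · -- partner already frozen: j keeps moving internally
    obtain ⟨hnt, hnin⟩ := hg.2 hdead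
    have hnrj : ¬ S.x.inp kj' S.j S.rcv := fun hr => hnin kj' h1j ⟨hmj', hr⟩
    have hntj' : ¬ S.P.tok (S.x.state kj' S.j) := by rw [hfrj]; exact hnt
    refine ⟨⟨_, _⟩, Tr.int0 s kj' true h1j hmj' hfstj
      (fun hl => hntj' (S.toCtx.lam_tok hl)) hnrj (fun _ => rfl), ?_, ?_⟩
    · intro h; exact Bool.noConfusion h
    · intro _
      exact ⟨S.toCtx.d_stay (S.toCtx.xdelta hmj') hntj' hnrj,
        fun k hk => hnin k (le_trans h1j (le_trans (Nat.le_succ kj') hk))⟩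
  · have hlive : s.dead = false := by
      revert hdead; cases s.dead <;> simp
    obtain ⟨hq1, hxor, hs1, hs2⟩ := hg.1 hlive
    by_cases htj : S.P.tok (S.x.state s.kj S.j)
    · -- j holds the token
      have htj' : S.P.tok (S.x.state kj' S.j) := by rw [hfrj]; exact htj
      have hnrj : ¬ S.x.inp kj' S.j S.rcv := S.toCtx.d_norcv (S.toCtx.xdelta hmj') htj'
      by_cases hsj : S.P.lam (S.x.state kj' S.j) S.snd
      · -- j is about to send
        by_cases hrw : ∃ l, s.kv ≤ l ∧ S.toCtx.IntoE S.w l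
        · -- the partner will receive: work towards its receive
          obtain ⟨l0, hl0⟩ := hrw
          obtain ⟨kw', h1w, hmw', hfstw⟩ := exists_least (p := fun k => S.w ∈ S.x.sched k) ⟨l0, hl0.1, hl0.2.1⟩
          have hfrw : S.x.state kw' S.w = S.x.state s.kv S.w := S.toCtx.frameRange h1w hfstw
          have hntw : ¬ S.P.tok (S.x.state kw' S.w) := by rw [hfrw]; exact hxor.mp htj
          by_cases hrcw : S.x.inp kw' S.w S.rcv
          · -- token passes from process 0 to process 1
            refine ⟨⟨_, _⟩, Tr.joint0 s kj' kw' hlive h1j hmj' hfstj hsj h1w hmw' hfstw hrcw,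
              ?_, fun h => Bool.noConfusion h⟩
            intro _
            refine ⟨rfl, ?_, ?_, ?_⟩
            · have hnt' : ¬ S.P.tok (S.x.state (kj' + 1) S.j) :=
                S.toCtx.d_send (S.toCtx.xdelta hmj') hsj
              have ht' : S.P.tok (S.x.state (kw' + 1) S.w) :=
                S.toCtx.d_gain (S.toCtx.xdelta hmw') hntw hrcw
              exact ⟨fun h => absurd h hnt', fun h => absurd ht' h⟩
            · rw [cnt_succ_of_not (fun hx => hnrj hx.2),
                cnt_eq_of_none h1j (fun m hm hmk hx => hfstj m hm hmk hx.1),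
                cnt_succ_of_not (fun hx => hntw (S.toCtx.lam_tok hx.2)),
                cnt_eq_of_none h1w (fun m hm hmk hx => hfstw m hm hmk hx.1)]
              exact hs1
            · rw [cnt_succ_of ⟨hmj', hsj⟩,
                cnt_eq_of_none h1j (fun m hm hmk hx => hfstj m hm hmk hx.1),
                cnt_succ_of ⟨hmw', hrcw⟩,
                cnt_eq_of_none h1w (fun m hm hmk hx => hfstw m hm hmk hx.1), hs2]
          · -- partner takes an internal step
            refine ⟨⟨_, _⟩, Tr.int1 s kw' hlive h1w hmw' hfstw
              (fun hl => hntw (S.toCtx.lam_tok hl)) hrcw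
              ⟨l0, hl0.1, Or.inl hl0.2⟩, ?_, fun h => Bool.noConfusion h⟩
            intro _
            refine ⟨rfl, ?_, ?_, ?_⟩
            · have hnt' : ¬ S.P.tok (S.x.state (kw' + 1) S.w) :=
                S.toCtx.d_stay (S.toCtx.xdelta hmw') hntw hrcw
              exact ⟨fun _ => hnt', fun _ => htj⟩
            · rw [cnt_succ_of_not (fun hx => hntw (S.toCtx.lam_tok hx.2)),
                cnt_eq_of_none h1w (fun m hm hmk hx => hfstw m hm hmk hx.1)]
              exact hs1
            · rw [cnt_succ_of_not (fun hx => hrcw hx.2),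
                cnt_eq_of_none h1w (fun m hm hmk hx => hfstw m hm hmk hx.1)]
              exact hs2
        · -- partner will never receive: fake its receive and freeze it
          have hntq1 : ¬ S.P.tok s.q1 := by rw [hq1]; exact hxor.mp htj
          obtain ⟨q', hq'⟩ := S.toCtx.nonterm s.q1 (fun a => a = S.rcv)
            (fun ht => absurd ht hntq1)
          refine ⟨⟨_, _⟩, Tr.joint0fake s kj' q' hlive h1j hmj' hfstj hsj hntq1 hq',
            fun h => Bool.noConfusion h, ?_⟩
          intro _
          have hnoutw : ∀ k, s.kv ≤ k → ¬ S.toCtx.OutE S.w k :=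
            S.w_no_out (by rw [← hq1]; exact hntq1) (fun k hk hin => hrw ⟨k, hk, hin⟩)
          have hnin : ∀ k, s.kj ≤ k → ¬ S.toCtx.IntoE S.j k :=
            S.no_into_of_no_out hs1 hnoutw
          exact ⟨S.toCtx.d_send (S.toCtx.xdelta hmj') hsj,
            fun k hk => hnin k (le_trans h1j (le_trans (Nat.le_succ kj') hk))⟩
      · -- j takes an internal step, keeping the token
        refine ⟨⟨_, _⟩, Tr.int0 s kj' false h1j hmj' hfstj hsj hnrj
          (fun h => by rw [hlive] at h; exact Bool.noConfusion h),
          ?_, fun h => Bool.noConfusion h⟩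
        intro _
        refine ⟨hq1, ?_, ?_, ?_⟩
        · have ht' : S.P.tok (S.x.state (kj' + 1) S.j) :=
            S.toCtx.d_keep (S.toCtx.xdelta hmj') htj' hsj
          exact ⟨fun _ => hxor.mp htj, fun _ => ht'⟩
        · rw [cnt_succ_of_not (fun hx => hnrj hx.2),
            cnt_eq_of_none h1j (fun m hm hmk hx => hfstj m hm hmk hx.1)]
          exact hs1
        · rw [cnt_succ_of_not (fun hx => hsj hx.2),
            cnt_eq_of_none h1j (fun m hm hmk hx => hfstj m hm hmk hx.1)]
          exact hs2
    · -- the partner holds the token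
      have htw : S.P.tok (S.x.state s.kv S.w) := by
        by_contra h; exact htj (hxor.mpr h)
      have hntj' : ¬ S.P.tok (S.x.state kj' S.j) := by rw [hfrj]; exact htj
      have hnsj : ¬ S.P.lam (S.x.state kj' S.j) S.snd :=
        fun hl => hntj' (S.toCtx.lam_tok hl)
      by_cases hsw : ∃ l, s.kv ≤ l ∧ S.toCtx.OutE S.w l
      · obtain ⟨l0, hl0⟩ := hsw
        obtain ⟨kw', h1w, hmw', hfstw⟩ := exists_least (p := fun k => S.w ∈ S.x.sched k) ⟨l0, hl0.1, hl0.2.1⟩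
        have hfrw : S.x.state kw' S.w = S.x.state s.kv S.w := S.toCtx.frameRange h1w hfstw
        have htw' : S.P.tok (S.x.state kw' S.w) := by rw [hfrw]; exact htw
        have hnrw : ¬ S.x.inp kw' S.w S.rcv := S.toCtx.d_norcv (S.toCtx.xdelta hmw') htw'
        by_cases hlw : S.P.lam (S.x.state kw' S.w) S.snd
        · -- partner is about to send
          by_cases hrj : ∃ l, s.kj ≤ l ∧ S.toCtx.IntoE S.j l
          · by_cases hrcvj : S.x.inp kj' S.j S.rcv
            · -- token passes from process 1 to process 0
              refine ⟨⟨_, _⟩, Tr.joint1 s kw' kj' hlive h1w hmw' hfstw hlw h1j hmj' hfstj hrcvj,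
                ?_, fun h => Bool.noConfusion h⟩
              intro _
              refine ⟨rfl, ?_, ?_, ?_⟩
              · have ht' : S.P.tok (S.x.state (kj' + 1) S.j) :=
                  S.toCtx.d_gain (S.toCtx.xdelta hmj') hntj' hrcvj
                have hnt' : ¬ S.P.tok (S.x.state (kw' + 1) S.w) :=
                  S.toCtx.d_send (S.toCtx.xdelta hmw') hlw
                exact ⟨fun _ => hnt', fun _ => ht'⟩
              · rw [cnt_succ_of ⟨hmj', hrcvj⟩,
                  cnt_eq_of_none h1j (fun m hm hmk hx => hfstj m hm hmk hx.1),
                  cnt_succ_of ⟨hmw', hlw⟩,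
                  cnt_eq_of_none h1w (fun m hm hmk hx => hfstw m hm hmk hx.1), hs1]
              · rw [cnt_succ_of_not (fun hx => hnsj hx.2),
                  cnt_eq_of_none h1j (fun m hm hmk hx => hfstj m hm hmk hx.1),
                  cnt_succ_of_not (fun hx => hnrw hx.2),
                  cnt_eq_of_none h1w (fun m hm hmk hx => hfstw m hm hmk hx.1)]
                exact hs2
            · -- j takes an internal step without the token
              refine ⟨⟨_, _⟩, Tr.int0 s kj' false h1j hmj' hfstj hnsj hrcvj
                (fun h => by rw [hlive] at h; exact Bool.noConfusion h),
                ?_, fun h => Bool.noConfusion h⟩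
              intro _
              refine ⟨hq1, ?_, ?_, ?_⟩
              · have hnt' : ¬ S.P.tok (S.x.state (kj' + 1) S.j) :=
                  S.toCtx.d_stay (S.toCtx.xdelta hmj') hntj' hrcvj
                exact ⟨fun h => absurd h hnt', fun h => absurd htw h⟩
              · rw [cnt_succ_of_not (fun hx => hrcvj hx.2),
                  cnt_eq_of_none h1j (fun m hm hmk hx => hfstj m hm hmk hx.1)]
                exact hs1
              · rw [cnt_succ_of_not (fun hx => hnsj hx.2),
                  cnt_eq_of_none h1j (fun m hm hmk hx => hfstj m hm hmk hx.1)]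
                exact hs2
          · -- j will never receive: freeze the partner
            have hnrj' : ¬ S.x.inp kj' S.j S.rcv := fun hr => hrj ⟨kj', h1j, hmj', hr⟩
            refine ⟨⟨_, _⟩, Tr.int0 s kj' true h1j hmj' hfstj hnsj hnrj' (fun _ => rfl),
              fun h => Bool.noConfusion h, ?_⟩
            intro _
            exact ⟨S.toCtx.d_stay (S.toCtx.xdelta hmj') hntj' hnrj',
              fun k hk hin => hrj ⟨k, le_trans h1j (le_trans (Nat.le_succ kj') hk), hin⟩⟩
        · -- partner takes an internal step with the token
          refine ⟨⟨_, _⟩, Tr.int1 s kw' hlive h1w hmw' hfstw hlw hnrw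
            ⟨l0, hl0.1, Or.inr hl0.2⟩, ?_, fun h => Bool.noConfusion h⟩
          intro _
          refine ⟨rfl, ?_, ?_, ?_⟩
          · have ht' : S.P.tok (S.x.state (kw' + 1) S.w) :=
              S.toCtx.d_keep (S.toCtx.xdelta hmw') htw' hlw
            exact ⟨fun h => absurd h htj, fun h => absurd ht' h⟩
          · rw [cnt_succ_of_not (fun hx => hlw hx.2),
              cnt_eq_of_none h1w (fun m hm hmk hx => hfstw m hm hmk hx.1)]
            exact hs1
          · rw [cnt_succ_of_not (fun hx => hnrw hx.2),
              cnt_eq_of_none h1w (fun m hm hmk hx => hfstw m hm hmk hx.1)]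
            exact hs2
      · -- partner never sends again: freeze it
        have hnout : ∀ k, s.kv ≤ k → ¬ S.toCtx.OutE S.w k :=
          fun k hk ho => hsw ⟨k, hk, ho⟩
        have hnin : ∀ k, s.kj ≤ k → ¬ S.toCtx.IntoE S.j k :=
          S.no_into_of_no_out hs1 hnout
        have hnrj' : ¬ S.x.inp kj' S.j S.rcv := fun hr => hnin kj' h1j ⟨hmj', hr⟩
        refine ⟨⟨_, _⟩, Tr.int0 s kj' true h1j hmj' hfstj hnsj hnrj' (fun _ => rfl),
          fun h => Bool.noConfusion h, ?_⟩
        intro _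
        exact ⟨S.toCtx.d_stay (S.toCtx.xdelta hmj') hntj' hnrj',
          fun k hk => hnin k (le_trans h1j (le_trans (Nat.le_succ kj') hk))⟩
/-- the machine chain, built by dependent choice -/
noncomputable def chain : ℕ → {s : MS Q // S.Good s} :=
  fun m => Nat.rec ⟨S.init, S.good_init⟩
    (fun _ prev => ⟨(S.exists_step prev.1 prev.2).choose.2,
      (S.exists_step prev.1 prev.2).choose_spec.2⟩) m

noncomputable def st (m : ℕ) : MS Q := (S.chain m).1
noncomputable def yd (m : ℕ) : YD I := (S.exists_step (S.chain m).1 (S.chain m).2).choose.1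

lemma good_st (m : ℕ) : S.Good (S.st m) := (S.chain m).2

lemma st_zero : S.st 0 = S.init := rfl

lemma tr_step (m : ℕ) : S.Tr (S.st m) (S.yd m) (S.st (m + 1)) :=
  (S.exists_step (S.chain m).1 (S.chain m).2).choose_spec.1

/-- case analysis of one chain step -/
lemma tr_step' (m : ℕ) :
    ∃ s d s', s = S.st m ∧ d = S.yd m ∧ s' = S.st (m + 1) ∧ S.Tr s d s' :=
  ⟨_, _, _, rfl, rfl, rfl, S.tr_step m⟩

/-- the simulated run of the ring of size 2 -/
noncomputable def Y : SysRun S.P (fun _ => False) 2 (S.P.interleavingStep S.snd S.rcv) where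
  state := fun m => S.stOf (S.st m)
  inp := fun m => inpOf (S.yd m)
  sched := fun m => schedOf (S.yd m)
  init_state := by
    intro v
    rcases fin2_cases v with h | h <;> subst h
    · show S.stOf (S.st 0) 0 = S.P.iotaT ∨ S.stOf (S.st 0) 0 = S.P.iotaN
      rw [S.stOf_zero]
      exact S.x.init_state S.j
    · show S.stOf (S.st 0) 1 = S.P.iotaT ∨ S.stOf (S.st 0) 1 = S.P.iotaN
      rw [S.stOf_one]
      exact S.x.init_state S.w
  init_token := by
    by_cases h : S.P.tok (S.x.state 0 S.j)
    · refine ⟨0, show S.P.tok (S.stOf (S.st 0) 0) by rw [S.stOf_zero]; exact h, ?_⟩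
      intro i hi
      rcases fin2_cases i with hh | hh <;> subst hh
      · rfl
      · have hi' : S.P.tok (S.stOf (S.st 0) 1) := hi
        rw [S.stOf_one] at hi'
        exact absurd hi' (S.hinit.mp h)
    · have htw : S.P.tok (S.x.state 0 S.w) := by
        by_contra hw
        exact h (S.hinit.mpr hw)
      refine ⟨1, show S.P.tok (S.stOf (S.st 0) 1) by rw [S.stOf_one]; exact htw, ?_⟩
      intro i hi
      rcases fin2_cases i with hh | hh <;> subst hh
      · have hi' : S.P.tok (S.stOf (S.st 0) 0) := hi
        rw [S.stOf_zero] at hi'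
        exact absurd hi' h
      · rfl
  glob_consistent := fun _ _ _ _ h => h.elim
  step := fun m => S.tr_legal (S.good_st m) (S.tr_step m)

lemma Y_sched (m : ℕ) : S.Y.sched m = schedOf (S.yd m) := rfl
lemma Y_state (m : ℕ) : S.Y.state m = S.stOf (S.st m) := rfl
lemma Y_inp (m : ℕ) : S.Y.inp m = inpOf (S.yd m) := rfl

lemma mem0_iff (d : YD I) : (0 : Fin 2) ∈ schedOf d ↔ d.m0 = true := by
  simp [schedOf]
lemma mem1_iff (d : YD I) : (1 : Fin 2) ∈ schedOf d ↔ d.m1 = true := by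
  simp [schedOf]

/-- data extracted from a step in which process 0 moves -/
lemma step_data0 (m : ℕ) (h : (S.yd m).m0 = true) :
    ∃ k, (S.st m).kj ≤ k ∧ S.j ∈ S.x.sched k ∧
      (∀ l, (S.st m).kj ≤ l → l < k → S.j ∉ S.x.sched l) ∧
      (S.yd m).i0 = S.x.inp k S.j ∧ (S.st (m + 1)).kj = k + 1 := by
  obtain ⟨s, d, s', hs, hd, hs', htr⟩ := S.tr_step' m
  cases htr with
  | int0 k d' hk hm hfst hns hnr hdd =>
      exact ⟨k, hs ▸ hk, hm, fun l hl => hfst l (hs ▸ hl), by rw [← hd], by rw [← hs']⟩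
  | int1 k hlive hk hm hfst hns hnr hev =>
      rw [← hd] at h
      exact absurd h (by simp)
  | joint0 ks kr hlive hks hmj hfstj hsnd hkr hmw hfstw hrcv =>
      exact ⟨ks, hs ▸ hks, hmj, fun l hl => hfstj l (hs ▸ hl), by rw [← hd], by rw [← hs']⟩
  | joint0fake ks q' hlive hks hmj hfstj hsnd hnt1 hq' =>
      exact ⟨ks, hs ▸ hks, hmj, fun l hl => hfstj l (hs ▸ hl), by rw [← hd], by rw [← hs']⟩
  | joint1 ks kr hlive hks hmw hfstw hsnd hkr hmj hfstj hrcv =>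
      exact ⟨kr, hs ▸ hkr, hmj, fun l hl => hfstj l (hs ▸ hl), by rw [← hd], by rw [← hs']⟩

lemma kj_frozen (m : ℕ) (h : (S.yd m).m0 = false) : (S.st (m + 1)).kj = (S.st m).kj := by
  obtain ⟨s, d, s', hs, hd, hs', htr⟩ := S.tr_step' m
  cases htr with
  | int0 k d' hk hm hfst hns hnr hdd => rw [← hd] at h; exact absurd h (by simp)
  | int1 k hlive hk hm hfst hns hnr hev => rw [← hs', hs]
  | joint0 ks kr hlive hks hmj hfstj hsnd hkr hmw hfstw hrcv =>
      rw [← hd] at h; exact absurd h (by simp)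
  | joint0fake ks q' hlive hks hmj hfstj hsnd hnt1 hq' =>
      rw [← hd] at h; exact absurd h (by simp)
  | joint1 ks kr hlive hks hmw hfstw hsnd hkr hmj hfstj hrcv =>
      rw [← hd] at h; exact absurd h (by simp)

/-- data extracted from a step in which process 1 moves, assuming the next state
is still live -/
lemma step_data1 (m : ℕ) (h : (S.yd m).m1 = true) (hnd : (S.st (m + 1)).dead = false) :
    ∃ k, (S.st m).kv ≤ k ∧ S.w ∈ S.x.sched k ∧
      (∀ l, (S.st m).kv ≤ l → l < k → S.w ∉ S.x.sched l) ∧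
      (S.yd m).i1 = S.x.inp k S.w ∧ (S.st (m + 1)).kv = k + 1 ∧
      (S.st (m + 1)).q1 = S.x.state (k + 1) S.w := by
  obtain ⟨s, d, s', hs, hd, hs', htr⟩ := S.tr_step' m
  cases htr with
  | int0 k d' hk hm hfst hns hnr hdd => rw [← hd] at h; exact absurd h (by simp)
  | int1 k hlive hk hm hfst hns hnr hev =>
      exact ⟨k, hs ▸ hk, hm, fun l hl => hfst l (hs ▸ hl), by rw [← hd],
        by rw [← hs'], by rw [← hs']⟩
  | joint0 ks kr hlive hks hmj hfstj hsnd hkr hmw hfstw hrcv =>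
      exact ⟨kr, hs ▸ hkr, hmw, fun l hl => hfstw l (hs ▸ hl), by rw [← hd],
        by rw [← hs'], by rw [← hs']⟩
  | joint0fake ks q' hlive hks hmj hfstj hsnd hnt1 hq' =>
      rw [← hs'] at hnd
      exact absurd hnd (by simp)
  | joint1 ks kr hlive hks hmw hfstw hsnd hkr hmj hfstj hrcv =>
      exact ⟨ks, hs ▸ hks, hmw, fun l hl => hfstw l (hs ▸ hl), by rw [← hd],
        by rw [← hs'], by rw [← hs']⟩

lemma kv_frozen (m : ℕ) (h : (S.yd m).m1 = false) : (S.st (m + 1)).kv = (S.st m).kv := by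
  obtain ⟨s, d, s', hs, hd, hs', htr⟩ := S.tr_step' m
  cases htr with
  | int0 k d' hk hm hfst hns hnr hdd => rw [← hs', hs]
  | int1 k hlive hk hm hfst hns hnr hev => rw [← hd] at h; exact absurd h (by simp)
  | joint0 ks kr hlive hks hmj hfstj hsnd hkr hmw hfstw hrcv =>
      rw [← hd] at h; exact absurd h (by simp)
  | joint0fake ks q' hlive hks hmj hfstj hsnd hnt1 hq' =>
      rw [← hd] at h; exact absurd h (by simp)
  | joint1 ks kr hlive hks hmw hfstw hsnd hkr hmj hfstj hrcv =>
      rw [← hd] at h; exact absurd h (by simp)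

/-- data of a step in which process 0 does not move: it is an internal step of
the partner towards a pending event -/
lemma step_data_int1 (m : ℕ) (h : ¬ (S.yd m).m0 = true) :
    ∃ k, (S.st m).kv ≤ k ∧ S.w ∈ S.x.sched k ∧
      ¬ S.toCtx.IntoE S.w k ∧ ¬ S.toCtx.OutE S.w k ∧
      (∀ l, (S.st m).kv ≤ l → l < k → S.w ∉ S.x.sched l) ∧
      (S.st (m + 1)).kv = k + 1 := by
  obtain ⟨s, d, s', hs, hd, hs', htr⟩ := S.tr_step' m
  cases htr with
  | int0 k d' hk hm hfst hns hnr hdd => rw [← hd] at h; exact absurd rfl h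
  | int1 k hlive hk hm hfst hns hnr hev =>
      exact ⟨k, hs ▸ hk, hm, fun hx => hnr hx.2, fun hx => hns hx.2,
        fun l hl => hfst l (hs ▸ hl), by rw [← hs']⟩
  | joint0 ks kr hlive hks hmj hfstj hsnd hkr hmw hfstw hrcv =>
      rw [← hd] at h; exact absurd rfl h
  | joint0fake ks q' hlive hks hmj hfstj hsnd hnt1 hq' =>
      rw [← hd] at h; exact absurd rfl h
  | joint1 ks kr hlive hks hmw hfstw hsnd hkr hmj hfstj hrcv =>
      rw [← hd] at h; exact absurd rfl h
/-- count invariant for process 0 -/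
lemma cnt_kj (m : ℕ) :
    cnt (fun k => S.j ∈ S.x.sched k) (S.st m).kj =
      cnt (fun l => (S.yd l).m0 = true) m := by
  induction m with
  | zero => rfl
  | succ m ih =>
      by_cases h : (S.yd m).m0 = true
      · obtain ⟨k, hk, hm, hfst, _, hkj⟩ := S.step_data0 m h
        rw [hkj, cnt_succ_of hm, cnt_eq_of_none hk hfst, cnt_succ_of h, ih]
      · have h' : (S.yd m).m0 = false := by
          revert h; cases (S.yd m).m0 <;> simp
        rw [S.kj_frozen m h', cnt_succ_of_not h, ih]

/-- count invariant for process 1, in the absence of freezing -/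
lemma cnt_kv (hnd : ∀ m', (S.st m').dead = false) (m : ℕ) :
    cnt (fun k => S.w ∈ S.x.sched k) (S.st m).kv =
      cnt (fun l => (S.yd l).m1 = true) m := by
  induction m with
  | zero => rfl
  | succ m ih =>
      by_cases h : (S.yd m).m1 = true
      · obtain ⟨k, hk, hm, hfst, _, hkv, _⟩ := S.step_data1 m h (hnd (m + 1))
        rw [hkv, cnt_succ_of hm, cnt_eq_of_none hk hfst, cnt_succ_of h, ih]
      · have h' : (S.yd m).m1 = false := by
          revert h; cases (S.yd m).m1 <;> simp
        rw [S.kv_frozen m h', cnt_succ_of_not h, ih]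

/-- progress: within a bounded number of steps process 0 moves -/
lemma prog_aux : ∀ c m e, (S.st m).kv ≤ e →
    (S.toCtx.IntoE S.w e ∨ S.toCtx.OutE S.w e) → e - (S.st m).kv ≤ c →
    ∃ m', m ≤ m' ∧ (S.yd m').m0 = true := by
  intro c
  induction c with
  | zero =>
      intro m e hle hev hc
      by_cases h : (S.yd m).m0 = true
      · exact ⟨m, le_rfl, h⟩
      · exfalso
        obtain ⟨k, hk, hm, hni, hno, hfst, _⟩ := S.step_data_int1 m h
        have hmemE : S.w ∈ S.x.sched e := by
          rcases hev with he | he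
          · exact he.1
          · exact he.1
        have hek : e = k := by
          have h1 : e ≤ (S.st m).kv := by omega
          have h2 : ¬ (e < k) := fun hlt => hfst e hle hlt hmemE
          omega
        rcases hev with he | he
        · exact hni (hek ▸ he)
        · exact hno (hek ▸ he)
  | succ c ih =>
      intro m e hle hev hc
      by_cases h : (S.yd m).m0 = true
      · exact ⟨m, le_rfl, h⟩
      · obtain ⟨k, hk, hm, hni, hno, hfst, hkv⟩ := S.step_data_int1 m h
        have hmemE : S.w ∈ S.x.sched e := by
          rcases hev with he | he
          · exact he.1
          · exact he.1
        have hk_le_e : k ≤ e := by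
          by_contra hgt
          exact hfst e hle (by omega) hmemE
        have hk_ne_e : k ≠ e := by
          intro hEq
          subst hEq
          rcases hev with he | he
          · exact hni he
          · exact hno he
        have hnew : (S.st (m + 1)).kv ≤ e := by omega
        obtain ⟨m', hm', h0⟩ := ih (m + 1) e hnew hev (by omega)
        exact ⟨m', le_trans (Nat.le_succ m) hm', h0⟩

lemma prog (m : ℕ) : ∃ m', m ≤ m' ∧ (S.yd m').m0 = true := by
  by_cases h : (S.yd m).m0 = true
  · exact ⟨m, le_rfl, h⟩
  · obtain ⟨s, d, s', hs, hd, hs', htr⟩ := S.tr_step' m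
    cases htr with
    | int0 k d' hk hm hfst hns hnr hdd => rw [← hd] at h; exact absurd rfl h
    | int1 k hlive hk hm hfst hns hnr hev =>
        obtain ⟨l, hl, hevl⟩ := hev
        exact S.prog_aux (l - (S.st m).kv) m l (hs ▸ hl) hevl le_rfl
    | joint0 ks kr hlive hks hmj hfstj hsnd hkr hmw hfstw hrcv =>
        rw [← hd] at h; exact absurd rfl h
    | joint0fake ks q' hlive hks hmj hfstj hsnd hnt1 hq' =>
        rw [← hd] at h; exact absurd rfl h
    | joint1 ks kr hlive hks hmw hfstw hsnd hkr hmj hfstj hrcv =>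
        rw [← hd] at h; exact absurd rfl h

lemma minfY0 : S.Y.MovesInf 0 := by
  apply Set.infinite_of_forall_exists_gt
  intro a
  obtain ⟨m', hm', h0⟩ := S.prog (a + 1)
  exact ⟨m', (mem0_iff _).mpr h0, by omega⟩

lemma dead_absorb (m : ℕ) (h : (S.st m).dead = true) : (S.st (m + 1)).dead = true := by
  obtain ⟨s, d, s', hs, hd, hs', htr⟩ := S.tr_step' m
  cases htr with
  | int0 k d' hk hm hfst hns hnr hdd => rw [← hs']; exact hdd (hs ▸ h)
  | int1 k hlive hk hm hfst hns hnr hev => rw [hs] at hlive; rw [hlive] at h; exact absurd h (by simp)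
  | joint0 ks kr hlive hks hmj hfstj hsnd hkr hmw hfstw hrcv =>
      rw [hs] at hlive; rw [hlive] at h; exact absurd h (by simp)
  | joint0fake ks q' hlive hks hmj hfstj hsnd hnt1 hq' => rw [← hs']
  | joint1 ks kr hlive hks hmw hfstw hsnd hkr hmj hfstj hrcv =>
      rw [hs] at hlive; rw [hlive] at h; exact absurd h (by simp)

lemma dead_after {m m' : ℕ} (h : (S.st m).dead = true) (hmm : m ≤ m') :
    (S.st m').dead = true := by
  induction m', hmm using Nat.le_induction with
  | base => exact h
  | succ l hl ih => exact S.dead_absorb l ih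

lemma m1_false_of_dead (m : ℕ) (h : (S.st m).dead = true) : (S.yd m).m1 = false := by
  obtain ⟨s, d, s', hs, hd, hs', htr⟩ := S.tr_step' m
  cases htr with
  | int0 k d' hk hm hfst hns hnr hdd => rw [← hd]
  | int1 k hlive hk hm hfst hns hnr hev => rw [hs] at hlive; rw [hlive] at h; exact absurd h (by simp)
  | joint0 ks kr hlive hks hmj hfstj hsnd hkr hmw hfstw hrcv =>
      rw [hs] at hlive; rw [hlive] at h; exact absurd h (by simp)
  | joint0fake ks q' hlive hks hmj hfstj hsnd hnt1 hq' =>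
      rw [hs] at hlive; rw [hlive] at h; exact absurd h (by simp)
  | joint1 ks kr hlive hks hmw hfstw hsnd hkr hmj hfstj hrcv =>
      rw [hs] at hlive; rw [hlive] at h; exact absurd h (by simp)

lemma nodead_of_inf1 (h1 : {m | (S.yd m).m1 = true}.Infinite) :
    ∀ m, (S.st m).dead = false := by
  intro m
  by_contra hd
  have hdt : (S.st m).dead = true := by
    revert hd; cases (S.st m).dead <;> simp
  obtain ⟨b, hb, hmb⟩ := h1.exists_gt m
  have hthis : (S.yd b).m1 = false := S.m1_false_of_dead b (S.dead_after hdt (le_of_lt hmb))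
  have hb' : (S.yd b).m1 = true := hb
  rw [hthis] at hb'
  exact Bool.noConfusion hb'
/-- the local word of process 0 in the simulated run is exactly the local word
of `j` in the original run -/
lemma word0_eq (t : ℕ) : S.Y.localWord 0 t = S.x.localWord S.j t := by
  classical
  have hinf : {k | (0 : Fin 2) ∈ S.Y.sched k}.Infinite := S.minfY0
  set pY := fun k => (0 : Fin 2) ∈ S.Y.sched k with hpY
  set mt := Nat.nth pY t with hmt
  have hmem : pY mt := Nat.nth_mem_of_infinite hinf t
  have hcount : Nat.count pY mt = t := Nat.count_nth_of_infinite hinf t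
  have hflag : (S.yd mt).m0 = true := (mem0_iff _).mp hmem
  obtain ⟨k, hk, hm, hfst, hi0, _⟩ := S.step_data0 mt hflag
  have h1 : cnt (fun l => (S.yd l).m0 = true) mt = t := by
    rw [cnt_congr (fun l _ => (mem0_iff (S.yd l)).symm), cnt_eq_count]
    exact hcount
  have h2 : cnt (fun k => S.j ∈ S.x.sched k) k = t := by
    rw [cnt_eq_of_none hk hfst, S.cnt_kj mt]
    exact h1
  have h4 : Nat.count (fun k => S.j ∈ S.x.sched k) k = t := by
    rw [← cnt_eq_count]; exact h2
  have h5 : Nat.nth (fun k => S.j ∈ S.x.sched k) t = k := by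
    rw [← h4]; exact Nat.nth_count hm
  have hfr : S.x.state k S.j = S.x.state (S.st mt).kj S.j := S.toCtx.frameRange hk hfst
  show Sum.elim (S.P.lam (S.Y.state (S.Y.localIdx 0 t) 0)) (S.Y.inp (S.Y.localIdx 0 t) 0)
      = Sum.elim (S.P.lam (S.x.state (S.x.localIdx S.j t) S.j)) (S.x.inp (S.x.localIdx S.j t) S.j)
  rw [show S.Y.localIdx 0 t = mt from rfl, show S.x.localIdx S.j t = k from h5]
  have hst : S.Y.state mt 0 = S.x.state k S.j := by
    rw [S.Y_state, S.stOf_zero, ← hfr]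
  have hin : S.Y.inp mt 0 = S.x.inp k S.j := by
    rw [S.Y_inp, inpOf_zero', hi0]
  rw [hst, hin]

lemma word0 : S.Y.localWord 0 = S.x.localWord S.j := funext S.word0_eq

/-- if process 1 moves infinitely often, its local word is the word of the partner -/
lemma word1_eq (hnd : ∀ m, (S.st m).dead = false)
    (hinf1 : {k | (1 : Fin 2) ∈ S.Y.sched k}.Infinite) (t : ℕ) :
    S.Y.localWord 1 t = S.x.localWord S.w t := by
  classical
  set pY := fun k => (1 : Fin 2) ∈ S.Y.sched k with hpY
  set mt := Nat.nth pY t with hmt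
  have hmem : pY mt := Nat.nth_mem_of_infinite hinf1 t
  have hcount : Nat.count pY mt = t := Nat.count_nth_of_infinite hinf1 t
  have hflag : (S.yd mt).m1 = true := (mem1_iff _).mp hmem
  obtain ⟨k, hk, hm, hfst, hi1, _, _⟩ := S.step_data1 mt hflag (hnd (mt + 1))
  have h1 : cnt (fun l => (S.yd l).m1 = true) mt = t := by
    rw [cnt_congr (fun l _ => (mem1_iff (S.yd l)).symm), cnt_eq_count]
    exact hcount
  have h2 : cnt (fun k => S.w ∈ S.x.sched k) k = t := by
    rw [cnt_eq_of_none hk hfst, S.cnt_kv hnd mt]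
    exact h1
  have h4 : Nat.count (fun k => S.w ∈ S.x.sched k) k = t := by
    rw [← cnt_eq_count]; exact h2
  have h5 : Nat.nth (fun k => S.w ∈ S.x.sched k) t = k := by
    rw [← h4]; exact Nat.nth_count hm
  have hfr : S.x.state k S.w = S.x.state (S.st mt).kv S.w := S.toCtx.frameRange hk hfst
  show Sum.elim (S.P.lam (S.Y.state (S.Y.localIdx 1 t) 1)) (S.Y.inp (S.Y.localIdx 1 t) 1)
      = Sum.elim (S.P.lam (S.x.state (S.x.localIdx S.w t) S.w)) (S.x.inp (S.x.localIdx S.w t) S.w)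
  rw [show S.Y.localIdx 1 t = mt from rfl, show S.x.localIdx S.w t = k from h5]
  have hst : S.Y.state mt 1 = S.x.state k S.w := by
    rw [S.Y_state, S.stOf_one, ((S.good_st mt).1 (hnd mt)).1, ← hfr]
  have hin : S.Y.inp mt 1 = S.x.inp k S.w := by
    rw [S.Y_inp, inpOf_one', hi1]
  rw [hst, hin]

lemma cnt_unbounded {p : ℕ → Prop} (h : (setOf p).Infinite) (N : ℕ) :
    ∃ K, N ≤ cnt p K := by
  classical
  refine ⟨Nat.nth p N + 1, ?_⟩
  rw [cnt_succ_of (Nat.nth_mem_of_infinite h N), cnt_eq_count,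
    Nat.count_nth_of_infinite h N]
  omega

lemma minf_w (hnd : ∀ m, (S.st m).dead = false)
    (hinf1 : {k | (1 : Fin 2) ∈ S.Y.sched k}.Infinite) : S.x.MovesInf S.w := by
  classical
  by_contra hfin
  have hfin' : {k | S.w ∈ S.x.sched k}.Finite := Set.not_infinite.mp hfin
  obtain ⟨B, hB⟩ := hfin'.bddAbove
  have hbound : ∀ k, S.w ∈ S.x.sched k → k < B + 1 := fun k hk => by
    have := hB hk; omega
  have hle := cnt_le_of_forall_lt hbound
  have hinfflag : {m | (S.yd m).m1 = true}.Infinite := by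
    rw [show {m | (S.yd m).m1 = true} = {k | (1 : Fin 2) ∈ S.Y.sched k} from
      Set.ext fun k => (mem1_iff _).symm]
    exact hinf1
  obtain ⟨K, hK⟩ := cnt_unbounded hinfflag
    (cnt (fun k => S.w ∈ S.x.sched k) (B + 1) + 1)
  have e1 := S.cnt_kv hnd K
  have e2 := hle (S.st K).kv
  omega

end Setup
/-! ### Part E : assembling the cutoff theorem -/

lemma Setup.main_key {Q O I : Type} (S : Setup Q O I) (ass φ : LTL (O ⊕ I))
    (h2 : SatSpec1 S.P (fun _ => False) 2 (S.P.interleavingStep S.snd S.rcv) ass φ)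
    (hass : ∀ i, S.x.LocalSat ass i) :
    LTL.Sat (S.x.localWord S.j) φ 0 := by
  have hassY : ∀ i, S.Y.LocalSat ass i := by
    intro i
    rcases fin2_cases i with h | h <;> subst h
    · intro _
      rw [S.word0]
      exact hass S.j S.hmj
    · intro hminf1
      have hnd := S.nodead_of_inf1 (by
        rw [show {m | (S.yd m).m1 = true} = {k | (1 : Fin 2) ∈ S.Y.sched k} from
          Set.ext fun k => (mem1_iff _).symm]
        exact hminf1)
      have hw : S.Y.localWord 1 = S.x.localWord S.w :=
        funext (S.word1_eq hnd hminf1)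
      rw [hw]
      exact hass S.w (S.minf_w hnd hminf1)
  have hspec := h2 S.Y hassY 0 S.minfY0
  rw [S.word0] at hspec
  exact hspec

/-- the cutoff transfer: satisfaction in the 2-ring implies satisfaction in the
`n`-ring, for every `n ≥ 2` -/
lemma cutoff {Q O I : Type} {P : RawProc Q O I} {snd : O} {rcv : I}
    (hax : P.IsTemplate snd rcv) {n : ℕ} (hn : 2 ≤ n) (ass φ : LTL (O ⊕ I))
    (h2 : SatSpec1 P (fun _ => False) 2 (P.interleavingStep snd rcv) ass φ) :
    SatSpec1 P (fun _ => False) n (P.interleavingStep snd rcv) ass φ := by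
  intro x hass j hmj
  haveI : NeZero n := ⟨by omega⟩
  let C : Ctx Q O I := ⟨P, snd, rcv, hax, n, hn, x⟩
  obtain ⟨v0, hv0, hvu⟩ := x.init_token
  by_cases hcase : P.tok (x.state 0 j)
  · have hpj : ringSucc (j - 1) = j := ringSucc_sub_one hn j
    have hne : j - 1 ≠ j := sub_one_ne hn j
    have hnt : ¬ P.tok (x.state 0 (j - 1)) :=
      fun h => hne ((hvu _ h).trans (hvu j hcase).symm)
    exact Setup.main_key
      ⟨C, j, j - 1, hmj, ⟨fun _ => hnt, fun _ => hcase⟩,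
        fun K => le_of_eq (C.lemB hpj K)⟩ ass φ h2 hass
  · have hvj : v0 ≠ j := fun h => hcase (h ▸ hv0)
    have hinit' : P.tok (x.state 0 j) ↔ ¬ P.tok (x.state 0 v0) :=
      ⟨fun h => absurd h hcase, fun h => absurd hv0 h⟩
    have hLEM : ∀ K, cnt (C.IntoE j) K ≤ cnt (C.OutE v0) K := by
      by_cases hvp : v0 = j - 1
      · intro K
        subst hvp
        exact le_of_eq (C.lemB (ringSucc_sub_one hn j) K)
      · exact C.lemA (ringSucc_sub_one hn j) hv0 hvj hvp
    exact Setup.main_key ⟨C, j, v0, hmj, hinit', hLEM⟩ ass φ h2 hass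

/-- Corollary of the cutoff theorem, [Jacobs14]:
the parameterized synthesis problem of interleaving token rings with no global inputs
for specifications `∀i. A_{∀i.ass(i)} φ(i)` reduces to the synthesis problem for the
token ring of size 2: a process template realizing the specification in rings of all
sizes `n ≥ 2` exists iff one realizing it in the ring of size 2 exists. -/
theorem parameterized_synthesis_reduces_to_size_two
    {O I : Type} (snd : O) (rcv : I) (ass φ : LTL (O ⊕ I)) :
    (∃ T : TemplateF O I snd rcv,
        ∀ n, 2 ≤ n → SatSpec1 T.P (fun _ => False) n (T.P.interleavingStep snd rcv) ass φ) ↔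
    (∃ T : TemplateF O I snd rcv,
        SatSpec1 T.P (fun _ => False) 2 (T.P.interleavingStep snd rcv) ass φ) := by
  constructor
  · rintro ⟨T, hT⟩
    exact ⟨T, hT 2 le_rfl⟩
  · rintro ⟨T, hT⟩
    exact ⟨T, fun n hn => cutoff T.ax hn ass φ hT⟩
end
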